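/- arXiv:2203.06336 — 10 statements merged into one kernel-verified Lean document; each statement's English description precedes it below -/
import Mathlib

section
/- Let s be a prime power, let n1, n2 be positive integers divisible appropriately by s, let a, c ∈ GF(s)^{n1}, and let b, d ∈ GF(s)^{n1·n2} be partitioned into consecutive blocks b_1,…,b_{n1} and d_1,…,d_{n1} of length n2. If for every i = 1,…,n1 the n2×2 matrix (b_i, d_i) is an OA(n2, 2, s, 2), then the (n1·n2)×2 matrix (a⊛b, c⊛d) is an OA(n1·n2, 2, s, 2). -/
open Finset

/-- `M` (rows indexed by `R`, columns by `C`, entries in the finite field `F` with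
`s = Fintype.card F` elements) is an orthogonal array of strength `t`: for any choice of `t`
distinct columns and any `t`-tuple of symbols, the number of rows showing that tuple, times
`s ^ t`, equals the number of rows (i.e. each tuple appears exactly `(card R) / s ^ t` times). -/
def IsOA {R C F : Type*} [Fintype R] [Fintype F] [DecidableEq F]
    (M : R → C → F) (t : ℕ) : Prop :=
  ∀ cols : Fin t → C, Function.Injective cols → ∀ v : Fin t → F,
    (Finset.univ.filter fun r : R => ∀ j, M r (cols j) = v j).card
      * Fintype.card F ^ t = Fintype.card R

/-- Lemma 2(i): if every block pair `(bᵢ, dᵢ)` is an `OA(n₂, 2, s, 2)`, then the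
two-column array `(a ⊛ b, c ⊛ d)` is an `OA(n₁n₂, 2, s, 2)`.  Rows of the generalized Kronecker
sums are indexed by pairs `(i, j) : Fin n₁ × Fin n₂`, `(i, j)` being row `j` of block `i`. -/
theorem statement0 {F : Type} [Field F] [Fintype F] [DecidableEq F]
    {n1 n2 : ℕ} (hn1 : 0 < n1) (hn2 : 0 < n2)
    (a c : Fin n1 → F) (b d : Fin n1 → Fin n2 → F)
    (hbd : ∀ i : Fin n1, IsOA (fun j : Fin n2 => ![b i j, d i j]) 2) :
    IsOA (fun p : Fin n1 × Fin n2 => ![a p.1 + b p.1 p.2, c p.1 + d p.1 p.2]) 2 := by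
  intro cols hinj v
  have hbij : Function.Bijective cols := Finite.injective_iff_bijective.mp hinj
  set e := Equiv.ofBijective cols hbij with he
  have hce : ∀ k, cols (e.symm k) = k := fun k => e.apply_symm_apply k
  have hcond : ∀ p : Fin n1 × Fin n2,
      (∀ j, (![a p.1 + b p.1 p.2, c p.1 + d p.1 p.2]) (cols j) = v j) ↔
      (∀ k, (![a p.1 + b p.1 p.2, c p.1 + d p.1 p.2]) k = v (e.symm k)) := by
    intro p
    constructor
    · intro h k
      have := h (e.symm k)
      rwa [hce] at this
    · intro h j
      have := h (cols j)
      rwa [show e.symm (cols j) = j from e.symm_apply_apply j] at this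
  have key : ∀ i : Fin n1,
      (univ.filter fun j : Fin n2 =>
          ∀ k, (![a i + b i j, c i + d i j]) k = v (e.symm k)).card
        * Fintype.card F ^ 2 = n2 := by
    intro i
    have h := hbd i (fun k => k) (fun x y hxy => hxy)
      (fun k => v (e.symm k) - ![a i, c i] k)
    simp only [Fintype.card_fin] at h
    have hset : (univ.filter fun j : Fin n2 =>
          ∀ k, (![a i + b i j, c i + d i j]) k = v (e.symm k))
        = (univ.filter fun j : Fin n2 =>
          ∀ k, (![b i j, d i j]) ((fun k : Fin 2 => k) k) = v (e.symm k) - ![a i, c i] k) := by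
      apply Finset.filter_congr
      intro j _
      simp only [Fin.forall_fin_two, Matrix.cons_val_zero, Matrix.cons_val_one,
        Matrix.head_cons, eq_sub_iff_add_eq]
      constructor <;> rintro ⟨h1, h2⟩ <;>
        exact ⟨by rw [← h1]; ring, by rw [← h2]; ring⟩
    rw [hset]
    exact h
  simp_rw [hcond]
  rw [Finset.card_filter, Fintype.sum_prod_type]
  simp_rw [← Finset.card_filter]
  rw [Finset.sum_mul]
  simp_rw [key]
  simp [Finset.sum_const, Fintype.card_prod, mul_comm]
end

section
/- Let s be a prime power, let a, c ∈ GF(s)^{n1}, and let b, d ∈ GF(s)^{n1·n2} be partitioned into consecutive blocks b_1,…,b_{n1} and d_1,…,d_{n1} of length n2. Suppose every block b_i is balanced and d = α·b for some α ∈ GF(s) (entrywise scalar multiplication). If one of the following holds: (1) α = 1 and the n1×2 matrix (a, c) is a difference scheme D(n1, 2, s); (2) (a, c) is an OA(n1, 2, s, 2); (3) c = 0, α ≠ 0, and a is balanced; (4) a = c, α ≠ 1, and a is balanced; then the (n1·n2)×2 matrix (a⊛b, c⊛d) is an OA(n1·n2, 2, s, 2). -/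
open Finset

/-- A vector over `F` is balanced if every symbol of `F` occurs equally often among its
entries. -/
def IsBalanced {R F : Type*} [Fintype R] [Fintype F] [DecidableEq F] (v : R → F) : Prop :=
  ∀ x : F, (Finset.univ.filter fun r : R => v r = x).card * Fintype.card F = Fintype.card R

/-- `M` is a difference scheme: for any two distinct columns, the vector of entrywise
differences contains every element of `F` equally often. -/
def IsDiffScheme {R C F : Type*} [Fintype R] [Field F] [Fintype F] [DecidableEq F]
    (M : R → C → F) : Prop :=
  ∀ j j' : C, j ≠ j' → ∀ x : F,
    (Finset.univ.filter fun r : R => M r j - M r j' = x).card * Fintype.card F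
      = Fintype.card R

lemma blocks_count {F : Type} [Field F] [Fintype F] [DecidableEq F] {n1 n2 : ℕ}
    (a c : Fin n1 → F) (b : Fin n1 → Fin n2 → F) (α : F)
    (hb : ∀ i : Fin n1, IsBalanced (b i)) (x y : F)
    (hcount : (univ.filter fun i : Fin n1 => α * (x - a i) = y - c i).card
      * Fintype.card F = n1) :
    (univ.filter fun p : Fin n1 × Fin n2 =>
        a p.1 + b p.1 p.2 = x ∧ c p.1 + α * b p.1 p.2 = y).card
      * Fintype.card F ^ 2 = n1 * n2 := by
  classical
  set q := Fintype.card F with hq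
  have h1 : (univ.filter fun p : Fin n1 × Fin n2 =>
        a p.1 + b p.1 p.2 = x ∧ c p.1 + α * b p.1 p.2 = y).card
      = ∑ i : Fin n1, (univ.filter fun j : Fin n2 =>
          a i + b i j = x ∧ c i + α * b i j = y).card := by
    simp only [Finset.card_filter]
    exact Fintype.sum_prod_type _
  have h2 : ∀ i : Fin n1, (univ.filter fun j : Fin n2 =>
          a i + b i j = x ∧ c i + α * b i j = y).card
      = if α * (x - a i) = y - c i then
          (univ.filter fun j : Fin n2 => b i j = x - a i).card else 0 := by
    intro i
    by_cases h : α * (x - a i) = y - c i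
    · rw [if_pos h]
      congr 1
      apply Finset.filter_congr
      intro j _
      constructor
      · rintro ⟨ha, _⟩; linear_combination ha
      · intro hbj
        refine ⟨by linear_combination hbj, ?_⟩
        rw [hbj]; linear_combination h
    · rw [if_neg h]
      rw [Finset.card_eq_zero, Finset.filter_eq_empty_iff]
      rintro j - ⟨e1, e2⟩
      exact h (by linear_combination e2 - α * e1)
  rw [h1]
  have h3 : ∑ i : Fin n1, (univ.filter fun j : Fin n2 =>
          a i + b i j = x ∧ c i + α * b i j = y).card
      = ∑ i ∈ univ.filter (fun i : Fin n1 => α * (x - a i) = y - c i),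
          (univ.filter fun j : Fin n2 => b i j = x - a i).card := by
    rw [Finset.sum_filter]
    exact Finset.sum_congr rfl fun i _ => h2 i
  rw [h3]
  have h4 : (∑ i ∈ univ.filter (fun i : Fin n1 => α * (x - a i) = y - c i),
          (univ.filter fun j : Fin n2 => b i j = x - a i).card) * q
      = (univ.filter (fun i : Fin n1 => α * (x - a i) = y - c i)).card * n2 := by
    rw [Finset.sum_mul]
    rw [Finset.sum_congr rfl (fun i _ => by
      have := hb i (x - a i); simpa using this)]
    simp [mul_comm]
  calc (∑ i ∈ univ.filter (fun i : Fin n1 => α * (x - a i) = y - c i),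
          (univ.filter fun j : Fin n2 => b i j = x - a i).card) * q ^ 2
      = ((∑ i ∈ univ.filter (fun i : Fin n1 => α * (x - a i) = y - c i),
          (univ.filter fun j : Fin n2 => b i j = x - a i).card) * q) * q := by ring
    _ = ((univ.filter (fun i : Fin n1 => α * (x - a i) = y - c i)).card * n2) * q := by
        rw [h4]
    _ = ((univ.filter (fun i : Fin n1 => α * (x - a i) = y - c i)).card * q) * n2 := by
        ring
    _ = n1 * n2 := by rw [hcount]

/-- Lemma 2(ii). -/
theorem statement1 {F : Type} [Field F] [Fintype F] [DecidableEq F]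
    {n1 n2 : ℕ}
    (a c : Fin n1 → F) (b d : Fin n1 → Fin n2 → F) (α : F)
    (hb : ∀ i : Fin n1, IsBalanced (b i))
    (hd : ∀ i j, d i j = α * b i j)
    (hcond :
      (α = 1 ∧ IsDiffScheme (fun i : Fin n1 => ![a i, c i]))
      ∨ IsOA (fun i : Fin n1 => ![a i, c i]) 2
      ∨ ((∀ i, c i = 0) ∧ α ≠ 0 ∧ IsBalanced a)
      ∨ (a = c ∧ α ≠ 1 ∧ IsBalanced a)) :
    IsOA (fun p : Fin n1 × Fin n2 => ![a p.1 + b p.1 p.2, c p.1 + d p.1 p.2]) 2 := by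
  classical
  have hqpos : 0 < Fintype.card F := Fintype.card_pos
  have hcount : ∀ x y : F,
      (univ.filter fun i : Fin n1 => α * (x - a i) = y - c i).card * Fintype.card F = n1 := by
    intro x y
    rcases hcond with ⟨hα, hDS⟩ | hOA | ⟨hc0, hα, hab⟩ | ⟨hac, hα, hab⟩
    · -- difference scheme, α = 1
      subst hα
      have := hDS 0 1 (by decide) (x - y)
      simp only [Matrix.cons_val_zero, Matrix.cons_val_one, Matrix.head_cons,
        Fintype.card_fin] at this
      have heq : (univ.filter fun i : Fin n1 => 1 * (x - a i) = y - c i)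
          = univ.filter fun i : Fin n1 => a i - c i = x - y := by
        apply Finset.filter_congr
        intro i _
        constructor
        · intro h; linear_combination -h
        · intro h; linear_combination -h
      rw [heq]
      exact this
    · -- orthogonal array
      have hsum : (univ.filter fun i : Fin n1 => α * (x - a i) = y - c i).card
          = ∑ u : F, (univ.filter fun i : Fin n1 =>
              (α * (x - a i) = y - c i) ∧ a i = u).card := by
        rw [Finset.card_eq_sum_card_fiberwise (f := a) (t := univ) (fun i _ => mem_univ _)]
        exact Finset.sum_congr rfl fun u _ => by rw [Finset.filter_filter]
      have hterm : ∀ u : F, (univ.filter fun i : Fin n1 =>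
              (α * (x - a i) = y - c i) ∧ a i = u).card * Fintype.card F ^ 2 = n1 := by
        intro u
        have := hOA id Function.injective_id ![u, y - α * (x - u)]
        simp only [Fintype.card_fin] at this
        have heq : (univ.filter fun i : Fin n1 => (α * (x - a i) = y - c i) ∧ a i = u)
            = univ.filter fun i : Fin n1 =>
                ∀ j : Fin 2, ![a i, c i] (id j) = ![u, y - α * (x - u)] j := by
          apply Finset.filter_congr
          intro i _
          rw [Fin.forall_fin_two]
          simp only [id_eq, Matrix.cons_val_zero, Matrix.cons_val_one, Matrix.head_cons]
          constructor
          · rintro ⟨h1, h2⟩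
            subst h2
            exact ⟨rfl, by linear_combination h1⟩
          · rintro ⟨h1, h2⟩
            subst h1
            exact ⟨by linear_combination h2, rfl⟩
        rw [heq]
        exact this
      have hmain : (univ.filter fun i : Fin n1 => α * (x - a i) = y - c i).card
          * Fintype.card F ^ 2 = Fintype.card F * n1 := by
        rw [hsum, Finset.sum_mul]
        rw [Finset.sum_congr rfl fun u _ => hterm u]
        simp [mul_comm]
      have : ((univ.filter fun i : Fin n1 => α * (x - a i) = y - c i).card
          * Fintype.card F) * Fintype.card F = n1 * Fintype.card F := by
        calc ((univ.filter fun i : Fin n1 => α * (x - a i) = y - c i).card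
            * Fintype.card F) * Fintype.card F
            = (univ.filter fun i : Fin n1 => α * (x - a i) = y - c i).card
              * Fintype.card F ^ 2 := by ring
          _ = Fintype.card F * n1 := hmain
          _ = n1 * Fintype.card F := by ring
      exact Nat.eq_of_mul_eq_mul_right hqpos this
    · -- c = 0, α ≠ 0, a balanced
      have := hab (x - y * α⁻¹)
      simp only [Fintype.card_fin] at this
      have heq : (univ.filter fun i : Fin n1 => α * (x - a i) = y - c i)
          = univ.filter fun i : Fin n1 => a i = x - y * α⁻¹ := by
        apply Finset.filter_congr
        intro i _
        rw [hc0 i, sub_zero]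
        constructor
        · intro h
          field_simp
          linear_combination -h
        · intro h
          field_simp at h
          linear_combination -h
      rw [heq]
      exact this
    · -- a = c, α ≠ 1, a balanced
      have hα1 : α - 1 ≠ 0 := sub_ne_zero.mpr hα
      have := hab ((α * x - y) * (α - 1)⁻¹)
      simp only [Fintype.card_fin] at this
      have heq : (univ.filter fun i : Fin n1 => α * (x - a i) = y - c i)
          = univ.filter fun i : Fin n1 => a i = (α * x - y) * (α - 1)⁻¹ := by
        apply Finset.filter_congr
        intro i _
        rw [← hac]
        constructor
        · intro h
          field_simp
          linear_combination -h
        · intro h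
          field_simp at h
          linear_combination -h
      rw [heq]
      exact this
  have key : ∀ x y : F, (univ.filter fun p : Fin n1 × Fin n2 =>
        a p.1 + b p.1 p.2 = x ∧ c p.1 + d p.1 p.2 = y).card
      * Fintype.card F ^ 2 = n1 * n2 := by
    intro x y
    have h := blocks_count a c b α hb x y (hcount x y)
    have heq : (univ.filter fun p : Fin n1 × Fin n2 =>
          a p.1 + b p.1 p.2 = x ∧ c p.1 + d p.1 p.2 = y)
        = univ.filter fun p : Fin n1 × Fin n2 =>
          a p.1 + b p.1 p.2 = x ∧ c p.1 + α * b p.1 p.2 = y := by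
      apply Finset.filter_congr
      intro p _
      rw [hd]
    rw [heq]
    exact h
  intro cols hinj v
  have hne : cols 0 ≠ cols 1 := fun h => absurd (hinj h) (by decide)
  have hcc : (cols 0 = 0 ∧ cols 1 = 1) ∨ (cols 0 = 1 ∧ cols 1 = 0) := by
    have h0 := (cols 0).isLt
    have h1 := (cols 1).isLt
    have hnev : (cols 0 : ℕ) ≠ (cols 1 : ℕ) := fun h => hne (Fin.ext h)
    rcases (show ((cols 0 : ℕ) = 0 ∧ (cols 1 : ℕ) = 1)
        ∨ ((cols 0 : ℕ) = 1 ∧ (cols 1 : ℕ) = 0) by omega) with ⟨e0, e1⟩ | ⟨e0, e1⟩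
    · exact Or.inl ⟨Fin.ext e0, Fin.ext e1⟩
    · exact Or.inr ⟨Fin.ext e0, Fin.ext e1⟩
  have hcard : Fintype.card (Fin n1 × Fin n2) = n1 * n2 := by simp
  rw [hcard]
  rcases hcc with ⟨e0, e1⟩ | ⟨e0, e1⟩
  · have heq : (univ.filter fun r : Fin n1 × Fin n2 =>
        ∀ j, ![a r.1 + b r.1 r.2, c r.1 + d r.1 r.2] (cols j) = v j)
        = univ.filter fun p : Fin n1 × Fin n2 =>
            a p.1 + b p.1 p.2 = v 0 ∧ c p.1 + d p.1 p.2 = v 1 := by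
      apply Finset.filter_congr
      intro p _
      rw [Fin.forall_fin_two, e0, e1]
      simp
    rw [heq]
    exact key (v 0) (v 1)
  · have heq : (univ.filter fun r : Fin n1 × Fin n2 =>
        ∀ j, ![a r.1 + b r.1 r.2, c r.1 + d r.1 r.2] (cols j) = v j)
        = univ.filter fun p : Fin n1 × Fin n2 =>
            a p.1 + b p.1 p.2 = v 1 ∧ c p.1 + d p.1 p.2 = v 0 := by
      apply Finset.filter_congr
      intro p _
      rw [Fin.forall_fin_two, e0, e1]
      simp [and_comm]
    rw [heq]
    exact key (v 1) (v 0)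
end

section
/- Let s be a prime power, let a, c ∈ GF(s)^{n1}, and let b, d ∈ GF(s)^{n1·n2} be partitioned into consecutive blocks b_1,…,b_{n1} and d_1,…,d_{n1} of length n2. Suppose d = 0 (the zero vector). If one of the following holds: (1) every block b_i is balanced and c is balanced; (2) b = 0 and (a, c) is an OA(n1, 2, s, 2); then the (n1·n2)×2 matrix (a⊛b, c⊛d) is an OA(n1·n2, 2, s, 2). -/
open Finset

/-- Lemma 2(iii). -/
theorem statement2 {F : Type} [Field F] [Fintype F] [DecidableEq F]
    {n1 n2 : ℕ}
    (a c : Fin n1 → F) (b d : Fin n1 → Fin n2 → F)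
    (hd : ∀ i j, d i j = 0)
    (hcond :
      ((∀ i : Fin n1, IsBalanced (b i)) ∧ IsBalanced c)
      ∨ ((∀ i j, b i j = 0) ∧ IsOA (fun i : Fin n1 => ![a i, c i]) 2)) :
    IsOA (fun p : Fin n1 × Fin n2 => ![a p.1 + b p.1 p.2, c p.1 + d p.1 p.2]) 2 := by
  classical
  intro cols hinj v
  have hcols : cols 0 ≠ cols 1 := fun h => by simpa using hinj h
  have key : ∀ v0 v1 : F,
      (univ.filter fun p : Fin n1 × Fin n2 =>
        a p.1 + b p.1 p.2 = v0 ∧ c p.1 + d p.1 p.2 = v1).card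
        * Fintype.card F ^ 2 = Fintype.card (Fin n1 × Fin n2) := by
    intro v0 v1
    have hcard : Fintype.card (Fin n1 × Fin n2) = n1 * n2 := by simp
    have hsum : (univ.filter fun p : Fin n1 × Fin n2 =>
        a p.1 + b p.1 p.2 = v0 ∧ c p.1 + d p.1 p.2 = v1).card
        = ∑ i : Fin n1, (univ.filter fun j : Fin n2 =>
            a i + b i j = v0 ∧ c i + d i j = v1).card := by
      rw [Finset.card_filter, Fintype.sum_prod_type]
      exact Finset.sum_congr rfl fun i _ => (Finset.card_filter _ _).symm
    rcases hcond with ⟨hb, hc⟩ | ⟨hb, hoa⟩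
    · have hinner : ∀ i : Fin n1, (univ.filter fun j : Fin n2 =>
          a i + b i j = v0 ∧ c i + d i j = v1).card
          = if c i = v1 then
              (univ.filter fun j : Fin n2 => b i j = v0 - a i).card else 0 := by
        intro i
        by_cases h : c i = v1
        · rw [if_pos h]
          congr 1
          apply Finset.filter_congr
          intro j _
          simp [hd, h, eq_sub_iff_add_eq, add_comm]
        · rw [if_neg h, Finset.card_eq_zero, Finset.filter_eq_empty_iff]
          intro j _
          simp [hd, h]
      have step1 : (∑ i : Fin n1, (univ.filter fun j : Fin n2 =>
            a i + b i j = v0 ∧ c i + d i j = v1).card) * Fintype.card F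
          = ∑ i : Fin n1, (if c i = v1 then n2 else 0) := by
        rw [Finset.sum_mul]
        refine Finset.sum_congr rfl fun i _ => ?_
        rw [hinner i]
        by_cases h : c i = v1
        · rw [if_pos h, if_pos h, hb i (v0 - a i)]
          simp
        · simp [h]
      have step2 : (∑ i : Fin n1, (if c i = v1 then n2 else 0))
          = (univ.filter fun i : Fin n1 => c i = v1).card * n2 := by
        rw [← Finset.sum_filter]
        simp [mul_comm]
      rw [hsum, hcard, sq, ← mul_assoc, step1, step2, mul_assoc, mul_comm n2,
        ← mul_assoc, hc v1]
      simp
    · have hinner : ∀ i : Fin n1, (univ.filter fun j : Fin n2 =>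
          a i + b i j = v0 ∧ c i + d i j = v1).card
          = if a i = v0 ∧ c i = v1 then n2 else 0 := by
        intro i
        by_cases h : a i = v0 ∧ c i = v1
        · rw [if_pos h]
          rw [Finset.filter_true_of_mem]
          · simp
          · intro j _
            simp [hb, hd, h.1, h.2]
        · rw [if_neg h, Finset.card_eq_zero, Finset.filter_eq_empty_iff]
          intro j _
          simp only [hb, hd, add_zero]
          tauto
      have step2 : (∑ i : Fin n1, (if a i = v0 ∧ c i = v1 then n2 else 0))
          = (univ.filter fun i : Fin n1 => a i = v0 ∧ c i = v1).card * n2 := by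
        rw [← Finset.sum_filter]
        simp [mul_comm]
      have hK : (univ.filter fun i : Fin n1 => a i = v0 ∧ c i = v1).card
          * Fintype.card F ^ 2 = n1 := by
        have := hoa id Function.injective_id ![v0, v1]
        simpa [Fin.forall_fin_two] using this
      rw [hsum, hcard]
      simp_rw [hinner]
      rw [step2, mul_comm _ n2, mul_assoc, hK, mul_comm]
  have h2 : ∀ x : Fin 2, x = 0 ∨ x = 1 := by decide
  rcases h2 (cols 0) with h0 | h0 <;> rcases h2 (cols 1) with h1 | h1
  · exact absurd (h0.trans h1.symm) hcols
  · simp only [Fin.forall_fin_two, h0, h1, Matrix.cons_val_zero, Matrix.cons_val_one,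
      Matrix.head_cons]
    exact key (v 0) (v 1)
  · simp only [Fin.forall_fin_two, h0, h1, Matrix.cons_val_zero, Matrix.cons_val_one,
      Matrix.head_cons]
    have hset : (univ.filter fun p : Fin n1 × Fin n2 =>
        c p.1 + d p.1 p.2 = v 0 ∧ a p.1 + b p.1 p.2 = v 1).card
        = (univ.filter fun p : Fin n1 × Fin n2 =>
            a p.1 + b p.1 p.2 = v 1 ∧ c p.1 + d p.1 p.2 = v 0).card := by
      congr 1
      apply Finset.filter_congr
      intro p _
      exact and_comm
    rw [hset]
    exact key (v 1) (v 0)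
  · exact absurd (h0.trans h1.symm) hcols
end

section
/- Let s be a prime power, let a, c, e ∈ GF(s)^{n1}, and let b, d, f ∈ GF(s)^{n1·n2} be partitioned into consecutive blocks of length n2: b_1,…,b_{n1}; d_1,…,d_{n1}; f_1,…,f_{n1}. If for every i = 1,…,n1 the n2×3 matrix (b_i, d_i, f_i) is an OA(n2, 3, s, 3), then the (n1·n2)×3 matrix (a⊛b, c⊛d, e⊛f) is an OA(n1·n2, 3, s, 3). -/
open Finset

/-- Lemma 3(i): if every block triple `(bᵢ, dᵢ, fᵢ)` is an `OA(n₂, 3, s, 3)`,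
then `(a ⊛ b, c ⊛ d, e ⊛ f)` is an `OA(n₁n₂, 3, s, 3)`. -/
theorem statement3 {F : Type} [Field F] [Fintype F] [DecidableEq F]
    {n1 n2 : ℕ}
    (a c e : Fin n1 → F) (b d f : Fin n1 → Fin n2 → F)
    (hbdf : ∀ i : Fin n1, IsOA (fun j : Fin n2 => ![b i j, d i j, f i j]) 3) :
    IsOA (fun p : Fin n1 × Fin n2 =>
      ![a p.1 + b p.1 p.2, c p.1 + d p.1 p.2, e p.1 + f p.1 p.2]) 3 := by
  intro cols hinj v
  have key : ∀ i : Fin n1,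
      (univ.filter fun j : Fin n2 =>
        ∀ k, ![a i + b i j, c i + d i j, e i + f i j] (cols k) = v k).card
        * Fintype.card F ^ 3 = Fintype.card (Fin n2) := by
    intro i
    have h := hbdf i cols hinj (fun k => v k - ![a i, c i, e i] (cols k))
    rw [← h]
    congr 1
    apply congrArg Finset.card
    ext j
    simp only [Finset.mem_filter, Finset.mem_univ, true_and]
    have hm : ∀ m : Fin 3, ![a i + b i j, c i + d i j, e i + f i j] m
        = ![a i, c i, e i] m + ![b i j, d i j, f i j] m := by
      intro m; fin_cases m <;> simp
    constructor
    · intro hj k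
      have := hj k
      rw [hm (cols k)] at this
      simp only [eq_sub_iff_add_eq]
      linear_combination this
    · intro hj k
      have := hj k
      rw [eq_sub_iff_add_eq] at this
      rw [hm (cols k)]
      linear_combination this
  have hsplit : (univ.filter fun p : Fin n1 × Fin n2 =>
      ∀ k, ![a p.1 + b p.1 p.2, c p.1 + d p.1 p.2, e p.1 + f p.1 p.2] (cols k) = v k).card
      = ∑ i : Fin n1, (univ.filter fun j : Fin n2 =>
        ∀ k, ![a i + b i j, c i + d i j, e i + f i j] (cols k) = v k).card := by
    rw [Finset.card_filter, Fintype.sum_prod_type]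
    exact Finset.sum_congr rfl fun i _ => (Finset.card_filter _ _).symm
  rw [hsplit, Finset.sum_mul]
  simp only [key]
  simp [Fintype.card_prod, mul_comm]
end

section
/- Let s be a prime power, let a, c, e ∈ GF(s)^{n1}, and let b, d, f ∈ GF(s)^{n1·n2} be partitioned into consecutive blocks of length n2: b_1,…,b_{n1}; d_1,…,d_{n1}; f_1,…,f_{n1}. Suppose that for every i = 1,…,n1 the n2×2 matrix (b_i, d_i) is an OA(n2, 2, s, 2), that f = α·b for some α ∈ GF(s), and that the n1×2 matrix (e, α·a) is a difference scheme D(n1, 2, s). Then the (n1·n2)×3 matrix (a⊛b, c⊛d, e⊛f) is an OA(n1·n2, 3, s, 3). -/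
open Finset

set_option maxRecDepth 10000 in
/-- Lemma 3(ii). -/
theorem statement4 {F : Type} [Field F] [Fintype F] [DecidableEq F]
    {n1 n2 : ℕ}
    (a c e : Fin n1 → F) (b d f : Fin n1 → Fin n2 → F) (α : F)
    (hbd : ∀ i : Fin n1, IsOA (fun j : Fin n2 => ![b i j, d i j]) 2)
    (hf : ∀ i j, f i j = α * b i j)
    (hea : IsDiffScheme (fun i : Fin n1 => ![e i, α * a i])) :
    IsOA (fun p : Fin n1 × Fin n2 =>
      ![a p.1 + b p.1 p.2, c p.1 + d p.1 p.2, e p.1 + f p.1 p.2]) 3 := by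
  classical
  intro cols hinj v
  have hbij : Function.Bijective cols := Finite.injective_iff_bijective.mp hinj
  obtain ⟨σ, hσ⟩ : ∃ σ : Fin 3 ≃ Fin 3, ∀ x, σ x = cols x :=
    ⟨Equiv.ofBijective cols hbij, fun _ => rfl⟩
  set w : Fin 3 → F := fun j => v (σ.symm j) with hw
  have hv : ∀ k, v k = w (cols k) := by
    intro k
    have h1 : σ.symm (cols k) = k := by rw [← hσ]; exact σ.symm_apply_apply k
    simp [hw, h1]
  have hQ3 : ∀ (Q : Fin 3 → Prop), (∀ j, Q j) ↔ Q 0 ∧ Q 1 ∧ Q 2 := by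
    intro Q
    refine ⟨fun h => ⟨h 0, h 1, h 2⟩, ?_⟩
    rintro ⟨h0, h1, h2⟩ j
    fin_cases j <;> assumption
  have hQ2 : ∀ (Q : Fin 2 → Prop), (∀ j, Q j) ↔ Q 0 ∧ Q 1 := by
    intro Q
    refine ⟨fun h => ⟨h 0, h 1⟩, ?_⟩
    rintro ⟨h0, h1⟩ j
    fin_cases j <;> assumption
  show (Finset.univ.filter fun r : Fin n1 × Fin n2 =>
      ∀ j : Fin 3, ![a r.1 + b r.1 r.2, c r.1 + d r.1 r.2, e r.1 + f r.1 r.2] (cols j) = v j).card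
      * Fintype.card F ^ 3 = Fintype.card (Fin n1 × Fin n2)
  have hfc : (Finset.univ.filter fun r : Fin n1 × Fin n2 =>
        ∀ j : Fin 3, ![a r.1 + b r.1 r.2, c r.1 + d r.1 r.2, e r.1 + f r.1 r.2] (cols j) = v j)
      = Finset.univ.filter fun r : Fin n1 × Fin n2 =>
        a r.1 + b r.1 r.2 = w 0 ∧ c r.1 + d r.1 r.2 = w 1 ∧ e r.1 + α * b r.1 r.2 = w 2 := by
    apply Finset.filter_congr
    intro r _
    have hiff : (∀ j : Fin 3, ![a r.1 + b r.1 r.2, c r.1 + d r.1 r.2, e r.1 + f r.1 r.2] (cols j) = v j)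
        ↔ (∀ j : Fin 3, ![a r.1 + b r.1 r.2, c r.1 + d r.1 r.2, e r.1 + f r.1 r.2] j = w j) := by
      constructor
      · intro h j
        have hcs : cols (σ.symm j) = j := by rw [← hσ]; exact σ.apply_symm_apply j
        have := h (σ.symm j)
        rw [hv, hcs] at this
        exact this
      · intro h j
        rw [hv j]
        exact h (cols j)
    rw [hiff, hQ3]
    simp only [Matrix.cons_val_zero, Matrix.cons_val_one, Matrix.head_cons,
      Matrix.cons_val_two, Matrix.tail_cons, hf]
  rw [hfc]
  have hsplit : (Finset.univ.filter fun r : Fin n1 × Fin n2 =>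
      a r.1 + b r.1 r.2 = w 0 ∧ c r.1 + d r.1 r.2 = w 1 ∧ e r.1 + α * b r.1 r.2 = w 2).card
      = ∑ i : Fin n1, (Finset.univ.filter fun j : Fin n2 =>
          a i + b i j = w 0 ∧ c i + d i j = w 1 ∧ e i + α * b i j = w 2).card := by
    rw [Finset.card_filter, ← Finset.univ_product_univ, Finset.sum_product]
    refine Finset.sum_congr rfl fun i _ => ?_
    rw [Finset.card_filter]
  have hScard : (Finset.univ.filter fun i : Fin n1 =>
      e i - α * a i = w 2 - α * w 0).card * Fintype.card F = n1 := by
    have := hea 0 1 (by decide) (w 2 - α * w 0)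
    simpa using this
  have hin : ∀ i, e i - α * a i = w 2 - α * w 0 →
      (Finset.univ.filter fun j : Fin n2 =>
        a i + b i j = w 0 ∧ c i + d i j = w 1 ∧ e i + α * b i j = w 2).card
        * Fintype.card F ^ 2 = n2 := by
    intro i hi
    have h2 := hbd i (fun k => k) (fun _ _ h => h) ![w 0 - a i, w 1 - c i]
    have hfe : (Finset.univ.filter fun j : Fin n2 =>
        ∀ k : Fin 2, ![b i j, d i j] k = ![w 0 - a i, w 1 - c i] k)
        = Finset.univ.filter fun j : Fin n2 =>
          a i + b i j = w 0 ∧ c i + d i j = w 1 ∧ e i + α * b i j = w 2 := by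
      apply Finset.filter_congr
      intro j _
      rw [hQ2]
      simp only [Matrix.cons_val_zero, Matrix.cons_val_one, Matrix.head_cons]
      constructor
      · rintro ⟨hb, hd⟩
        refine ⟨by rw [hb]; ring, by rw [hd]; ring, ?_⟩
        rw [hb]
        linear_combination hi
      · rintro ⟨h0, h1, _⟩
        exact ⟨by linear_combination h0, by linear_combination h1⟩
    rw [hfe] at h2
    simpa using h2
  have hout : ∀ i, ¬ (e i - α * a i = w 2 - α * w 0) →
      (Finset.univ.filter fun j : Fin n2 =>
        a i + b i j = w 0 ∧ c i + d i j = w 1 ∧ e i + α * b i j = w 2).card = 0 := by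
    intro i hi
    rw [Finset.card_eq_zero, Finset.filter_eq_empty_iff]
    rintro j _ ⟨h0, _, h2⟩
    exact hi (by linear_combination h2 - α * h0)
  rw [hsplit]
  have hsum : (∑ i : Fin n1, (Finset.univ.filter fun j : Fin n2 =>
      a i + b i j = w 0 ∧ c i + d i j = w 1 ∧ e i + α * b i j = w 2).card)
      * Fintype.card F ^ 2
      = (Finset.univ.filter fun i : Fin n1 =>
          e i - α * a i = w 2 - α * w 0).card * n2 := by
    rw [Finset.sum_mul]
    calc (∑ i : Fin n1, (Finset.univ.filter fun j : Fin n2 =>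
          a i + b i j = w 0 ∧ c i + d i j = w 1 ∧ e i + α * b i j = w 2).card
          * Fintype.card F ^ 2)
        = ∑ i : Fin n1, (if e i - α * a i = w 2 - α * w 0 then n2 else 0) := by
          apply Finset.sum_congr rfl
          intro i _
          by_cases hi : e i - α * a i = w 2 - α * w 0
          · rw [if_pos hi]; exact hin i hi
          · rw [if_neg hi, hout i hi, Nat.zero_mul]
      _ = ∑ i ∈ Finset.univ.filter fun i : Fin n1 =>
            e i - α * a i = w 2 - α * w 0, n2 := by
          rw [Finset.sum_filter]
      _ = (Finset.univ.filter fun i : Fin n1 =>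
            e i - α * a i = w 2 - α * w 0).card * n2 := by
          rw [Finset.sum_const, smul_eq_mul]
  have final : (∑ i : Fin n1, (Finset.univ.filter fun j : Fin n2 =>
      a i + b i j = w 0 ∧ c i + d i j = w 1 ∧ e i + α * b i j = w 2).card)
      * Fintype.card F ^ 3 = n1 * n2 := by
    calc (∑ i : Fin n1, (Finset.univ.filter fun j : Fin n2 =>
          a i + b i j = w 0 ∧ c i + d i j = w 1 ∧ e i + α * b i j = w 2).card)
          * Fintype.card F ^ 3
        = ((∑ i : Fin n1, (Finset.univ.filter fun j : Fin n2 =>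
            a i + b i j = w 0 ∧ c i + d i j = w 1 ∧ e i + α * b i j = w 2).card)
            * Fintype.card F ^ 2) * Fintype.card F := by ring
      _ = ((Finset.univ.filter fun i : Fin n1 =>
            e i - α * a i = w 2 - α * w 0).card * n2) * Fintype.card F := by rw [hsum]
      _ = ((Finset.univ.filter fun i : Fin n1 =>
            e i - α * a i = w 2 - α * w 0).card * Fintype.card F) * n2 := by ring
      _ = n1 * n2 := by rw [hScard]
  simpa using final
end

section
/- Let s be a prime power. Let A be an n1×m1 matrix over GF(s) that is an OA(n1, m1, s, 1) if m1 = 1 and an OA(n1, m1, s, 2) if m1 > 1, and let B_1,…,B_{n1} each be an OA(n2, m2, s, 2). Then the array E = [D_1, D_2, …, D_{s+1}] of the construction is an OA(n1·n2, (s−1)·m1·m2 + m1 + m2, s, 2). -/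
open Finset

/-- The array `E = [D₁, …, D_{s−1}, D_s, D_{s+1}]` of the construction.  Rows are indexed by
pairs `(i, j)` (`j`-th row of the `i`-th block).  The columns of the blocks `D_g`,
`g = 1, …, s−1`, are indexed by triples `(g, k, l)` where `g` runs over the nonzero elements
of `F` (i.e. `α₁, …, α_{s−1}`); the corresponding entry of `D_g` in row `(i, j)` is
`A i k + α_g • (B i) j l`, i.e. row-wise `aᵢ ⊕ (α_g · Bᵢ)`.  `D_s = B` (the stacked `Bᵢ`'s)
has columns `Sum.inr (Sum.inl l)`, and `D_{s+1} = A ⊕ 0` has columns `Sum.inr (Sum.inr k)`. -/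
def OAE {I F : Type} [Field F] {m1 n2 m2 : ℕ}
    (A : I → Fin m1 → F) (B : I → Fin n2 → Fin m2 → F) :
    (I × Fin n2) → (({g : F // g ≠ 0} × Fin m1 × Fin m2) ⊕ (Fin m2 ⊕ Fin m1)) → F
  | p, Sum.inl (g, k, l) => A p.1 k + g.1 * B p.1 p.2 l
  | p, Sum.inr (Sum.inl l) => B p.1 p.2 l
  | p, Sum.inr (Sum.inr k) => A p.1 k

section helpers
variable {R C F : Type*} [Fintype R] [Fintype F] [DecidableEq F]

lemma count_eq {α : Type*} [Fintype α] {p q : α → Prop} [DecidablePred p] [DecidablePred q]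
    (h : ∀ a, p a ↔ q a) : (univ.filter p).card = (univ.filter q).card := by
  rw [filter_congr fun a _ => h a]

lemma oa1_single {M : R → C → F} (h : IsOA M 1) (c : C) (x : F) :
    (univ.filter fun r => M r c = x).card * Fintype.card F = Fintype.card R := by
  have := h ![c] (Function.injective_of_subsingleton _) ![x]
  simpa [Fin.forall_fin_one] using this

lemma oa2_pair {M : R → C → F} (h : IsOA M 2) {c c' : C} (hne : c ≠ c') (x y : F) :
    (univ.filter fun r => M r c = x ∧ M r c' = y).card * Fintype.card F ^ 2
      = Fintype.card R := by
  have hinj : Function.Injective ![c, c'] := by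
    intro a b hab
    fin_cases a <;> fin_cases b <;> simp_all
  have := h ![c, c'] hinj ![x, y]
  simpa [Fin.forall_fin_two] using this

lemma oa2_one [Nonempty F] {M : R → C → F} (h : IsOA M 2) {c c' : C} (hne : c ≠ c') (x : F) :
    (univ.filter fun r => M r c = x).card * Fintype.card F = Fintype.card R := by
  have hpos : 0 < Fintype.card F := Fintype.card_pos
  apply Nat.eq_of_mul_eq_mul_right hpos
  have key : ∑ y : F, (univ.filter fun r => M r c = x ∧ M r c' = y).card
      = (univ.filter fun r => M r c = x).card := by
    simp_rw [Finset.card_filter]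
    rw [Finset.sum_comm]
    refine Finset.sum_congr rfl fun r _ => ?_
    by_cases hr : M r c = x <;> simp [hr]
  calc (univ.filter fun r => M r c = x).card * Fintype.card F * Fintype.card F
      = (∑ y : F, (univ.filter fun r => M r c = x ∧ M r c' = y).card)
          * Fintype.card F ^ 2 := by rw [key]; ring
    _ = ∑ y : F, (univ.filter fun r => M r c = x ∧ M r c' = y).card * Fintype.card F ^ 2 := by
          rw [Finset.sum_mul]
    _ = ∑ _y : F, Fintype.card R := Finset.sum_congr rfl fun y _ => oa2_pair h hne x y
    _ = Fintype.card R * Fintype.card F := by simp [mul_comm]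

lemma oa2_graph [Nonempty F] {M : R → C → F} (h : IsOA M 2) {c c' : C} (hne : c ≠ c') (f : F → F) :
    (univ.filter fun r => M r c' = f (M r c)).card * Fintype.card F = Fintype.card R := by
  have hpos : 0 < Fintype.card F := Fintype.card_pos
  apply Nat.eq_of_mul_eq_mul_right hpos
  have key : ∑ x : F, (univ.filter fun r => M r c = x ∧ M r c' = f x).card
      = (univ.filter fun r => M r c' = f (M r c)).card := by
    simp_rw [Finset.card_filter]
    rw [Finset.sum_comm]
    refine Finset.sum_congr rfl fun r _ => ?_
    rw [Finset.sum_eq_single (M r c)]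
    · by_cases hr : M r c' = f (M r c) <;> simp [hr]
    · intro b _ hb
      have : M r c ≠ b := fun h => hb h.symm
      simp [this]
    · simp
  calc (univ.filter fun r => M r c' = f (M r c)).card * Fintype.card F * Fintype.card F
      = (∑ x : F, (univ.filter fun r => M r c = x ∧ M r c' = f x).card)
          * Fintype.card F ^ 2 := by rw [key]; ring
    _ = ∑ x : F, (univ.filter fun r => M r c = x ∧ M r c' = f x).card * Fintype.card F ^ 2 := by
          rw [Finset.sum_mul]
    _ = ∑ _x : F, Fintype.card R := Finset.sum_congr rfl fun x _ => oa2_pair h hne x (f x)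
    _ = Fintype.card R * Fintype.card F := by simp [mul_comm]

end helpers

lemma master {F : Type*} [Fintype F] {n1 n2 : ℕ} (a b : ℕ) (hab : a + b = 2)
    (P : Fin n1 → Prop) [DecidablePred P] (Q : Fin n1 → Fin n2 → Prop)
    [∀ i, DecidablePred (Q i)]
    (hP : (univ.filter P).card * Fintype.card F ^ a = n1)
    (hQ : ∀ i, P i → (univ.filter (Q i)).card * Fintype.card F ^ b = n2) :
    (univ.filter fun p : Fin n1 × Fin n2 => P p.1 ∧ Q p.1 p.2).card * Fintype.card F ^ 2
      = n1 * n2 := by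
  have h1 : (univ.filter fun p : Fin n1 × Fin n2 => P p.1 ∧ Q p.1 p.2).card
      = ∑ i ∈ univ.filter P, (univ.filter (Q i)).card := by
    rw [Finset.card_filter, Fintype.sum_prod_type, Finset.sum_filter]
    refine Finset.sum_congr rfl fun i _ => ?_
    by_cases h : P i
    · simp only [h, true_and, if_true]
      exact (Finset.card_filter _ _).symm
    · simp [h]
  calc (univ.filter fun p : Fin n1 × Fin n2 => P p.1 ∧ Q p.1 p.2).card * Fintype.card F ^ 2
      = (∑ i ∈ univ.filter P, (univ.filter (Q i)).card * Fintype.card F ^ b)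
          * Fintype.card F ^ a := by
        rw [h1, show (2:ℕ) = b + a by omega, pow_add, ← mul_assoc, Finset.sum_mul]
    _ = (∑ _i ∈ univ.filter P, n2) * Fintype.card F ^ a := by
        congr 1
        exact Finset.sum_congr rfl fun i hi => hQ i (Finset.mem_filter.mp hi).2
    _ = ((univ.filter P).card * Fintype.card F ^ a) * n2 := by
        rw [Finset.sum_const, smul_eq_mul]; ring
    _ = n1 * n2 := by rw [hP]

section lin
variable {F : Type*} [Field F]

lemma solveX {g w X : F} (hg : g ≠ 0) : (X = g⁻¹ * w) ↔ (w = g * X) :=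
  eq_comm.trans (inv_mul_eq_iff_eq_mul₀ hg)

lemma lin1 {g a x X : F} (hg : g ≠ 0) : a + g * X = x ↔ X = g⁻¹ * (x - a) := by
  rw [solveX hg]
  constructor <;> intro h <;> linear_combination -h

lemma lin2 {g g' a a' x y X : F} (hgg : g ≠ g') :
    (a + g * X = x ∧ a' + g' * X = y)
      ↔ (g' * (x - a) = g * (y - a') ∧ X = (g - g')⁻¹ * ((x - a) - (y - a'))) := by
  have hs : g - g' ≠ 0 := sub_ne_zero.mpr hgg
  rw [solveX hs]
  constructor
  · rintro ⟨h1, h2⟩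
    exact ⟨by linear_combination g * h2 - g' * h1, by linear_combination h2 - h1⟩
  · rintro ⟨h1, h2⟩
    refine ⟨mul_left_cancel₀ hs ?_, mul_left_cancel₀ hs ?_⟩
    · linear_combination h1 - g * h2
    · linear_combination h1 - g' * h2
  
lemma lin3 {g a a' x y X : F} (hg : g ≠ 0) :
    (a + g * X = x ∧ a' + g * X = y) ↔ (a' = a - x + y ∧ a + g * X = x) := by
  constructor
  · rintro ⟨h1, h2⟩
    exact ⟨by linear_combination h2 - h1, h1⟩
  · rintro ⟨h1, h2⟩
    exact ⟨h2, by linear_combination h1 + h2⟩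

lemma lin2P_eq {g g' a x y : F} (hgg : g ≠ g') :
    g' * (x - a) = g * (y - a) ↔ a = (g - g')⁻¹ * (g * y - g' * x) := by
  have hs : g - g' ≠ 0 := sub_ne_zero.mpr hgg
  rw [solveX hs]
  constructor <;> intro h <;> linear_combination -h

lemma lin2P_ne {g g' a a' x y : F} (hg : g ≠ 0) :
    g' * (x - a) = g * (y - a') ↔ a' = g⁻¹ * (g * y - g' * x + g' * a) := by
  rw [solveX hg]
  constructor <;> intro h <;> linear_combination -h

lemma linLM {g a x y X : F} :
    (a + g * X = x ∧ X = y) ↔ (a = x - g * y ∧ X = y) := by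
  constructor
  · rintro ⟨h1, h2⟩; subst h2; exact ⟨by linear_combination h1, rfl⟩
  · rintro ⟨h1, h2⟩; subst h2; exact ⟨by linear_combination h1, rfl⟩
end lin
section cases
variable {F : Type} [Field F] [Fintype F] [DecidableEq F] {n1 m1 n2 m2 : ℕ}
  {A : Fin n1 → Fin m1 → F} {B : Fin n1 → Fin n2 → Fin m2 → F}

lemma caseLR
    (hA1 : ∀ (k : Fin m1) (x : F), (univ.filter fun i => A i k = x).card * Fintype.card F = n1)
    (hB1 : ∀ i (l : Fin m2) (w : F),
      (univ.filter fun j => B i j l = w).card * Fintype.card F = n2)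
    {g : F} (hg : g ≠ 0) (k k' : Fin m1) (l : Fin m2) (x y : F) :
    (univ.filter fun p : Fin n1 × Fin n2 =>
        A p.1 k + g * B p.1 p.2 l = x ∧ A p.1 k' = y).card * Fintype.card F ^ 2
      = n1 * n2 := by
  rw [count_eq (q := fun p : Fin n1 × Fin n2 =>
      A p.1 k' = y ∧ B p.1 p.2 l = g⁻¹ * (x - A p.1 k))
    (fun p => (and_congr (lin1 hg) Iff.rfl).trans and_comm)]
  exact master (n1 := n1) (n2 := n2) 1 1 rfl (fun i => A i k' = y)
    (fun i j => B i j l = g⁻¹ * (x - A i k))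
    (by rw [pow_one]; exact hA1 k' y)
    (fun i _ => by rw [pow_one]; exact hB1 i l _)

lemma caseLM
    (hA1 : ∀ (k : Fin m1) (x : F), (univ.filter fun i => A i k = x).card * Fintype.card F = n1)
    (hB1 : ∀ i (l : Fin m2) (w : F),
      (univ.filter fun j => B i j l = w).card * Fintype.card F = n2)
    (hBp : ∀ i {l l' : Fin m2}, l ≠ l' → ∀ w w' : F,
      (univ.filter fun j => B i j l = w ∧ B i j l' = w').card * Fintype.card F ^ 2 = n2)
    {g : F} (hg : g ≠ 0) (k : Fin m1) (l l' : Fin m2) (x y : F) :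
    (univ.filter fun p : Fin n1 × Fin n2 =>
        A p.1 k + g * B p.1 p.2 l = x ∧ B p.1 p.2 l' = y).card * Fintype.card F ^ 2
      = n1 * n2 := by
  by_cases hll : l = l'
  · subst hll
    rw [count_eq (q := fun p : Fin n1 × Fin n2 =>
        A p.1 k = x - g * y ∧ B p.1 p.2 l = y) (fun p => linLM)]
    exact master (n1 := n1) (n2 := n2) 1 1 rfl (fun i => A i k = x - g * y)
      (fun i j => B i j l = y)
      (by rw [pow_one]; exact hA1 k _)
      (fun i _ => by rw [pow_one]; exact hB1 i l y)
  · rw [count_eq (q := fun p : Fin n1 × Fin n2 =>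
        True ∧ (B p.1 p.2 l = g⁻¹ * (x - A p.1 k) ∧ B p.1 p.2 l' = y))
      (fun p => by simp only [lin1 hg, true_and])]
    exact master (n1 := n1) (n2 := n2) 0 2 rfl (fun _ => True)
      (fun i j => B i j l = g⁻¹ * (x - A i k) ∧ B i j l' = y)
      (by simp) (fun i _ => hBp i hll _ y)

lemma caseMM
    (hBp : ∀ i {l l' : Fin m2}, l ≠ l' → ∀ w w' : F,
      (univ.filter fun j => B i j l = w ∧ B i j l' = w').card * Fintype.card F ^ 2 = n2)
    {l l' : Fin m2} (hll : l ≠ l') (x y : F) :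
    (univ.filter fun p : Fin n1 × Fin n2 =>
        B p.1 p.2 l = x ∧ B p.1 p.2 l' = y).card * Fintype.card F ^ 2 = n1 * n2 := by
  rw [count_eq (q := fun p : Fin n1 × Fin n2 =>
      True ∧ (B p.1 p.2 l = x ∧ B p.1 p.2 l' = y)) (fun p => by simp only [true_and])]
  exact master (n1 := n1) (n2 := n2) 0 2 rfl (fun _ => True)
    (fun i j => B i j l = x ∧ B i j l' = y)
    (by simp) (fun i _ => hBp i hll x y)

lemma caseMR
    (hA1 : ∀ (k : Fin m1) (x : F), (univ.filter fun i => A i k = x).card * Fintype.card F = n1)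
    (hB1 : ∀ i (l : Fin m2) (w : F),
      (univ.filter fun j => B i j l = w).card * Fintype.card F = n2)
    (l : Fin m2) (k : Fin m1) (x y : F) :
    (univ.filter fun p : Fin n1 × Fin n2 =>
        B p.1 p.2 l = x ∧ A p.1 k = y).card * Fintype.card F ^ 2 = n1 * n2 := by
  rw [count_eq (q := fun p : Fin n1 × Fin n2 =>
      A p.1 k = y ∧ B p.1 p.2 l = x) (fun p => and_comm)]
  exact master (n1 := n1) (n2 := n2) 1 1 rfl (fun i => A i k = y)
    (fun i j => B i j l = x)
    (by rw [pow_one]; exact hA1 k y)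
    (fun i _ => by rw [pow_one]; exact hB1 i l x)

lemma caseRR
    (hAp : ∀ {k k' : Fin m1}, k ≠ k' → ∀ x y : F,
      (univ.filter fun i => A i k = x ∧ A i k' = y).card * Fintype.card F ^ 2 = n1)
    {k k' : Fin m1} (hkk : k ≠ k') (x y : F) :
    (univ.filter fun p : Fin n1 × Fin n2 =>
        A p.1 k = x ∧ A p.1 k' = y).card * Fintype.card F ^ 2 = n1 * n2 := by
  rw [count_eq (q := fun p : Fin n1 × Fin n2 =>
      (A p.1 k = x ∧ A p.1 k' = y) ∧ True)
    (fun p => ⟨fun h => ⟨h, trivial⟩, fun h => h.1⟩)]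
  exact master (n1 := n1) (n2 := n2) 2 0 rfl (fun i => A i k = x ∧ A i k' = y)
    (fun _ _ => True) (hAp hkk x y) (fun i _ => by simp)

lemma caseLL
    (hA1 : ∀ (k : Fin m1) (x : F), (univ.filter fun i => A i k = x).card * Fintype.card F = n1)
    (hAg : ∀ {k k' : Fin m1}, k ≠ k' → ∀ f : F → F,
      (univ.filter fun i => A i k' = f (A i k)).card * Fintype.card F = n1)
    (hB1 : ∀ i (l : Fin m2) (w : F),
      (univ.filter fun j => B i j l = w).card * Fintype.card F = n2)
    (hBp : ∀ i {l l' : Fin m2}, l ≠ l' → ∀ w w' : F,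
      (univ.filter fun j => B i j l = w ∧ B i j l' = w').card * Fintype.card F ^ 2 = n2)
    {g g' : F} (hg : g ≠ 0) (hg' : g' ≠ 0) {k k' : Fin m1} {l l' : Fin m2}
    (hne : ¬(g = g' ∧ k = k' ∧ l = l')) (x y : F) :
    (univ.filter fun p : Fin n1 × Fin n2 =>
        A p.1 k + g * B p.1 p.2 l = x ∧ A p.1 k' + g' * B p.1 p.2 l' = y).card
      * Fintype.card F ^ 2 = n1 * n2 := by
  by_cases hll : l = l'
  · subst hll
    by_cases hgg : g = g'
    · subst hgg
      have hkk : k ≠ k' := fun h => hne ⟨rfl, h, rfl⟩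
      rw [count_eq (q := fun p : Fin n1 × Fin n2 =>
          A p.1 k' = A p.1 k - x + y ∧ A p.1 k + g * B p.1 p.2 l = x)
        (fun p => lin3 hg)]
      refine master (n1 := n1) (n2 := n2) 1 1 rfl (fun i => A i k' = A i k - x + y)
        (fun i j => A i k + g * B i j l = x)
        (by rw [pow_one]; exact hAg hkk fun t => t - x + y)
        (fun i _ => ?_)
      rw [pow_one, count_eq (q := fun j => B i j l = g⁻¹ * (x - A i k))
        (fun j => lin1 hg)]
      exact hB1 i l _
    · rw [count_eq (q := fun p : Fin n1 × Fin n2 =>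
          g' * (x - A p.1 k) = g * (y - A p.1 k')
            ∧ B p.1 p.2 l = (g - g')⁻¹ * ((x - A p.1 k) - (y - A p.1 k')))
        (fun p => lin2 hgg)]
      refine master (n1 := n1) (n2 := n2) 1 1 rfl
        (fun i => g' * (x - A i k) = g * (y - A i k'))
        (fun i j => B i j l = (g - g')⁻¹ * ((x - A i k) - (y - A i k')))
        ?_ (fun i _ => by rw [pow_one]; exact hB1 i l _)
      rw [pow_one]
      by_cases hkk : k = k'
      · subst hkk
        rw [count_eq (q := fun i => A i k = (g - g')⁻¹ * (g * y - g' * x))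
          (fun i => lin2P_eq hgg)]
        exact hA1 k _
      · rw [count_eq (q := fun i => A i k' = g⁻¹ * (g * y - g' * x + g' * A i k))
          (fun i => lin2P_ne hg)]
        exact hAg hkk fun t => g⁻¹ * (g * y - g' * x + g' * t)
  · rw [count_eq (q := fun p : Fin n1 × Fin n2 =>
        True ∧ (B p.1 p.2 l = g⁻¹ * (x - A p.1 k)
          ∧ B p.1 p.2 l' = g'⁻¹ * (y - A p.1 k')))
      (fun p => by simp only [lin1 hg, lin1 hg', true_and])]
    exact master (n1 := n1) (n2 := n2) 0 2 rfl (fun _ => True)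
      (fun i j => B i j l = g⁻¹ * (x - A i k) ∧ B i j l' = g'⁻¹ * (y - A i k'))
      (by simp) (fun i _ => hBp i hll _ _)

end cases
section core
variable {F : Type} [Field F] [Fintype F] [DecidableEq F] {n1 m1 n2 m2 : ℕ}
  {A : Fin n1 → Fin m1 → F} {B : Fin n1 → Fin n2 → Fin m2 → F}

lemma core
    (hA1 : ∀ (k : Fin m1) (x : F), (univ.filter fun i => A i k = x).card * Fintype.card F = n1)
    (hAg : ∀ {k k' : Fin m1}, k ≠ k' → ∀ f : F → F,
      (univ.filter fun i => A i k' = f (A i k)).card * Fintype.card F = n1)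
    (hAp : ∀ {k k' : Fin m1}, k ≠ k' → ∀ x y : F,
      (univ.filter fun i => A i k = x ∧ A i k' = y).card * Fintype.card F ^ 2 = n1)
    (hB1 : ∀ i (l : Fin m2) (w : F),
      (univ.filter fun j => B i j l = w).card * Fintype.card F = n2)
    (hBp : ∀ i {l l' : Fin m2}, l ≠ l' → ∀ w w' : F,
      (univ.filter fun j => B i j l = w ∧ B i j l' = w').card * Fintype.card F ^ 2 = n2)
    (c0 c1 : ({g : F // g ≠ 0} × Fin m1 × Fin m2) ⊕ (Fin m2 ⊕ Fin m1))
    (hne : c0 ≠ c1) (x y : F) :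
    (univ.filter fun p : Fin n1 × Fin n2 =>
        OAE A B p c0 = x ∧ OAE A B p c1 = y).card * Fintype.card F ^ 2 = n1 * n2 := by
  obtain ⟨⟨g, hg⟩, k, l⟩ | (l | k) := c0 <;> obtain ⟨⟨g', hg'⟩, k', l'⟩ | (l' | k') := c1 <;>
    simp only [OAE]
  · -- LL
    refine caseLL hA1 hAg hB1 hBp hg hg' ?_ x y
    rintro ⟨rfl, rfl, rfl⟩
    exact hne rfl
  · -- LM
    exact caseLM hA1 hB1 hBp hg k l l' x y
  · -- LR
    exact caseLR hA1 hB1 hg k k' l x y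
  · -- ML
    refine Eq.trans (congrArg (· * Fintype.card F ^ 2) (count_eq (q := fun p : Fin n1 × Fin n2 =>
        A p.1 k' + g' * B p.1 p.2 l' = y ∧ B p.1 p.2 l = x) (fun p => and_comm))) ?_
    exact caseLM hA1 hB1 hBp hg' k' l' l y x
  · -- MM
    refine caseMM hBp (fun h => hne ?_) x y
    rw [h]
  · -- MR
    exact caseMR hA1 hB1 l k' x y
  · -- RL
    refine Eq.trans (congrArg (· * Fintype.card F ^ 2) (count_eq (q := fun p : Fin n1 × Fin n2 =>
        A p.1 k' + g' * B p.1 p.2 l' = y ∧ A p.1 k = x) (fun p => and_comm))) ?_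
    exact caseLR hA1 hB1 hg' k' k l' y x
  · -- RM
    refine Eq.trans (congrArg (· * Fintype.card F ^ 2) (count_eq (q := fun p : Fin n1 × Fin n2 =>
        B p.1 p.2 l' = y ∧ A p.1 k = x) (fun p => and_comm))) ?_
    exact caseMR hA1 hB1 l' k y x
  · -- RR
    refine caseRR hAp (fun h => hne ?_) x y
    rw [h]

end core


/-- Theorem 1: if `A` is an `OA(n₁, m₁, s, 1)` for `m₁ = 1` (resp. an
`OA(n₁, m₁, s, 2)` for `m₁ > 1`) and each `Bᵢ` is an `OA(n₂, m₂, s, 2)`, then `E` is an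
`OA(n₁n₂, (s−1)m₁m₂ + m₁ + m₂, s, 2)`; the number of columns of `E` is recorded by the
cardinality identity. -/
theorem statement7 {F : Type} [Field F] [Fintype F] [DecidableEq F]
    {n1 m1 n2 m2 : ℕ} (hm1 : 0 < m1) (hm2 : 2 ≤ m2)
    (A : Fin n1 → Fin m1 → F) (B : Fin n1 → Fin n2 → Fin m2 → F)
    (hA1 : m1 = 1 → IsOA A 1) (hA2 : 1 < m1 → IsOA A 2)
    (hB : ∀ i, IsOA (B i) 2) :
    IsOA (OAE A B) 2 ∧
      Fintype.card (({g : F // g ≠ 0} × Fin m1 × Fin m2) ⊕ (Fin m2 ⊕ Fin m1))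
        = (Fintype.card F - 1) * m1 * m2 + m1 + m2 := by
  constructor
  · -- the OA property
    have hB1 : ∀ i (l : Fin m2) (w : F),
        (univ.filter fun j => B i j l = w).card * Fintype.card F = n2 := by
      intro i l w
      obtain ⟨l', hl'⟩ := Fintype.exists_ne_of_one_lt_card
        (by simpa using (by omega : 1 < m2)) l
      simpa using oa2_one (hB i) (Ne.symm hl') w
    have hBp : ∀ i {l l' : Fin m2}, l ≠ l' → ∀ w w' : F,
        (univ.filter fun j => B i j l = w ∧ B i j l' = w').card * Fintype.card F ^ 2
          = n2 := by
      intro i l l' hll w w'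
      simpa using oa2_pair (hB i) hll w w'
    have hA1' : ∀ (k : Fin m1) (x : F),
        (univ.filter fun i => A i k = x).card * Fintype.card F = n1 := by
      intro k x
      by_cases h1 : m1 = 1
      · simpa using oa1_single (hA1 h1) k x
      · obtain ⟨k', hk'⟩ := Fintype.exists_ne_of_one_lt_card
          (by simpa using (by omega : 1 < m1)) k
        simpa using oa2_one (hA2 (by omega)) (Ne.symm hk') x
    have hm1' : ∀ {k k' : Fin m1}, k ≠ k' → 1 < m1 := by
      intro k k' hkk
      have : Nontrivial (Fin m1) := ⟨⟨k, k', hkk⟩⟩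
      simpa using Fintype.one_lt_card (α := Fin m1)
    have hAg : ∀ {k k' : Fin m1}, k ≠ k' → ∀ f : F → F,
        (univ.filter fun i => A i k' = f (A i k)).card * Fintype.card F = n1 := by
      intro k k' hkk f
      simpa using oa2_graph (hA2 (hm1' hkk)) hkk f
    have hAp : ∀ {k k' : Fin m1}, k ≠ k' → ∀ x y : F,
        (univ.filter fun i => A i k = x ∧ A i k' = y).card * Fintype.card F ^ 2 = n1 := by
      intro k k' hkk x y
      simpa using oa2_pair (hA2 (hm1' hkk)) hkk x y
    intro cols inj v
    have hne : cols 0 ≠ cols 1 := fun h => absurd (inj h) (by decide)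
    rw [count_eq (q := fun p : Fin n1 × Fin n2 =>
        OAE A B p (cols 0) = v 0 ∧ OAE A B p (cols 1) = v 1)
      (fun p => Fin.forall_fin_two)]
    rw [show Fintype.card (Fin n1 × Fin n2) = n1 * n2 by simp]
    exact core hA1' hAg hAp hB1 hBp (cols 0) (cols 1) hne (v 0) (v 1)
  · -- cardinality
    have hcard : Fintype.card {g : F // g ≠ 0} = Fintype.card F - 1 := by
      simp [Fintype.card_subtype_compl]
    simp only [Fintype.card_sum, Fintype.card_prod, Fintype.card_fin, hcard]
    ring_nf
end

section
/- Let A be an OA(n1, n1−1, 2, 2) and let B_1,…,B_{n1} each be an OA(n2, n2−1, 2, 2) (all over GF(2)). Then the array E of the construction (with s = 2, m1 = n1−1, m2 = n2−1) is an OA(n1·n2, n1·n2−1, 2, 2), i.e., a saturated two-level orthogonal array of strength two. -/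
open Finset

private lemma myCardFilterProd {I J : Type*} [Fintype I] [Fintype J]
    (R : I → J → Prop) [∀ i j, Decidable (R i j)] :
    (univ.filter fun p : I × J => R p.1 p.2).card
      = ∑ i, (univ.filter fun j => R i j).card := by
  simp only [Finset.card_filter]
  rw [← Finset.univ_product_univ, Finset.sum_product]

private lemma myKey4 {I J : Type*} [Fintype I] [Fintype J] {nJ : ℕ}
    (Q : I → J → Prop) [∀ i j, Decidable (Q i j)]
    (hQ : ∀ i, (univ.filter fun j => Q i j).card * 4 = nJ) :
    (univ.filter fun p : I × J => Q p.1 p.2).card * 4 = Fintype.card I * nJ := by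
  rw [myCardFilterProd, Finset.sum_mul]
  rw [Finset.sum_congr rfl fun i _ => hQ i]
  simp [Finset.card_univ, mul_comm]

private lemma mySplit2 {I J : Type*} [Fintype I] [Fintype J] {nI nJ : ℕ}
    (P : I → Prop) (Q : I → J → Prop) [DecidablePred P] [∀ i j, Decidable (Q i j)]
    (hP : (univ.filter P).card * 2 = nI)
    (hQ : ∀ i, P i → (univ.filter fun j => Q i j).card * 2 = nJ) :
    (univ.filter fun p : I × J => P p.1 ∧ Q p.1 p.2).card * 4 = nI * nJ := by
  rw [myCardFilterProd (R := fun i j => P i ∧ Q i j)]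
  have h1 : ∀ i, (univ.filter fun j => P i ∧ Q i j).card
      = if P i then (univ.filter fun j => Q i j).card else 0 := by
    intro i
    by_cases h : P i <;> simp [h]
  calc (∑ i, (univ.filter fun j => P i ∧ Q i j).card) * 4
      = (∑ i ∈ univ.filter P, (univ.filter fun j => Q i j).card) * 4 := by
        rw [Finset.sum_filter]
        congr 1
        exact Finset.sum_congr rfl fun i _ => h1 i
    _ = (∑ i ∈ univ.filter P, (univ.filter fun j => Q i j).card * 2) * 2 := by
        rw [show (4:ℕ) = 2*2 from rfl, ← mul_assoc, Finset.sum_mul]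
    _ = (∑ _i ∈ univ.filter P, nJ) * 2 := by
        congr 1
        exact Finset.sum_congr rfl fun i hi => hQ i (Finset.mem_filter.mp hi).2
    _ = nI * nJ := by
        rw [Finset.sum_const, smul_eq_mul, ← hP]; ring

private lemma mySplitA {I J : Type*} [Fintype I] [Fintype J]
    (P : I → Prop) [DecidablePred P] :
    (univ.filter fun p : I × J => P p.1).card = (univ.filter P).card * Fintype.card J := by
  rw [myCardFilterProd (R := fun i (_ : J) => P i)]
  have h1 : ∀ i, (univ.filter fun _ : J => P i).card = if P i then Fintype.card J else 0 := by
    intro i; by_cases h : P i <;> simp [h, Finset.card_univ]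
  rw [Finset.sum_congr rfl fun i _ => h1 i, ← Finset.sum_filter, Finset.sum_const, smul_eq_mul]

private lemma myFilterAndComm {α : Type*} [Fintype α] (X Y : α → Prop)
    [DecidablePred X] [DecidablePred Y] :
    (univ.filter fun r => X r ∧ Y r).card = (univ.filter fun r => Y r ∧ X r).card := by
  congr 1
  apply Finset.filter_congr
  intro r _
  exact and_comm

private lemma mySplit2' {I J : Type*} [Fintype I] [Fintype J] {nI nJ : ℕ}
    (P : I → Prop) (Q : I → J → Prop) [DecidablePred P] [∀ i j, Decidable (Q i j)]
    (hP : (univ.filter P).card * 2 = nI)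
    (hQ : ∀ i, P i → (univ.filter fun j => Q i j).card * 2 = nJ) :
    (univ.filter fun p : I × J => Q p.1 p.2 ∧ P p.1).card * 4 = nI * nJ := by
  rw [myFilterAndComm (fun p : I × J => Q p.1 p.2) (fun p => P p.1)]
  exact mySplit2 P Q hP hQ

/-- Corollary 1: with `s = 2`, `A` a saturated `OA(n₁, n₁−1, 2, 2)` and each
`Bᵢ` a saturated `OA(n₂, n₂−1, 2, 2)`, the array `E` is a saturated
`OA(n₁n₂, n₁n₂−1, 2, 2)`.  (An orthogonal array of strength 2 is in particular of strength 1,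
which is the content of the degenerate hypotheses `hA1`, `hB1` when `n₁−1 = 1` or
`n₂−1 = 1`.) -/
theorem statement8 {F : Type} [Field F] [Fintype F] [DecidableEq F]
    (hs : Fintype.card F = 2)
    {n1 n2 : ℕ} (hn1 : 0 < n1) (hn2 : 0 < n2)
    (A : Fin n1 → Fin (n1 - 1) → F) (B : Fin n1 → Fin n2 → Fin (n2 - 1) → F)
    (hA : IsOA A 2) (hA1 : IsOA A 1)
    (hB : ∀ i, IsOA (B i) 2) (hB1 : ∀ i, IsOA (B i) 1) :
    IsOA (OAE A B) 2 ∧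
      Fintype.card (({g : F // g ≠ 0} × Fin (n1 - 1) × Fin (n2 - 1)) ⊕ (Fin (n2 - 1) ⊕ Fin (n1 - 1)))
        = n1 * n2 - 1 := by
  classical
  have hone : ∀ x : F, x ≠ 0 → x = 1 := by
    intro x hx
    have hu : Fintype.card Fˣ = 1 := by rw [Fintype.card_units, hs]
    have hss : Subsingleton Fˣ := Fintype.card_le_one_iff_subsingleton.mp (le_of_eq hu)
    have h := Subsingleton.elim (Units.mk0 x hx) 1
    calc x = ((Units.mk0 x hx : Fˣ) : F) := rfl
      _ = ((1 : Fˣ) : F) := by rw [h]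
      _ = 1 := rfl
  have helem : ∀ x : F, x = 0 ∨ x = 1 := by
    intro x
    by_cases h : x = 0
    · exact Or.inl h
    · exact Or.inr (hone x h)
  have HA1 : ∀ (k : Fin (n1-1)) (a : F),
      (univ.filter fun i => A i k = a).card * 2 = n1 := by
    intro k a
    have h := hA1 (fun _ => k) (Function.injective_of_subsingleton _) (fun _ => a)
    simpa [hs, Fin.forall_fin_one] using h
  have HB1 : ∀ (i : Fin n1) (l : Fin (n2-1)) (a : F),
      (univ.filter fun j => B i j l = a).card * 2 = n2 := by
    intro i l a
    have h := hB1 i (fun _ => l) (Function.injective_of_subsingleton _) (fun _ => a)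
    simpa [hs, Fin.forall_fin_one] using h
  have HA2 : ∀ (k k' : Fin (n1-1)), k ≠ k' → ∀ a b : F,
      (univ.filter fun i => A i k = a ∧ A i k' = b).card * 4 = n1 := by
    intro k k' hkk a b
    have hinj : Function.Injective ![k, k'] := by
      intro x y hxy
      fin_cases x <;> fin_cases y <;> simp_all
    have h := hA ![k,k'] hinj ![a,b]
    simpa [hs, Fin.forall_fin_two, show (2:ℕ)^2 = 4 by norm_num] using h
  have HB2 : ∀ (i : Fin n1) (l l' : Fin (n2-1)), l ≠ l' → ∀ a b : F,
      (univ.filter fun j => B i j l = a ∧ B i j l' = b).card * 4 = n2 := by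
    intro i l l' hll a b
    have hinj : Function.Injective ![l, l'] := by
      intro x y hxy
      fin_cases x <;> fin_cases y <;> simp_all
    have h := hB i ![l,l'] hinj ![a,b]
    simpa [hs, Fin.forall_fin_two, show (2:ℕ)^2 = 4 by norm_num] using h
  have HAdiff : ∀ (k k' : Fin (n1-1)), k ≠ k' → ∀ c : F,
      (univ.filter fun i => A i k - A i k' = c).card * 2 = n1 := by
    intro k k' hkk c
    have hsplit : (univ.filter fun i => A i k - A i k' = c)
        = (univ.filter fun i => A i k = c ∧ A i k' = 0)
          ∪ (univ.filter fun i => A i k = c + 1 ∧ A i k' = 1) := by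
      ext i
      simp only [Finset.mem_filter, Finset.mem_union, Finset.mem_univ, true_and]
      constructor
      · intro h
        rcases helem (A i k') with h0 | h1
        · exact Or.inl ⟨by linear_combination h + h0, h0⟩
        · exact Or.inr ⟨by linear_combination h + h1, h1⟩
      · rintro (⟨h1, h2⟩ | ⟨h1, h2⟩) <;> linear_combination h1 - h2
    have hdisj : Disjoint (univ.filter fun i => A i k = c ∧ A i k' = 0)
        (univ.filter fun i => A i k = c + 1 ∧ A i k' = 1) := by
      rw [Finset.disjoint_left]
      intro i h1 h2
      have e0 := (Finset.mem_filter.mp h1).2.2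
      have e1 := (Finset.mem_filter.mp h2).2.2
      exact (one_ne_zero : (1:F) ≠ 0) (e1 ▸ e0)
    rw [hsplit, Finset.card_union_of_disjoint hdisj]
    have e1 := HA2 k k' hkk c 0
    have e2 := HA2 k k' hkk (c + 1) 1
    omega
  constructor
  · intro cols hinj v
    have h01 : (0 : Fin 2) ≠ 1 := by decide
    have hne : cols 0 ≠ cols 1 := fun h => h01 (hinj h)
    rw [hs, Fintype.card_prod, Fintype.card_fin, Fintype.card_fin,
      show (2:ℕ)^2 = 4 by norm_num]
    simp only [Fin.forall_fin_two]
    rcases h0 : cols 0 with ⟨g, k, l⟩ | l | k <;>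
      rcases h1 : cols 1 with ⟨g', k', l'⟩ | l' | k' <;>
      rw [h1] at hne <;>
      simp only [OAE]
    -- Case LL
    · have hg : (g.1 : F) = 1 := hone g.1 g.2
      have hg' : (g'.1 : F) = 1 := hone g'.1 g'.2
      have hgg : g = g' := Subtype.ext (by rw [hg, hg'])
      simp only [hg, hg', one_mul]
      by_cases hl : l = l'
      · subst hl
        have hkk : k ≠ k' := by
          intro h
          exact hne (by rw [h0, hgg, h])
        have hiff : ∀ r : Fin n1 × Fin n2,
            (A r.1 k + B r.1 r.2 l = v 0 ∧ A r.1 k' + B r.1 r.2 l = v 1)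
            ↔ ((A r.1 k - A r.1 k' = v 0 - v 1) ∧ (B r.1 r.2 l = v 0 - A r.1 k)) := by
          intro r
          constructor
          · rintro ⟨e1, e2⟩
            exact ⟨by linear_combination e1 - e2, by linear_combination e1⟩
          · rintro ⟨e1, e2⟩
            exact ⟨by linear_combination e2, by linear_combination e2 - e1⟩
        rw [Finset.filter_congr fun r _ => hiff r]
        exact mySplit2 (fun i => A i k - A i k' = v 0 - v 1)
          (fun i j => B i j l = v 0 - A i k) (HAdiff k k' hkk _) (fun i _ => HB1 i l _)
      · have hiff : ∀ r : Fin n1 × Fin n2,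
            (A r.1 k + B r.1 r.2 l = v 0 ∧ A r.1 k' + B r.1 r.2 l' = v 1)
            ↔ ((B r.1 r.2 l = v 0 - A r.1 k) ∧ (B r.1 r.2 l' = v 1 - A r.1 k')) := by
          intro r
          constructor
          · rintro ⟨e1, e2⟩
            exact ⟨by linear_combination e1, by linear_combination e2⟩
          · rintro ⟨e1, e2⟩
            exact ⟨by linear_combination e1, by linear_combination e2⟩
        rw [Finset.filter_congr fun r _ => hiff r]
        have h := myKey4 (fun i j => B i j l = v 0 - A i k ∧ B i j l' = v 1 - A i k')
          (fun i => HB2 i l l' hl _ _)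
        simpa using h
    -- Case LM
    · have hg : (g.1 : F) = 1 := hone g.1 g.2
      simp only [hg, one_mul]
      by_cases hl : l = l'
      · subst hl
        have hiff : ∀ r : Fin n1 × Fin n2,
            (A r.1 k + B r.1 r.2 l = v 0 ∧ B r.1 r.2 l = v 1)
            ↔ ((A r.1 k = v 0 - v 1) ∧ (B r.1 r.2 l = v 1)) := by
          intro r
          constructor
          · rintro ⟨e1, e2⟩
            exact ⟨by linear_combination e1 - e2, e2⟩
          · rintro ⟨e1, e2⟩
            exact ⟨by linear_combination e1 + e2, e2⟩
        rw [Finset.filter_congr fun r _ => hiff r]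
        exact mySplit2 (fun i => A i k = v 0 - v 1) (fun i j => B i j l = v 1)
          (HA1 k _) (fun i _ => HB1 i l _)
      · have hiff : ∀ r : Fin n1 × Fin n2,
            (A r.1 k + B r.1 r.2 l = v 0 ∧ B r.1 r.2 l' = v 1)
            ↔ ((B r.1 r.2 l = v 0 - A r.1 k) ∧ (B r.1 r.2 l' = v 1)) := by
          intro r
          constructor
          · rintro ⟨e1, e2⟩
            exact ⟨by linear_combination e1, e2⟩
          · rintro ⟨e1, e2⟩
            exact ⟨by linear_combination e1, e2⟩
        rw [Finset.filter_congr fun r _ => hiff r]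
        have h := myKey4 (fun i j => B i j l = v 0 - A i k ∧ B i j l' = v 1)
          (fun i => HB2 i l l' hl _ _)
        simpa using h
    -- Case LN
    · have hg : (g.1 : F) = 1 := hone g.1 g.2
      simp only [hg, one_mul]
      have hiff : ∀ r : Fin n1 × Fin n2,
          (A r.1 k + B r.1 r.2 l = v 0 ∧ A r.1 k' = v 1)
          ↔ ((B r.1 r.2 l = v 0 - A r.1 k) ∧ (A r.1 k' = v 1)) := by
        intro r
        constructor
        · rintro ⟨e1, e2⟩
          exact ⟨by linear_combination e1, e2⟩
        · rintro ⟨e1, e2⟩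
          exact ⟨by linear_combination e1, e2⟩
      rw [Finset.filter_congr fun r _ => hiff r]
      exact mySplit2' (fun i => A i k' = v 1) (fun i j => B i j l = v 0 - A i k)
        (HA1 k' _) (fun i _ => HB1 i l _)
    -- Case ML
    · have hg : (g'.1 : F) = 1 := hone g'.1 g'.2
      simp only [hg, one_mul]
      by_cases hl : l = l'
      · subst hl
        have hiff : ∀ r : Fin n1 × Fin n2,
            (B r.1 r.2 l = v 0 ∧ A r.1 k' + B r.1 r.2 l = v 1)
            ↔ ((A r.1 k' = v 1 - v 0) ∧ (B r.1 r.2 l = v 0)) := by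
          intro r
          constructor
          · rintro ⟨e1, e2⟩
            exact ⟨by linear_combination e2 - e1, e1⟩
          · rintro ⟨e1, e2⟩
            exact ⟨e2, by linear_combination e1 + e2⟩
        rw [Finset.filter_congr fun r _ => hiff r]
        exact mySplit2 (fun i => A i k' = v 1 - v 0) (fun i j => B i j l = v 0)
          (HA1 k' _) (fun i _ => HB1 i l _)
      · have hiff : ∀ r : Fin n1 × Fin n2,
            (B r.1 r.2 l = v 0 ∧ A r.1 k' + B r.1 r.2 l' = v 1)
            ↔ ((B r.1 r.2 l = v 0) ∧ (B r.1 r.2 l' = v 1 - A r.1 k')) := by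
          intro r
          constructor
          · rintro ⟨e1, e2⟩
            exact ⟨e1, by linear_combination e2⟩
          · rintro ⟨e1, e2⟩
            exact ⟨e1, by linear_combination e2⟩
        rw [Finset.filter_congr fun r _ => hiff r]
        have h := myKey4 (fun i j => B i j l = v 0 ∧ B i j l' = v 1 - A i k')
          (fun i => HB2 i l l' hl _ _)
        simpa using h
    -- Case MM
    · have hll : l ≠ l' := by
        intro h
        exact hne (by rw [h0, h])
      have h := myKey4 (fun i j => B i j l = v 0 ∧ B i j l' = v 1)
        (fun i => HB2 i l l' hll _ _)
      rw [Fintype.card_fin] at h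
      exact h
    -- Case MN
    · exact mySplit2' (fun i => A i k' = v 1) (fun i j => B i j l = v 0)
        (HA1 k' _) (fun i _ => HB1 i l _)
    -- Case NL
    · have hg : (g'.1 : F) = 1 := hone g'.1 g'.2
      simp only [hg, one_mul]
      have hiff : ∀ r : Fin n1 × Fin n2,
          (A r.1 k = v 0 ∧ A r.1 k' + B r.1 r.2 l' = v 1)
          ↔ ((A r.1 k = v 0) ∧ (B r.1 r.2 l' = v 1 - A r.1 k')) := by
        intro r
        constructor
        · rintro ⟨e1, e2⟩
          exact ⟨e1, by linear_combination e2⟩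
        · rintro ⟨e1, e2⟩
          exact ⟨e1, by linear_combination e2⟩
      rw [Finset.filter_congr fun r _ => hiff r]
      exact mySplit2 (fun i => A i k = v 0) (fun i j => B i j l' = v 1 - A i k')
        (HA1 k _) (fun i _ => HB1 i l' _)
    -- Case NM
    · exact mySplit2 (fun i => A i k = v 0) (fun i j => B i j l' = v 1)
        (HA1 k _) (fun i _ => HB1 i l' _)
    -- Case NN
    · have hkk : k ≠ k' := by
        intro h
        exact hne (by rw [h0, h])
      show (univ.filter fun p : Fin n1 × Fin n2 => A p.1 k = v 0 ∧ A p.1 k' = v 1).card * 4 = n1 * n2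
      rw [mySplitA (P := fun i => A i k = v 0 ∧ A i k' = v 1), Fintype.card_fin,
        mul_right_comm, HA2 k k' hkk (v 0) (v 1)]
  · -- cardinality
    have hgcard : Fintype.card {g : F // g ≠ 0} = 1 := by
      rw [← Fintype.card_congr (unitsEquivNeZero (G₀ := F)), Fintype.card_units, hs]
    obtain ⟨a, rfl⟩ : ∃ a, n1 = a + 1 := ⟨n1 - 1, by omega⟩
    obtain ⟨b, rfl⟩ : ∃ b, n2 = b + 1 := ⟨n2 - 1, by omega⟩
    simp only [Fintype.card_sum, Fintype.card_prod, Fintype.card_fin, hgcard,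
      Nat.add_sub_cancel]
    have : (a + 1) * (b + 1) = (1 * (a * b) + (b + a)) + 1 := by ring
    rw [this]
    omega
end

section
/- Let s be a prime power. Let A be the s×1 column vector containing each element of GF(s) exactly once (an OA(s, 1, s, 1)), and for i = 1,…,s let B_i be an OA(n2, m2, s, 2) if m2 = 2 or an OA(n2, m2, s, 3) if m2 ≥ 3. Then for every pair 1 ≤ g ≠ g' ≤ s, the (s·n2)×(2·m2) matrix (D_g, D_{g'}) is an OA(s·n2, 2·m2, s, 3). -/
open Finset

namespace St11Aux
variable {F : Type} [Field F] [Fintype F] [DecidableEq F]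

noncomputable def wfun (g i a : F) : F := if g = 0 then a else (a - i) * g⁻¹

noncomputable def isol (g g' a b : F) : F :=
  if g = 0 then b - g' * a else if g' = 0 then a - g * b
  else (a * g' - b * g) * (g' - g)⁻¹

lemma affine_iff (g i x a : F) : (if g = 0 then x else i + g * x) = a ↔ x = wfun g i a := by
  unfold wfun
  by_cases hg : g = 0 <;> simp [hg]
  constructor <;> intro h
  · field_simp [hg]; linear_combination h
  · subst h; field_simp; ring

lemma wfun_eq_iff {g g' : F} (h : g ≠ g') (a b i : F) :
    wfun g i a = wfun g' i b ↔ i = isol g g' a b := by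
  unfold wfun isol
  by_cases hg : g = 0 <;> by_cases hg' : g' = 0 <;> simp [hg, hg']
  · exact absurd (hg.trans hg'.symm) h
  · constructor <;> intro hh
    · field_simp at hh; linear_combination hh
    · subst hh; field_simp; ring
  · constructor <;> intro hh
    · field_simp at hh; linear_combination -hh
    · subst hh; field_simp; ring
  · have hsub : g' - g ≠ 0 := sub_ne_zero.mpr (Ne.symm h)
    constructor <;> intro hh
    · field_simp at hh ⊢; linear_combination -hh
    · subst hh; field_simp; ring

lemma forall_fin3 (P : Fin 3 → Prop) : (∀ j, P j) ↔ P 0 ∧ P 1 ∧ P 2 :=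
  ⟨fun h => ⟨h 0, h 1, h 2⟩, by rintro ⟨a, b, c⟩ j; fin_cases j <;> assumption⟩

lemma forall_fin2 (P : Fin 2 → Prop) : (∀ j, P j) ↔ P 0 ∧ P 1 :=
  ⟨fun h => ⟨h 0, h 1⟩, by rintro ⟨a, b⟩ j; fin_cases j <;> assumption⟩

lemma str2_of_OA2 {R : Type*} [Fintype R] {m2 : ℕ} {M : R → Fin m2 → F}
    (h2 : IsOA M 2) {c1 c2 : Fin m2} (hc : c1 ≠ c2) (u1 u2 : F) :
    (univ.filter fun r => M r c1 = u1 ∧ M r c2 = u2).card * Fintype.card F ^ 2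
      = Fintype.card R := by
  have hinj : Function.Injective ![c1, c2] := by
    intro a b hab
    fin_cases a <;> fin_cases b <;> simp_all
  have := h2 ![c1, c2] hinj ![u1, u2]
  convert this using 3
  ext r
  simp [forall_fin2]

lemma str2_of_OA3 {R : Type*} [Fintype R] {m2 : ℕ} (hm : 3 ≤ m2) {M : R → Fin m2 → F}
    (h3 : IsOA M 3) {c1 c2 : Fin m2} (hc : c1 ≠ c2) (u1 u2 : F) :
    (univ.filter fun r => M r c1 = u1 ∧ M r c2 = u2).card * Fintype.card F ^ 2
      = Fintype.card R := by
  classical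
  obtain ⟨c3, hc31, hc32⟩ : ∃ c3 : Fin m2, c3 ≠ c1 ∧ c3 ≠ c2 := by
    by_contra hcon
    push_neg at hcon
    have hsub : (univ : Finset (Fin m2)) ⊆ {c1, c2} := by
      intro x _
      rcases Classical.em (x = c1) with h | h
      · simp [h]
      · simp [hcon x h]
    have := Finset.card_le_card hsub
    have h2' : ({c1, c2} : Finset (Fin m2)).card ≤ 2 := Finset.card_insert_le _ _ |>.trans (by simp)
    simp [Finset.card_univ] at this
    omega
  have hinj : Function.Injective ![c1, c2, c3] := by
    intro a b hab
    fin_cases a <;> fin_cases b <;> simp_all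
  have hsum := Finset.card_eq_sum_card_fiberwise
    (s := univ.filter fun r => M r c1 = u1 ∧ M r c2 = u2) (t := univ)
    (f := fun r => M r c3) (fun x _ => mem_univ _)
  have hfib : ∀ x : F,
      ((univ.filter fun r => M r c1 = u1 ∧ M r c2 = u2).filter fun r => M r c3 = x)
        = univ.filter fun r => ∀ j, M r (![c1, c2, c3] j) = ![u1, u2, x] j := by
    intro x
    ext r
    simp [Finset.filter_filter, forall_fin3, and_assoc]
  have hcard3 : ∀ x : F,
      ((univ.filter fun r => M r c1 = u1 ∧ M r c2 = u2).filter fun r => M r c3 = x).card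
        * Fintype.card F ^ 3 = Fintype.card R := by
    intro x
    rw [hfib x]
    exact h3 ![c1, c2, c3] hinj ![u1, u2, x]
  have hs : 0 < Fintype.card F := Fintype.card_pos
  apply Nat.eq_of_mul_eq_mul_right hs
  calc (univ.filter fun r => M r c1 = u1 ∧ M r c2 = u2).card * Fintype.card F ^ 2
        * Fintype.card F
      = (univ.filter fun r => M r c1 = u1 ∧ M r c2 = u2).card * Fintype.card F ^ 3 := by ring
    _ = (∑ x : F, ((univ.filter fun r => M r c1 = u1 ∧ M r c2 = u2).filter
          fun r => M r c3 = x).card) * Fintype.card F ^ 3 := by rw [← hsum]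
    _ = ∑ x : F, (((univ.filter fun r => M r c1 = u1 ∧ M r c2 = u2).filter
          fun r => M r c3 = x).card * Fintype.card F ^ 3) := by rw [Finset.sum_mul]
    _ = ∑ _x : F, Fintype.card R := by exact Finset.sum_congr rfl fun x _ => hcard3 x
    _ = Fintype.card F * Fintype.card R := by simp [mul_comm]
    _ = Fintype.card R * Fintype.card F := mul_comm _ _

end St11Aux

open St11Aux

/-- Proposition 1: here `A` is the `s × 1` column containing each element of
`F = GF(s)` exactly once, so the rows of the construction are indexed by `F × Fin n₂`.  The
arrays `D₁, …, D_s` are indexed by the elements `g` of `F`: for `g ≠ 0`, `D_g` has entries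
`aᵢ + g·Bᵢ` (these are `D₁, …, D_{s−1}`, as `g` runs over the nonzero elements
`α₁, …, α_{s−1}`), while `g = 0` encodes `D_s = B`.  For any two distinct indices `g ≠ g'`,
the juxtaposed array `(D_g, D_{g'})` is an `OA(s·n₂, 2m₂, s, 3)`. -/
theorem statement11 {F : Type} [Field F] [Fintype F] [DecidableEq F]
    {n2 m2 : ℕ} (hm2 : 2 ≤ m2)
    (B : F → Fin n2 → Fin m2 → F)
    (hB2 : m2 = 2 → ∀ i, IsOA (B i) 2)
    (hB3 : 3 ≤ m2 → ∀ i, IsOA (B i) 3)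
    (g g' : F) (hgg' : g ≠ g') :
    IsOA (fun (p : F × Fin n2) (col : Fin m2 ⊕ Fin m2) =>
      Sum.elim
        (fun l => if g = 0 then B p.1 p.2 l else p.1 + g * B p.1 p.2 l)
        (fun l => if g' = 0 then B p.1 p.2 l else p.1 + g' * B p.1 p.2 l)
        col) 3 := by
  classical
  -- strength-2 property of every B i
  have hstr2 : ∀ i : F, ∀ c1 c2 : Fin m2, c1 ≠ c2 → ∀ u1 u2 : F,
      (univ.filter fun r : Fin n2 => B i r c1 = u1 ∧ B i r c2 = u2).card
        * Fintype.card F ^ 2 = n2 := by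
    intro i c1 c2 hc u1 u2
    rcases eq_or_lt_of_le hm2 with h | h
    · have := str2_of_OA2 (hB2 h.symm i) hc u1 u2
      simpa using this
    · have := str2_of_OA3 h (hB3 h i) hc u1 u2
      simpa using this
  intro cols hinj v
  set l : Fin 3 → Fin m2 := fun j => Sum.elim id id (cols j) with hl
  set h : Fin 3 → F := fun j => Sum.elim (fun _ => g) (fun _ => g') (cols j) with hh
  -- rewrite the defining condition
  have hcond : ∀ (p : F × Fin n2) (j : Fin 3),
      (Sum.elim
        (fun l => if g = 0 then B p.1 p.2 l else p.1 + g * B p.1 p.2 l)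
        (fun l => if g' = 0 then B p.1 p.2 l else p.1 + g' * B p.1 p.2 l)
        (cols j) = v j)
      ↔ B p.1 p.2 (l j) = wfun (h j) p.1 (v j) := by
    intro p j
    rcases hc : cols j with x | x <;>
      simp only [hl, hh, hc, Sum.elim_inl, Sum.elim_inr, id_eq] <;>
      exact affine_iff _ _ _ _
  have hfilt : (univ.filter fun p : F × Fin n2 => ∀ j, (fun (p : F × Fin n2) (col : Fin m2 ⊕ Fin m2) =>
      Sum.elim
        (fun l => if g = 0 then B p.1 p.2 l else p.1 + g * B p.1 p.2 l)
        (fun l => if g' = 0 then B p.1 p.2 l else p.1 + g' * B p.1 p.2 l)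
        col) p (cols j) = v j)
      = univ.filter fun p : F × Fin n2 => ∀ j, B p.1 p.2 (l j) = wfun (h j) p.1 (v j) := by
    apply Finset.filter_congr
    intro p _
    simp only [eq_iff_iff]
    exact forall_congr' (hcond p)
  rw [hfilt]
  -- split the count by the first coordinate
  have hsplit : (univ.filter fun p : F × Fin n2 => ∀ j, B p.1 p.2 (l j) = wfun (h j) p.1 (v j)).card
      = ∑ i : F, (univ.filter fun r : Fin n2 => ∀ j, B i r (l j) = wfun (h j) i (v j)).card := by
    simp_rw [Finset.card_filter]
    rw [← Finset.univ_product_univ, Finset.sum_product]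
  rw [hsplit, Fintype.card_prod, Fintype.card_fin]
  by_cases hlinj : Function.Injective l
  · -- three distinct columns of B : use strength 3
    have hm3 : 3 ≤ m2 := by
      have := Fintype.card_le_of_injective l hlinj
      simpa using this
    rw [Finset.sum_mul]
    calc ∑ i : F, (univ.filter fun r : Fin n2 =>
            ∀ j, B i r (l j) = wfun (h j) i (v j)).card * Fintype.card F ^ 3
        = ∑ _i : F, n2 := by
          refine Finset.sum_congr rfl fun i _ => ?_
          have := hB3 hm3 i l hlinj (fun j => wfun (h j) i (v j))
          simpa using this
      _ = Fintype.card F * n2 := by simp [mul_comm]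
  · -- two of the underlying columns coincide
    rw [Function.not_injective_iff] at hlinj
    obtain ⟨j1, j2, hl12, hj12⟩ := hlinj
    have hthird : ∀ a b : Fin 3, a ≠ b →
        ∃ c : Fin 3, c ≠ a ∧ c ≠ b ∧ ∀ k : Fin 3, k = a ∨ k = b ∨ k = c := by decide
    obtain ⟨j3, hj31, hj32, hcover⟩ := hthird j1 j2 hj12
    have hc12 : cols j1 ≠ cols j2 := fun e => hj12 (hinj e)
    -- sides of cols j1 and cols j2 differ, hence h j1 ≠ h j2; also l j3 ≠ l j1
    have hkey : h j1 ≠ h j2 ∧ l j3 ≠ l j1 := by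
      rcases e1 : cols j1 with x1 | x1 <;> rcases e2 : cols j2 with x2 | x2 <;>
        simp only [hl, hh, e1, e2, Sum.elim_inl, Sum.elim_inr, id_eq] at hl12 hc12 ⊢
      · exact absurd (by rw [hl12]) hc12
      · refine ⟨hgg', ?_⟩
        rcases e3 : cols j3 with x3 | x3 <;>
          simp only [hl, e3, Sum.elim_inl, Sum.elim_inr, id_eq] <;> intro e
        · exact hj31 (hinj (by rw [e3, e1, e]))
        · exact hj32 (hinj (by rw [e3, e2, e, hl12]))
      · refine ⟨Ne.symm hgg', ?_⟩
        rcases e3 : cols j3 with x3 | x3 <;>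
          simp only [hl, e3, Sum.elim_inl, Sum.elim_inr, id_eq] <;> intro e
        · exact hj32 (hinj (by rw [e3, e2, e, hl12]))
        · exact hj31 (hinj (by rw [e3, e1, e]))
      · exact absurd (by rw [hl12]) hc12
    obtain ⟨hh12, hl31⟩ := hkey
    set i0 : F := isol (h j1) (h j2) (v j1) (v j2) with hi0
    have hww : ∀ i : F, wfun (h j1) i (v j1) = wfun (h j2) i (v j2) ↔ i = i0 :=
      fun i => wfun_eq_iff hh12 _ _ i
    rw [Finset.sum_eq_single i0]
    · -- count at i0 via strength 2
      have h2 := hstr2 i0 (l j1) (l j3) (Ne.symm hl31)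
        (wfun (h j1) i0 (v j1)) (wfun (h j3) i0 (v j3))
      have hseteq : (univ.filter fun r : Fin n2 => ∀ j, B i0 r (l j) = wfun (h j) i0 (v j))
          = univ.filter fun r : Fin n2 =>
              B i0 r (l j1) = wfun (h j1) i0 (v j1) ∧ B i0 r (l j3) = wfun (h j3) i0 (v j3) := by
        ext r
        simp only [Finset.mem_filter, Finset.mem_univ, true_and]
        constructor
        · intro hr; exact ⟨hr j1, hr j3⟩
        · rintro ⟨h1, h3⟩ j
          rcases hcover j with rfl | rfl | rfl
          · exact h1
          · rw [← hl12, h1]; exact ((hww i0).mpr rfl)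
          · exact h3
      rw [hseteq]
      have : Fintype.card F ^ 3 = Fintype.card F ^ 2 * Fintype.card F := by ring
      rw [this, ← mul_assoc, h2, mul_comm]
    · -- other i give empty fibers
      intro i _ hne
      rw [Finset.card_eq_zero, Finset.filter_eq_empty_iff]
      intro r _ hall
      have e1 := hall j1
      have e2 := hall j2
      rw [← hl12] at e2
      exact hne ((hww i).mp (e1.symm.trans e2))
    · intro habs; exact absurd (Finset.mem_univ i0) habs
end

section
/- Let s be a prime power. Let A be the s×1 column vector containing each element of GF(s) exactly once (an OA(s, 1, s, 1)), let B_i be an OA(n2, m2, s, 3) for i = 1,…,s, and let F = [D_1, …, D_s] be the array E of the construction with its last column removed. Then F is an OA(n2·s, s·m2, s, 2), the number of 3-element subsets of columns of F that fail to be 3-orthogonal is exactly m2·C(s, 3), and consequently p(F) = 1 − m2·C(s,3)/C(s·m2, 3) = 1 − (s−1)(s−2)/((s·m2 − 1)(s·m2 − 2)). -/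
open Finset

/-- Three (distinct) columns of `M` are 3-orthogonal if they form an `OA(card R, 3, s, 3)`;
a 3-element set `T` of column indices is 3-orthogonal if this holds for its three columns. -/
def TripleOrth {R C F : Type*} [Fintype R] [Fintype F] [DecidableEq F]
    (M : R → C → F) (T : Finset C) : Prop :=
  ∀ c1 c2 c3 : C,
    (c1 ∈ T ∧ c2 ∈ T ∧ c3 ∈ T ∧ c1 ≠ c2 ∧ c1 ≠ c3 ∧ c2 ≠ c3) →
    ∀ v : Fin 3 → F,
      (Finset.univ.filter fun r : R => M r c1 = v 0 ∧ M r c2 = v 1 ∧ M r c3 = v 2).card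
        * Fintype.card F ^ 3 = Fintype.card R

instance {R C F : Type*} [Fintype R] [Fintype C] [DecidableEq C] [Fintype F] [DecidableEq F]
    (M : R → C → F) (T : Finset C) : Decidable (TripleOrth M T) := by
  unfold TripleOrth; exact inferInstance

/-- The array `𝐅 = [D₁, …, D_s]` of the construction with `A` the `s × 1` column containing
each element of `F = GF(s)` exactly once (so `m₁ = 1`, rows indexed by `F × Fin n₂`, and the
last column `D_{s+1} = A` of `E` removed).  Columns `Sum.inl (g, l)` with `g ≠ 0` are the
columns of `D₁, …, D_{s−1}` and columns `Sum.inr l` are those of `D_s = B`. -/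
def FmatA {F : Type} [Field F] {n2 m2 : ℕ} (B : F → Fin n2 → Fin m2 → F) :
    (F × Fin n2) → (({g : F // g ≠ 0} × Fin m2) ⊕ Fin m2) → F
  | p, Sum.inl (g, l) => p.1 + g.1 * B p.1 p.2 l
  | p, Sum.inr l => B p.1 p.2 l

namespace S14
set_option linter.unusedSectionVars false

section generic
variable {R C F : Type*} [Fintype R] [Fintype F] [DecidableEq F] [DecidableEq C]

lemma oa3 {M : R → C → F} (h : IsOA M 3) {l1 l2 l3 : C}
    (h12 : l1 ≠ l2) (h13 : l1 ≠ l3) (h23 : l2 ≠ l3) (b1 b2 b3 : F) :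
    (univ.filter fun r => M r l1 = b1 ∧ M r l2 = b2 ∧ M r l3 = b3).card
      * Fintype.card F ^ 3 = Fintype.card R := by
  have key := h ![l1, l2, l3] (by
    intro a b hab
    fin_cases a <;> fin_cases b <;> simp_all) ![b1, b2, b3]
  have hset : (univ.filter fun r : R => ∀ j, M r (![l1, l2, l3] j) = ![b1, b2, b3] j)
      = univ.filter fun r => M r l1 = b1 ∧ M r l2 = b2 ∧ M r l3 = b3 := by
    ext r
    simp only [mem_filter, mem_univ, true_and]
    constructor
    · intro hj; exact ⟨hj 0, hj 1, hj 2⟩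
    · rintro ⟨e1, e2, e3⟩ j; fin_cases j <;> simpa
  rw [hset] at key
  exact key

lemma exists_third {x y z : C} (l1 l2 : C) (hxy : x ≠ y) (hxz : x ≠ z) (hyz : y ≠ z) :
    ∃ l3, l1 ≠ l3 ∧ l2 ≠ l3 := by
  obtain ⟨l3, hl3m, hl3⟩ : ∃ l3 ∈ ({x, y, z} : Finset C), l3 ∉ ({l1, l2} : Finset C) := by
    by_contra h'
    push_neg at h'
    have hsub : ({x, y, z} : Finset C) ⊆ {l1, l2} := fun a ha => h' a ha
    have h3 : ({x, y, z} : Finset C).card = 3 :=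
      Finset.card_eq_three.mpr ⟨x, y, z, hxy, hxz, hyz, rfl⟩
    have h2 : ({l1, l2} : Finset C).card ≤ 2 :=
      (Finset.card_insert_le _ _).trans (by simp)
    have := Finset.card_le_card hsub
    omega
  simp only [mem_insert, mem_singleton, not_or] at hl3
  exact ⟨l3, fun h => hl3.1 h.symm, fun h => hl3.2 h.symm⟩

lemma oa3_to_2 {M : R → C → F} (hF : 0 < Fintype.card F) (h : IsOA M 3)
    (hC : ∃ x y z : C, x ≠ y ∧ x ≠ z ∧ y ≠ z) :
    ∀ {l1 l2 : C}, l1 ≠ l2 → ∀ b1 b2 : F,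
    (univ.filter fun r => M r l1 = b1 ∧ M r l2 = b2).card
      * Fintype.card F ^ 2 = Fintype.card R := by
  intro l1 l2 h12 b1 b2
  obtain ⟨x, y, z, hxy, hxz, hyz⟩ := hC
  obtain ⟨l3, h13, h23⟩ := exists_third l1 l2 hxy hxz hyz
  have key : (univ.filter fun r => M r l1 = b1 ∧ M r l2 = b2).card
      = ∑ w : F, (univ.filter fun r => M r l1 = b1 ∧ M r l2 = b2 ∧ M r l3 = w).card := by
    rw [Finset.card_eq_sum_card_fiberwise (f := fun r => M r l3) (t := univ)
      (fun x _ => mem_univ _)]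
    refine Finset.sum_congr rfl fun w _ => ?_
    rw [Finset.filter_filter]
    congr 1
    ext r
    simp only [mem_filter]; tauto
  have hcard : 0 < Fintype.card F := hF
  have hmain : (univ.filter fun r => M r l1 = b1 ∧ M r l2 = b2).card * Fintype.card F ^ 3
      = Fintype.card R * Fintype.card F := by
    rw [key, Finset.sum_mul,
      Finset.sum_congr rfl (fun w _ => oa3 h h12 h13 h23 b1 b2 w),
      Finset.sum_const, card_univ, smul_eq_mul, mul_comm]
  have h3 : (univ.filter fun r => M r l1 = b1 ∧ M r l2 = b2).card * Fintype.card F ^ 2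
        * Fintype.card F = Fintype.card R * Fintype.card F := by rw [← hmain]; ring
  exact Nat.eq_of_mul_eq_mul_right hcard h3

lemma oa3_to_1 {M : R → C → F} (hF : 0 < Fintype.card F) (h : IsOA M 3)
    (hC : ∃ x y z : C, x ≠ y ∧ x ≠ z ∧ y ≠ z) :
    ∀ (l1 : C) (b1 : F),
    (univ.filter fun r => M r l1 = b1).card * Fintype.card F = Fintype.card R := by
  intro l1 b1
  obtain ⟨x, y, z, hxy, hxz, hyz⟩ := hC
  obtain ⟨l2, h12, -⟩ := exists_third l1 l1 hxy hxz hyz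
  have key : (univ.filter fun r => M r l1 = b1).card
      = ∑ w : F, (univ.filter fun r => M r l1 = b1 ∧ M r l2 = w).card := by
    rw [Finset.card_eq_sum_card_fiberwise (f := fun r => M r l2) (t := univ)
      (fun x _ => mem_univ _)]
    refine Finset.sum_congr rfl fun w _ => ?_
    rw [Finset.filter_filter]
  have hmain : (univ.filter fun r => M r l1 = b1).card * Fintype.card F ^ 2
      = Fintype.card R * Fintype.card F := by
    rw [key, Finset.sum_mul,
      Finset.sum_congr rfl (fun w _ => oa3_to_2 hF h ⟨x, y, z, hxy, hxz, hyz⟩ h12 b1 w),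
      Finset.sum_const, card_univ, smul_eq_mul, mul_comm]
  have h3 : (univ.filter fun r => M r l1 = b1).card * Fintype.card F
        * Fintype.card F = Fintype.card R * Fintype.card F := by rw [← hmain]; ring
  exact Nat.eq_of_mul_eq_mul_right hF h3

lemma card_prod_fiber {α β : Type*} [Fintype α] [Fintype β] [DecidableEq α]
    (P : α × β → Prop) [DecidablePred P] :
    (univ.filter P).card = ∑ i : α, (univ.filter fun j => P (i, j)).card := by
  rw [Finset.card_eq_sum_card_fiberwise (f := Prod.fst) (t := univ) (fun x _ => mem_univ _)]
  refine Finset.sum_congr rfl fun i _ => ?_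
  rw [Finset.filter_filter]
  refine Finset.card_bij' (fun p _ => p.2) (fun j _ => (i, j)) ?_ ?_ ?_ ?_
  · rintro ⟨a, b⟩ hp
    simp only [mem_filter, mem_univ, true_and] at hp ⊢
    obtain ⟨h1, h2⟩ := hp
    subst h2
    exact h1
  · intro j hj
    simp only [mem_filter, mem_univ, true_and] at hj ⊢
    exact ⟨hj, trivial⟩
  · rintro ⟨a, b⟩ hp
    simp only [mem_filter, mem_univ, true_and] at hp
    obtain ⟨h1, h2⟩ := hp
    subst h2
    rfl
  · intro j hj
    rfl

end generic

variable {F : Type} [Field F] [Fintype F] [DecidableEq F] {n2 m2 : ℕ}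

lemma solve_lin {g : F} (hg : g ≠ 0) (a b v : F) : a + g * b = v ↔ b = g⁻¹ * (v - a) := by
  constructor <;> intro h
  · field_simp
    linear_combination h
  · subst h
    field_simp
    ring

abbrev Col (F : Type) [Field F] (m2 : ℕ) := ({g : F // g ≠ 0} × Fin m2) ⊕ Fin m2

def ell : Col F m2 → Fin m2
  | Sum.inl (_, l) => l
  | Sum.inr l => l

def cf : Col F m2 → F × F
  | Sum.inl (g, _) => (1, g.1)
  | Sum.inr _ => (0, 1)

lemma cf2_ne (c : Col F m2) : (cf c).2 ≠ 0 := by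
  rcases c with ⟨g, l⟩ | l
  · exact g.2
  · exact one_ne_zero

lemma det_ne {c c' : Col F m2} (h : c ≠ c') (he : ell c = ell c') :
    (cf c).1 * (cf c').2 - (cf c').1 * (cf c).2 ≠ 0 := by
  rcases c with ⟨g, l⟩ | l <;> rcases c' with ⟨g', l'⟩ | l'
  · simp only [ell] at he
    subst he
    simp only [cf, one_mul]
    intro hgg
    exact h (by rw [show g = g' from Subtype.ext (by linear_combination -hgg)])
  · simp only [cf]; intro hc; exact one_ne_zero (by linear_combination hc)
  · simp only [cf]; intro hc; exact one_ne_zero (by linear_combination -hc)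
  · simp only [ell] at he; subst he; exact (h rfl).elim

def w (c : Col F m2) (v i : F) : F := (cf c).2⁻¹ * (v - (cf c).1 * i)

lemma unique_i {c c' : Col F m2} (h : c ≠ c') (he : ell c = ell c') (v v' : F) :
    ∃ i0 : F, ∀ i : F, (w c v i = w c' v' i ↔ i = i0) := by
  have hg : (cf c).2 ≠ 0 := cf2_ne c
  have hg' : (cf c').2 ≠ 0 := cf2_ne c'
  have hd := det_ne h he
  set α := (cf c).1 * (cf c').2 - (cf c').1 * (cf c).2 with hα
  refine ⟨α⁻¹ * ((cf c').2 * v - (cf c).2 * v'), fun i => ?_⟩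
  unfold w
  constructor
  · intro h1
    field_simp at h1
    rw [eq_inv_mul_iff_mul_eq₀ hd, hα]
    linear_combination -h1
  · rintro rfl
    rw [hα] at hd ⊢
    have hd' : (cf c').2 * (cf c).1 - (cf c).2 * (cf c').1 ≠ 0 := by
      intro h0; apply hd; linear_combination h0
    field_simp
    linear_combination (-((cf c').2 * v - (cf c).2 * v')) * mul_inv_cancel₀ hd'

lemma card_ell_fiber (l : Fin m2) :
    (univ.filter fun c : Col F m2 => ell c = l).card = Fintype.card F := by
  rw [← Fintype.card_subtype]
  refine (Fintype.card_congr ?_).symm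
  refine ⟨fun x => if h : x = 0 then ⟨Sum.inr l, rfl⟩ else ⟨Sum.inl (⟨x, h⟩, l), rfl⟩,
    fun c => match c with
      | ⟨Sum.inl (g, _), _⟩ => g.1
      | ⟨Sum.inr _, _⟩ => 0, ?_, ?_⟩
  · intro x
    by_cases h : x = 0 <;> simp [h]
  · rintro ⟨⟨g, l'⟩ | l', hc⟩
    · simp [ell] at hc
      subst hc
      simp [g.2]
    · simp [ell] at hc
      subst hc
      simp

lemma FmatA_eq (B : F → Fin n2 → Fin m2 → F) (p : F × Fin n2) (c : Col F m2) :
    FmatA B p c = (cf c).1 * p.1 + (cf c).2 * B p.1 p.2 (ell c) := by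
  rcases p with ⟨i, j⟩
  rcases c with ⟨g, l⟩ | l <;> simp [FmatA, cf, ell]

lemma cond_iff (B : F → Fin n2 → Fin m2 → F) (i : F) (j : Fin n2) (c : Col F m2) (v : F) :
    FmatA B (i, j) c = v ↔ B i j (ell c) = w c v i := by
  rw [FmatA_eq]
  exact solve_lin (cf2_ne c) _ _ _

lemma hC3 (hm2 : 3 ≤ m2) : ∃ x y z : Fin m2, x ≠ y ∧ x ≠ z ∧ y ≠ z :=
  ⟨⟨0, by omega⟩, ⟨1, by omega⟩, ⟨2, by omega⟩,
   by simp [Fin.ext_iff], by simp [Fin.ext_iff], by simp [Fin.ext_iff]⟩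

variable (B : F → Fin n2 → Fin m2 → F)

lemma count2 (hn2 : 0 < n2) (hm2 : 3 ≤ m2) (hB : ∀ i, IsOA (B i) 3)
    {c1 c2 : Col F m2} (h12 : c1 ≠ c2) (v1 v2 : F) :
    (univ.filter fun p : F × Fin n2 => FmatA B p c1 = v1 ∧ FmatA B p c2 = v2).card
      * Fintype.card F ^ 2 = Fintype.card F * n2 := by
  have hF : 0 < Fintype.card F := Fintype.card_pos
  rw [card_prod_fiber]
  have hrw : ∀ i : F,
      (univ.filter fun j : Fin n2 => FmatA B (i, j) c1 = v1 ∧ FmatA B (i, j) c2 = v2)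
      = univ.filter fun j => B i j (ell c1) = w c1 v1 i ∧ B i j (ell c2) = w c2 v2 i := by
    intro i
    apply Finset.filter_congr
    intro j _
    rw [cond_iff, cond_iff]
  by_cases he : ell c1 = ell c2
  · obtain ⟨i0, hi0⟩ := unique_i h12 he v1 v2
    rw [Finset.sum_eq_single i0 ?_ (by simp)]
    · have hw : w c1 v1 i0 = w c2 v2 i0 := (hi0 i0).mpr rfl
      have hone : (univ.filter fun j : Fin n2 =>
          FmatA B (i0, j) c1 = v1 ∧ FmatA B (i0, j) c2 = v2)
          = univ.filter fun j => B i0 j (ell c1) = w c1 v1 i0 := by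
        rw [hrw]
        apply Finset.filter_congr
        intro j _
        rw [← he, ← hw]
        tauto
      rw [hone]
      have := oa3_to_1 hF (hB i0) (hC3 hm2) (ell c1) (w c1 v1 i0)
      rw [Fintype.card_fin] at this
      calc (univ.filter fun j => B i0 j (ell c1) = w c1 v1 i0).card * Fintype.card F ^ 2
          = (univ.filter fun j => B i0 j (ell c1) = w c1 v1 i0).card * Fintype.card F
            * Fintype.card F := by ring
        _ = n2 * Fintype.card F := by rw [this]
        _ = Fintype.card F * n2 := by ring
    · intro i _ hi
      rw [hrw]
      rw [Finset.card_eq_zero, Finset.filter_eq_empty_iff]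
      rintro j - ⟨e1, e2⟩
      rw [← he] at e2
      exact hi ((hi0 i).mp (e1 ▸ e2 ▸ rfl))
  · have hterm : ∀ i : F,
        (univ.filter fun j : Fin n2 =>
          FmatA B (i, j) c1 = v1 ∧ FmatA B (i, j) c2 = v2).card * Fintype.card F ^ 2 = n2 := by
      intro i
      rw [hrw]
      have := oa3_to_2 hF (hB i) (hC3 hm2) he (w c1 v1 i) (w c2 v2 i)
      rwa [Fintype.card_fin] at this
    rw [Finset.sum_mul, Finset.sum_congr rfl (fun i _ => hterm i),
      Finset.sum_const, card_univ, smul_eq_mul]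

lemma count3_pair (hn2 : 0 < n2) (hm2 : 3 ≤ m2) (hB : ∀ i, IsOA (B i) 3)
    {c1 c2 c3 : Col F m2} (h12 : c1 ≠ c2)
    (he12 : ell c1 = ell c2) (he13 : ell c1 ≠ ell c3) (v1 v2 v3 : F) :
    (univ.filter fun p : F × Fin n2 =>
        FmatA B p c1 = v1 ∧ FmatA B p c2 = v2 ∧ FmatA B p c3 = v3).card
      * Fintype.card F ^ 3 = Fintype.card F * n2 := by
  have hF : 0 < Fintype.card F := Fintype.card_pos
  rw [card_prod_fiber]
  have hrw : ∀ i : F,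
      (univ.filter fun j : Fin n2 =>
        FmatA B (i, j) c1 = v1 ∧ FmatA B (i, j) c2 = v2 ∧ FmatA B (i, j) c3 = v3)
      = univ.filter fun j => B i j (ell c1) = w c1 v1 i ∧ B i j (ell c2) = w c2 v2 i
          ∧ B i j (ell c3) = w c3 v3 i := by
    intro i
    apply Finset.filter_congr
    intro j _
    rw [cond_iff, cond_iff, cond_iff]
  obtain ⟨i0, hi0⟩ := unique_i h12 he12 v1 v2
  rw [Finset.sum_eq_single i0 ?_ (by simp)]
  · have hw : w c1 v1 i0 = w c2 v2 i0 := (hi0 i0).mpr rfl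
    have hone : (univ.filter fun j : Fin n2 =>
        FmatA B (i0, j) c1 = v1 ∧ FmatA B (i0, j) c2 = v2 ∧ FmatA B (i0, j) c3 = v3)
        = univ.filter fun j => B i0 j (ell c1) = w c1 v1 i0 ∧ B i0 j (ell c3) = w c3 v3 i0 := by
      rw [hrw]
      apply Finset.filter_congr
      intro j _
      rw [← he12, ← hw]
      tauto
    rw [hone]
    have := oa3_to_2 hF (hB i0) (hC3 hm2) he13 (w c1 v1 i0) (w c3 v3 i0)
    rw [Fintype.card_fin] at this
    calc (univ.filter fun j => B i0 j (ell c1) = w c1 v1 i0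
            ∧ B i0 j (ell c3) = w c3 v3 i0).card * Fintype.card F ^ 3
        = (univ.filter fun j => B i0 j (ell c1) = w c1 v1 i0
            ∧ B i0 j (ell c3) = w c3 v3 i0).card * Fintype.card F ^ 2 * Fintype.card F := by
          ring
      _ = n2 * Fintype.card F := by rw [this]
      _ = Fintype.card F * n2 := by ring
  · intro i _ hi
    rw [hrw]
    rw [Finset.card_eq_zero, Finset.filter_eq_empty_iff]
    rintro j - ⟨e1, e2, e3⟩
    rw [← he12] at e2
    exact hi ((hi0 i).mp (e1 ▸ e2 ▸ rfl))

lemma count3_distinct (hn2 : 0 < n2) (hm2 : 3 ≤ m2) (hB : ∀ i, IsOA (B i) 3)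
    {c1 c2 c3 : Col F m2}
    (he12 : ell c1 ≠ ell c2) (he13 : ell c1 ≠ ell c3) (he23 : ell c2 ≠ ell c3)
    (v1 v2 v3 : F) :
    (univ.filter fun p : F × Fin n2 =>
        FmatA B p c1 = v1 ∧ FmatA B p c2 = v2 ∧ FmatA B p c3 = v3).card
      * Fintype.card F ^ 3 = Fintype.card F * n2 := by
  rw [card_prod_fiber]
  have hterm : ∀ i : F,
      (univ.filter fun j : Fin n2 =>
        FmatA B (i, j) c1 = v1 ∧ FmatA B (i, j) c2 = v2 ∧ FmatA B (i, j) c3 = v3).card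
        * Fintype.card F ^ 3 = n2 := by
    intro i
    have hrw : (univ.filter fun j : Fin n2 =>
        FmatA B (i, j) c1 = v1 ∧ FmatA B (i, j) c2 = v2 ∧ FmatA B (i, j) c3 = v3)
        = univ.filter fun j => B i j (ell c1) = w c1 v1 i ∧ B i j (ell c2) = w c2 v2 i
            ∧ B i j (ell c3) = w c3 v3 i := by
      apply Finset.filter_congr
      intro j _
      rw [cond_iff, cond_iff, cond_iff]
    rw [hrw]
    have := oa3 (hB i) he12 he13 he23 (w c1 v1 i) (w c2 v2 i) (w c3 v3 i)
    rwa [Fintype.card_fin] at this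
  rw [Finset.sum_mul, Finset.sum_congr rfl (fun i _ => hterm i),
    Finset.sum_const, card_univ, smul_eq_mul]

lemma count3_main (hn2 : 0 < n2) (hm2 : 3 ≤ m2) (hB : ∀ i, IsOA (B i) 3)
    {c1 c2 c3 : Col F m2} (h12 : c1 ≠ c2) (h13 : c1 ≠ c3) (h23 : c2 ≠ c3)
    (hne : ¬(ell c1 = ell c2 ∧ ell c1 = ell c3)) (v1 v2 v3 : F) :
    (univ.filter fun p : F × Fin n2 =>
        FmatA B p c1 = v1 ∧ FmatA B p c2 = v2 ∧ FmatA B p c3 = v3).card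
      * Fintype.card F ^ 3 = Fintype.card F * n2 := by
  by_cases e12 : ell c1 = ell c2
  · have e13 : ell c1 ≠ ell c3 := fun h => hne ⟨e12, h⟩
    exact count3_pair B hn2 hm2 hB h12 e12 e13 v1 v2 v3
  by_cases e13 : ell c1 = ell c3
  · have hswap : (univ.filter fun p : F × Fin n2 =>
        FmatA B p c1 = v1 ∧ FmatA B p c2 = v2 ∧ FmatA B p c3 = v3)
        = univ.filter fun p : F × Fin n2 =>
          FmatA B p c1 = v1 ∧ FmatA B p c3 = v3 ∧ FmatA B p c2 = v2 := by
      apply Finset.filter_congr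
      intro p _
      tauto
    rw [hswap]
    exact count3_pair B hn2 hm2 hB h13 e13 e12 v1 v3 v2
  by_cases e23 : ell c2 = ell c3
  · have hswap : (univ.filter fun p : F × Fin n2 =>
        FmatA B p c1 = v1 ∧ FmatA B p c2 = v2 ∧ FmatA B p c3 = v3)
        = univ.filter fun p : F × Fin n2 =>
          FmatA B p c2 = v2 ∧ FmatA B p c3 = v3 ∧ FmatA B p c1 = v1 := by
      apply Finset.filter_congr
      intro p _
      tauto
    rw [hswap]
    exact count3_pair B hn2 hm2 hB h23 e23 (fun h => e12 h.symm) v2 v3 v1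
  · exact count3_distinct B hn2 hm2 hB e12 e13 e23 v1 v2 v3

lemma tripleOrth_of (hn2 : 0 < n2) (hm2 : 3 ≤ m2) (hB : ∀ i, IsOA (B i) 3)
    {T : Finset (Col F m2)} (hT : T.card = 3)
    (hne : ¬ ∃ l, ∀ c ∈ T, ell c = l) : TripleOrth (FmatA B) T := by
  rintro c1 c2 c3 ⟨m1, m2', m3, d12, d13, d23⟩ v
  have hsub : ({c1, c2, c3} : Finset (Col F m2)) ⊆ T := by
    intro c hc
    simp only [mem_insert, mem_singleton] at hc
    rcases hc with rfl | rfl | rfl <;> assumption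
  have hTeq : T = {c1, c2, c3} :=
    (Finset.eq_of_subset_of_card_le hsub
      (by rw [hT, Finset.card_eq_three.mpr ⟨c1, c2, c3, d12, d13, d23, rfl⟩])).symm
  have hne3 : ¬(ell c1 = ell c2 ∧ ell c1 = ell c3) := by
    rintro ⟨ha, hb⟩
    refine hne ⟨ell c1, fun c hc => ?_⟩
    rw [hTeq] at hc
    simp only [mem_insert, mem_singleton] at hc
    rcases hc with rfl | rfl | rfl
    · rfl
    · exact ha.symm
    · exact hb.symm
  rw [Fintype.card_prod, Fintype.card_fin]
  exact count3_main B hn2 hm2 hB d12 d13 d23 hne3 (v 0) (v 1) (v 2)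

lemma not_tripleOrth (hn2 : 0 < n2) (hm2 : 3 ≤ m2) (hB : ∀ i, IsOA (B i) 3)
    {T : Finset (Col F m2)} (hT : T.card = 3)
    (l : Fin m2) (hl : ∀ c ∈ T, ell c = l) : ¬ TripleOrth (FmatA B) T := by
  have hF : 0 < Fintype.card F := Fintype.card_pos
  have hq2 : 2 ≤ Fintype.card F := Fintype.one_lt_card
  obtain ⟨c1, c2, c3, d12, d13, d23, rfl⟩ := Finset.card_eq_three.mp hT
  intro htri
  have key := htri c1 c2 c3 ⟨by simp, by simp, by simp, d12, d13, d23⟩ 0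
  rw [Fintype.card_prod, Fintype.card_fin] at key
  have hl1 : ell c1 = l := hl c1 (by simp)
  have hl2 : ell c2 = l := hl c2 (by simp)
  have hl3 : ell c3 = l := hl c3 (by simp)
  have he12 : ell c1 = ell c2 := hl1.trans hl2.symm
  obtain ⟨i0, hi0⟩ := unique_i d12 he12 (0 : F) (0 : F)
  have hw0 : ∀ c : Col F m2, w c 0 (0 : F) = 0 := by
    intro c
    simp [w]
  have hi00 : (0 : F) = i0 := (hi0 0).mp (by rw [hw0, hw0])
  -- compute the count
  have hcount : (univ.filter fun p : F × Fin n2 =>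
      FmatA B p c1 = (0 : Fin 3 → F) 0 ∧ FmatA B p c2 = (0 : Fin 3 → F) 1
        ∧ FmatA B p c3 = (0 : Fin 3 → F) 2).card
      = (univ.filter fun j : Fin n2 => B 0 j l = 0).card := by
    rw [card_prod_fiber]
    rw [Finset.sum_eq_single (0 : F) ?_ (by simp)]
    · congr 1
      apply Finset.filter_congr
      intro j _
      show FmatA B (0, j) c1 = 0 ∧ FmatA B (0, j) c2 = 0 ∧ FmatA B (0, j) c3 = 0 ↔ _
      rw [cond_iff, cond_iff, cond_iff, hw0, hw0, hw0, hl1, hl2, hl3]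
      tauto
    · intro i _ hi
      rw [Finset.card_eq_zero, Finset.filter_eq_empty_iff]
      rintro j -
      show ¬(FmatA B (i, j) c1 = 0 ∧ FmatA B (i, j) c2 = 0 ∧ FmatA B (i, j) c3 = 0)
      rintro ⟨e1, e2, e3⟩
      rw [cond_iff] at e1 e2
      rw [hl1] at e1
      rw [hl2] at e2
      exact hi (((hi0 i).mp (e1 ▸ e2 ▸ rfl)).trans hi00.symm)
  have hN := oa3_to_1 hF (hB 0) (hC3 hm2) l (0 : F)
  rw [Fintype.card_fin] at hN
  rw [hcount] at key
  -- key : N * q^3 = q * n2, hN : N * q = n2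
  set N := (univ.filter fun j : Fin n2 => B 0 j l = 0).card
  set q := Fintype.card F
  have h1 : q * n2 = n2 * q * q := by
    rw [← key, ← hN]
    ring
  nlinarith [mul_pos hn2 hF, h1, hq2, hn2]

lemma cast_choose3 {n : ℕ} (hn : 2 ≤ n) :
    ((n.choose 3 : ℕ) : ℚ) * 6 = (n : ℚ) * ((n : ℚ) - 1) * ((n : ℚ) - 2) := by
  have hdvd : Nat.factorial 3 ∣ n.descFactorial 3 := Nat.factorial_dvd_descFactorial n 3
  have h6 : n.choose 3 * 6 = n.descFactorial 3 := by
    rw [Nat.choose_eq_descFactorial_div_factorial]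
    rw [show (6 : ℕ) = Nat.factorial 3 from rfl, Nat.div_mul_cancel hdvd]
  have hd : n.descFactorial 3 = (n - 2) * ((n - 1) * (n * 1)) := rfl
  have hcast : ((n.choose 3 * 6 : ℕ) : ℚ) = (((n - 2) * ((n - 1) * (n * 1)) : ℕ) : ℚ) := by
    rw [h6, hd]
  push_cast [Nat.cast_sub (show 1 ≤ n by omega), Nat.cast_sub hn] at hcast
  push_cast
  linarith [hcast]

lemma bad_count (hn2 : 0 < n2) (hm2 : 3 ≤ m2) (hB : ∀ i, IsOA (B i) 3) :
    ((powersetCard 3 (univ : Finset (Col F m2))).filter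
        fun T => ¬ TripleOrth (FmatA B) T).card
      = m2 * (Fintype.card F).choose 3 := by
  have hset : (powersetCard 3 (univ : Finset (Col F m2))).filter
        (fun T => ¬ TripleOrth (FmatA B) T)
      = Finset.univ.biUnion
          (fun l : Fin m2 => powersetCard 3 (univ.filter fun c : Col F m2 => ell c = l)) := by
    ext T
    simp only [mem_filter, mem_biUnion, mem_powersetCard, mem_univ, true_and]
    constructor
    · rintro ⟨⟨-, hcard⟩, hnot⟩
      by_cases hl : ∃ l, ∀ c ∈ T, ell c = l
      · obtain ⟨l, hl⟩ := hl
        exact ⟨l, fun c hc => mem_filter.mpr ⟨mem_univ _, hl c hc⟩, hcard⟩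
      · exact absurd (tripleOrth_of B hn2 hm2 hB hcard hl) hnot
    · rintro ⟨l, hsub, hcard⟩
      exact ⟨⟨subset_univ T, hcard⟩,
        not_tripleOrth B hn2 hm2 hB hcard l (fun c hc => (mem_filter.mp (hsub hc)).2)⟩
  rw [hset, Finset.card_biUnion ?_]
  · rw [Finset.sum_congr rfl (fun l _ => by
      rw [Finset.card_powersetCard, card_ell_fiber])]
    rw [Finset.sum_const, card_univ, Fintype.card_fin, smul_eq_mul]
  · intro l _ l' _ hll
    rw [Function.onFun, Finset.disjoint_left]
    intro T hT hT'
    rw [mem_powersetCard] at hT hT'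
    obtain ⟨c, hc⟩ := Finset.card_pos.mp (by omega : 0 < T.card)
    exact hll (((mem_filter.mp (hT.1 hc)).2.symm).trans (mem_filter.mp (hT'.1 hc)).2)

end S14

open S14 in
/-- Proposition 3: `𝐅` is an `OA(n₂s, s·m₂, s, 2)`; exactly `m₂·C(s,3)` of
the 3-element sets of columns of `𝐅` fail to be 3-orthogonal; and consequently
`p(𝐅) = 1 − m₂·C(s,3)/C(s·m₂,3) = 1 − (s−1)(s−2)/((s·m₂−1)(s·m₂−2))`. -/
theorem statement14 {F : Type} [Field F] [Fintype F] [DecidableEq F]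
    {n2 m2 : ℕ} (hn2 : 0 < n2) (hm2 : 3 ≤ m2)
    (B : F → Fin n2 → Fin m2 → F) (hB : ∀ i, IsOA (B i) 3) :
    IsOA (FmatA B) 2 ∧
    Fintype.card (({g : F // g ≠ 0} × Fin m2) ⊕ Fin m2) = Fintype.card F * m2 ∧
    ((Finset.powersetCard 3
        (Finset.univ : Finset (({g : F // g ≠ 0} × Fin m2) ⊕ Fin m2))).filter
          fun T => ¬ TripleOrth (FmatA B) T).card
      = m2 * (Fintype.card F).choose 3 ∧
    (((Finset.powersetCard 3
        (Finset.univ : Finset (({g : F // g ≠ 0} × Fin m2) ⊕ Fin m2))).filter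
          fun T => TripleOrth (FmatA B) T).card : ℚ)
        / ((Fintype.card F * m2).choose 3 : ℚ)
      = 1 - (m2 * (Fintype.card F).choose 3 : ℚ) / ((Fintype.card F * m2).choose 3 : ℚ) ∧
    (((Finset.powersetCard 3
        (Finset.univ : Finset (({g : F // g ≠ 0} × Fin m2) ⊕ Fin m2))).filter
          fun T => TripleOrth (FmatA B) T).card : ℚ)
        / ((Fintype.card F * m2).choose 3 : ℚ)
      = 1 - ((Fintype.card F : ℚ) - 1) * ((Fintype.card F : ℚ) - 2)
          / (((Fintype.card F : ℚ) * m2 - 1) * ((Fintype.card F : ℚ) * m2 - 2)) := by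
  have hF : 0 < Fintype.card F := Fintype.card_pos
  have hq2 : 2 ≤ Fintype.card F := Fintype.one_lt_card
  have hcard2 : Fintype.card (({g : F // g ≠ 0} × Fin m2) ⊕ Fin m2) = Fintype.card F * m2 := by
    obtain ⟨k, hk⟩ : ∃ k, Fintype.card F = k + 1 := ⟨Fintype.card F - 1, by omega⟩
    have hsub : Fintype.card {g : F // g ≠ 0} = k := by
      rw [Fintype.card_subtype_compl (· = (0 : F)), Fintype.card_subtype_eq, hk]; omega
    simp only [Fintype.card_sum, Fintype.card_prod, Fintype.card_fin, hsub, hk]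
    ring
  have hOA : IsOA (FmatA B) 2 := by
    intro cols hinj v
    have h01 : cols 0 ≠ cols 1 := fun h => absurd (hinj h) (by decide)
    have hset : (univ.filter fun r : F × Fin n2 => ∀ j, FmatA B r (cols j) = v j)
        = univ.filter fun r => FmatA B r (cols 0) = v 0 ∧ FmatA B r (cols 1) = v 1 := by
      ext r
      simp only [mem_filter, mem_univ, true_and]
      constructor
      · intro hj; exact ⟨hj 0, hj 1⟩
      · rintro ⟨a, b⟩ j; fin_cases j <;> simpa
    rw [hset, Fintype.card_prod, Fintype.card_fin]
    exact count2 B hn2 hm2 hB h01 (v 0) (v 1)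
  have hbad := bad_count B hn2 hm2 hB
  have hsplit := Finset.card_filter_add_card_filter_not
    (s := powersetCard 3 (univ : Finset (({g : F // g ≠ 0} × Fin m2) ⊕ Fin m2)))
    (p := fun T => TripleOrth (FmatA B) T)
  have hPcard : (powersetCard 3
      (univ : Finset (({g : F // g ≠ 0} × Fin m2) ⊕ Fin m2))).card
      = (Fintype.card F * m2).choose 3 := by
    rw [Finset.card_powersetCard, card_univ, hcard2]
  have h6le : 6 ≤ Fintype.card F * m2 := le_trans (by norm_num) (Nat.mul_le_mul hq2 hm2)
  have htot : ((Fintype.card F * m2).choose 3 : ℚ) ≠ 0 := by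
    have := Nat.choose_pos (show 3 ≤ Fintype.card F * m2 by omega)
    exact_mod_cast this.ne'
  have hgood : (((powersetCard 3
      (univ : Finset (({g : F // g ≠ 0} × Fin m2) ⊕ Fin m2))).filter
        fun T => TripleOrth (FmatA B) T).card : ℚ)
      = ((Fintype.card F * m2).choose 3 : ℚ) - (m2 * (Fintype.card F).choose 3 : ℚ) := by
    rw [hbad, hPcard] at hsplit
    have := congrArg (fun x : ℕ => (x : ℚ)) hsplit
    push_cast at this
    linarith
  have claim4 : (((powersetCard 3
      (univ : Finset (({g : F // g ≠ 0} × Fin m2) ⊕ Fin m2))).filter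
        fun T => TripleOrth (FmatA B) T).card : ℚ)
        / ((Fintype.card F * m2).choose 3 : ℚ)
      = 1 - (m2 * (Fintype.card F).choose 3 : ℚ) / ((Fintype.card F * m2).choose 3 : ℚ) := by
    rw [hgood]
    field_simp
  have h6q : (6 : ℚ) ≤ (Fintype.card F : ℚ) * (m2 : ℚ) := by
    have : ((6 : ℕ) : ℚ) ≤ ((Fintype.card F * m2 : ℕ) : ℚ) := by exact_mod_cast h6le
    push_cast at this
    linarith
  have hd1 : ((Fintype.card F : ℚ) * m2 - 1) ≠ 0 := by intro h; nlinarith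
  have hd2 : ((Fintype.card F : ℚ) * m2 - 2) ≠ 0 := by intro h; nlinarith
  have heq : (m2 * (Fintype.card F).choose 3 : ℚ) / ((Fintype.card F * m2).choose 3 : ℚ)
      = ((Fintype.card F : ℚ) - 1) * ((Fintype.card F : ℚ) - 2)
          / (((Fintype.card F : ℚ) * m2 - 1) * ((Fintype.card F : ℚ) * m2 - 2)) := by
    have h1 := cast_choose3 hq2
    have h2 := cast_choose3 (show 2 ≤ Fintype.card F * m2 by omega)
    push_cast at h2
    rw [div_eq_div_iff htot (mul_ne_zero hd1 hd2)]
    linear_combination ((m2 : ℚ) * (((Fintype.card F : ℚ) * m2 - 1)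
        * ((Fintype.card F : ℚ) * m2 - 2)) / 6) * h1
      - (((Fintype.card F : ℚ) - 1) * ((Fintype.card F : ℚ) - 2) / 6) * h2
  exact ⟨hOA, hcard2, hbad, claim4, claim4.trans (by rw [heq])⟩
end

section
/- Let s be a prime power. Let A be an OA(s^2, 2, s, 2), let B_i be an OA(n2, m2, s, 3) for i = 1,…,s^2, and let F = [D_1, …, D_s] be the array E of the construction with its last two columns removed (i.e., with D_{s+1} removed). Then F is an OA(n2·s^2, (2s−1)·m2, s, 2), the number of 3-element subsets of columns of F that fail to be 3-orthogonal is exactly 2·m2·C(s, 3), and consequently p(F) = 1 − 2·m2·C(s,3)/C((2s−1)·m2, 3) = 1 − 2s(s−1)(s−2)/((2s−1)(γ−1)(γ−2)), where γ = (2s−1)·m2. -/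
open Finset
set_option linter.unusedSectionVars false
set_option linter.unusedVariables false
set_option linter.unnecessarySimpa false
set_option linter.unreachableTactic false
set_option linter.unusedTactic false

/-- The array `𝐅 = [D₁, …, D_s]` of the construction (the array `E` with the `m₁` columns of
`D_{s+1}` removed).  Rows are indexed by `I × Fin n₂`; columns `Sum.inl (g, k, l)` with `g`
running over nonzero elements of `F` are the columns of `D₁, …, D_{s−1}`, with entries
`A i k + g·(Bᵢ) j l`, and columns `Sum.inr l` are those of `D_s = B`. -/
def FmatG {I F : Type} [Field F] {m1 n2 m2 : ℕ}
    (A : I → Fin m1 → F) (B : I → Fin n2 → Fin m2 → F) :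
    (I × Fin n2) → (({g : F // g ≠ 0} × Fin m1 × Fin m2) ⊕ Fin m2) → F
  | p, Sum.inl (g, k, l) => A p.1 k + g.1 * B p.1 p.2 l
  | p, Sum.inr l => B p.1 p.2 l


section Helpers
variable {α β γ : Type*} [Fintype α] [Fintype β] [Fintype γ] [DecidableEq γ]

lemma split_card (P : α → Prop) [DecidablePred P] (f : α → γ) :
    (univ.filter P).card = ∑ y : γ, (univ.filter fun a => P a ∧ f a = y).card := by
  rw [Finset.card_eq_sum_card_fiberwise (f := f) (t := univ) (fun x _ => mem_univ _)]
  simp [Finset.filter_filter]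

lemma prod_card (P : α × β → Prop) [DecidablePred P] :
    (univ.filter P).card = ∑ a : α, (univ.filter fun b => P (a, b)).card := by
  classical
  rw [Finset.card_eq_sum_card_fiberwise (f := Prod.fst) (t := univ) (fun x _ => mem_univ _)]
  refine Finset.sum_congr rfl fun a _ => ?_
  refine Finset.card_bij' (fun x _ => x.2) (fun b _ => (a, b)) ?_ ?_ ?_ ?_
  · intro x hx
    simp only [mem_filter, mem_univ, true_and] at hx ⊢
    obtain ⟨h1, h2⟩ := hx
    rwa [show (a, x.2) = x from by rw [← h2]]
  · intro b hb
    simp only [mem_filter, mem_univ, true_and] at hb ⊢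
    exact ⟨hb, trivial⟩
  · rintro ⟨x1, x2⟩ hx
    simp only [mem_filter, mem_univ, true_and] at hx
    simp [hx.2]
  · intro b _; rfl

lemma filter_and_const (P : Prop) [Decidable P] (Q : β → Prop) [DecidablePred Q] :
    (univ.filter fun b => P ∧ Q b).card = if P then (univ.filter Q).card else 0 := by
  split_ifs with h
  · simp [h]
  · simp [h]

lemma sum_ite_card (C : α → Prop) [DecidablePred C] (n : ℕ) :
    (∑ a : α, if C a then n else 0) = (univ.filter C).card * n := by
  rw [Finset.sum_ite, Finset.sum_const, Finset.sum_const]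
  simp [mul_comm]

end Helpers

section FieldAlg
variable {F : Type} [Field F]

lemma addg {g a x v : F} (hg : g ≠ 0) : a + g * x = v ↔ x = g⁻¹ * (v - a) := by
  constructor <;> intro h <;> field_simp at h ⊢ <;> linear_combination h

end FieldAlg
section Afacts
variable {F : Type} [Field F] [Fintype F] [DecidableEq F]
variable (A : Fin (Fintype.card F ^ 2) → Fin 2 → F)

lemma ha2 (hA : IsOA A 2) (x y : F) :
    (univ.filter fun i => A i 0 = x ∧ A i 1 = y).card = 1 := by
  have h := hA ![0, 1] (by intro a b hab; fin_cases a <;> fin_cases b <;> simp_all) ![x, y]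
  have hset : (univ.filter fun r => ∀ j, A r (![0,1] j) = ![x,y] j)
      = univ.filter fun i => A i 0 = x ∧ A i 1 = y := by
    ext i
    simp only [mem_filter, mem_univ, true_and]
    constructor
    · intro h; exact ⟨h 0, h 1⟩
    · rintro ⟨h0, h1⟩ j; fin_cases j <;> simpa
  rw [hset, Fintype.card_fin] at h
  have hs : 0 < Fintype.card F := Fintype.card_pos
  exact Nat.eq_of_mul_eq_mul_right (pow_pos hs 2) (by rw [h, one_mul])

lemma ha1 (hA : IsOA A 2) (k : Fin 2) (x : F) :
    (univ.filter fun i => A i k = x).card = Fintype.card F := by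
  obtain rfl | rfl : k = 0 ∨ k = 1 := by omega
  · rw [split_card (fun i => A i 0 = x) (fun i => A i 1)]
    have : ∀ y : F, (univ.filter fun i => A i 0 = x ∧ A i 1 = y).card = 1 := fun y => ha2 A hA x y
    simp [this]
  · rw [split_card (fun i => A i 1 = x) (fun i => A i 0)]
    have : ∀ y : F, (univ.filter fun i => A i 1 = x ∧ A i 0 = y).card = 1 := by
      intro y
      rw [show (univ.filter fun i => A i 1 = x ∧ A i 0 = y)
          = univ.filter fun i => A i 0 = y ∧ A i 1 = x from by ext i; simp only [mem_filter]; tauto]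
      exact ha2 A hA y x
    simp [this]
end Afacts
section BalA
variable {F : Type} [Field F] [Fintype F] [DecidableEq F]
variable (A : Fin (Fintype.card F ^ 2) → Fin 2 → F)

lemma balA (hA : IsOA A 2) (u w c : F) (h : u ≠ 0 ∨ w ≠ 0) :
    (univ.filter fun i => u * A i 0 + w * A i 1 = c).card = Fintype.card F := by
  by_cases hw : w = 0
  · have hu : u ≠ 0 := by tauto
    subst hw
    rw [show (univ.filter fun i => u * A i 0 + 0 * A i 1 = c)
        = univ.filter fun i => A i 0 = u⁻¹ * c from by
      ext i; simp only [mem_filter, mem_univ, true_and, zero_mul, add_zero]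
      constructor <;> intro h' <;> field_simp at h' ⊢ <;> linear_combination h']
    exact ha1 A hA 0 _
  · rw [split_card _ (fun i => A i 0)]
    have key : ∀ y : F, (univ.filter fun i => (u * A i 0 + w * A i 1 = c) ∧ A i 0 = y)
        = univ.filter fun i => A i 0 = y ∧ A i 1 = w⁻¹ * (c - u * y) := by
      intro y
      ext i; simp only [mem_filter, mem_univ, true_and]
      constructor
      · rintro ⟨h1, h2⟩
        subst h2
        exact ⟨rfl, by field_simp; linear_combination h1⟩
      · rintro ⟨h1, h2⟩
        subst h1
        refine ⟨by rw [h2]; field_simp; ring, rfl⟩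
    have : ∀ y : F, (univ.filter fun i => (u * A i 0 + w * A i 1 = c) ∧ A i 0 = y).card = 1 := by
      intro y; rw [key y]; exact ha2 A hA _ _
    simp [this]

lemma balA2 (hA : IsOA A 2) (u1 w1 c1 u2 w2 c2 : F) (hd : u1 * w2 - u2 * w1 ≠ 0) :
    (univ.filter fun i =>
      (u1 * A i 0 + w1 * A i 1 = c1) ∧ (u2 * A i 0 + w2 * A i 1 = c2)).card = 1 := by
  have key : ∀ a0 a1 : F,
      ((u1 * a0 + w1 * a1 = c1) ∧ (u2 * a0 + w2 * a1 = c2)) ↔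
      (a0 = (u1*w2 - u2*w1)⁻¹ * (c1*w2 - c2*w1) ∧ a1 = (u1*w2 - u2*w1)⁻¹ * (u1*c2 - u2*c1)) := by
    intro a0 a1
    constructor
    · rintro ⟨e1, e2⟩
      constructor
      · field_simp
        linear_combination w2 * e1 - w1 * e2
      · field_simp
        linear_combination u1 * e2 - u2 * e1
    · rintro ⟨e1, e2⟩
      subst e1; subst e2
      constructor <;> field_simp <;> ring
  rw [show (univ.filter fun i => (u1 * A i 0 + w1 * A i 1 = c1) ∧ (u2 * A i 0 + w2 * A i 1 = c2))
      = univ.filter fun i => A i 0 = (u1*w2 - u2*w1)⁻¹ * (c1*w2 - c2*w1) ∧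
          A i 1 = (u1*w2 - u2*w1)⁻¹ * (u1*c2 - u2*c1) from by
    ext i; simp only [mem_filter, mem_univ, true_and]; exact key _ _]
  exact ha2 A hA _ _
end BalA
section Bfacts
variable {F : Type} [Field F] [Fintype F] [DecidableEq F] {n2 m2 : ℕ}
variable (M : Fin n2 → Fin m2 → F)

lemma fin3_inj {γ : Type*} {a b c : γ} (h1 : a ≠ b) (h2 : a ≠ c) (h3 : b ≠ c) :
    Function.Injective ![a, b, c] := by
  intro i j hij
  fin_cases i <;> fin_cases j <;> simp_all

lemma hb3 (hM : IsOA M 3) {l1 l2 l3 : Fin m2} (h12 : l1 ≠ l2) (h13 : l1 ≠ l3) (h23 : l2 ≠ l3)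
    (b1 b2 b3 : F) :
    (univ.filter fun j => M j l1 = b1 ∧ M j l2 = b2 ∧ M j l3 = b3).card
      * Fintype.card F ^ 3 = n2 := by
  have h := hM ![l1, l2, l3] (fin3_inj h12 h13 h23) ![b1, b2, b3]
  rw [Fintype.card_fin] at h
  rw [show (univ.filter fun r => ∀ j, M r (![l1,l2,l3] j) = ![b1,b2,b3] j)
      = univ.filter fun j => M j l1 = b1 ∧ M j l2 = b2 ∧ M j l3 = b3 from by
    ext j
    simp only [mem_filter, mem_univ, true_and]
    constructor
    · intro hj; exact ⟨hj 0, hj 1, hj 2⟩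
    · rintro ⟨ha, hb, hc⟩ t; fin_cases t <;> simpa] at h
  exact h

lemma exists_third (hm2 : 3 ≤ m2) (l1 l2 : Fin m2) : ∃ l3, l3 ≠ l1 ∧ l3 ≠ l2 := by
  by_contra hc
  push_neg at hc
  have hsub : (univ : Finset (Fin m2)) ⊆ {l1, l2} := by
    intro x _
    simp only [mem_insert, mem_singleton]
    by_cases h : x = l1
    · exact Or.inl h
    · exact Or.inr (hc x h)
  have := Finset.card_le_card hsub
  have h2 : ({l1, l2} : Finset (Fin m2)).card ≤ 2 :=
    (Finset.card_insert_le _ _).trans (by simp)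
  simp only [Finset.card_univ, Fintype.card_fin] at this
  omega

lemma hb2 (hM : IsOA M 3) (hm2 : 3 ≤ m2) {l1 l2 : Fin m2} (h12 : l1 ≠ l2) (b1 b2 : F) :
    (univ.filter fun j => M j l1 = b1 ∧ M j l2 = b2).card * Fintype.card F ^ 2 = n2 := by
  obtain ⟨l3, h31, h32⟩ := exists_third hm2 l1 l2
  have hs : 0 < Fintype.card F := Fintype.card_pos
  have hsum : (univ.filter fun j => M j l1 = b1 ∧ M j l2 = b2).card * Fintype.card F ^ 3
      = Fintype.card F * n2 := by
    rw [split_card _ (fun j => M j l3), Finset.sum_mul]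
    have : ∀ b3 : F, (univ.filter fun j => (M j l1 = b1 ∧ M j l2 = b2) ∧ M j l3 = b3).card
        * Fintype.card F ^ 3 = n2 := by
      intro b3
      rw [show (univ.filter fun j => (M j l1 = b1 ∧ M j l2 = b2) ∧ M j l3 = b3)
          = univ.filter fun j => M j l1 = b1 ∧ M j l2 = b2 ∧ M j l3 = b3 from by
        ext j; simp only [mem_filter]; tauto]
      exact hb3 M hM h12 (Ne.symm h31) (Ne.symm h32) b1 b2 b3
    rw [Finset.sum_congr rfl (fun b3 _ => this b3), Finset.sum_const, card_univ, smul_eq_mul]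
  refine Nat.eq_of_mul_eq_mul_right hs ?_
  rw [mul_assoc, ← pow_succ, hsum, mul_comm]

lemma hb1 (hM : IsOA M 3) (hm2 : 3 ≤ m2) (l1 : Fin m2) (b1 : F) :
    (univ.filter fun j => M j l1 = b1).card * Fintype.card F = n2 := by
  obtain ⟨l2, h21, -⟩ := exists_third hm2 l1 l1
  have hs : 0 < Fintype.card F := Fintype.card_pos
  have hsum : (univ.filter fun j => M j l1 = b1).card * Fintype.card F ^ 2
      = Fintype.card F * n2 := by
    rw [split_card _ (fun j => M j l2), Finset.sum_mul]
    have : ∀ b2 : F, (univ.filter fun j => M j l1 = b1 ∧ M j l2 = b2).card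
        * Fintype.card F ^ 2 = n2 := fun b2 => hb2 M hM hm2 (Ne.symm h21) b1 b2
    rw [Finset.sum_congr rfl (fun b2 _ => this b2), Finset.sum_const, card_univ, smul_eq_mul]
  refine Nat.eq_of_mul_eq_mul_right hs ?_
  rw [mul_assoc, ← pow_two, hsum, mul_comm]
end Bfacts
section FieldAlg2
variable {F : Type} [Field F]

lemma alg2 {u1 w1 g1 v1 u2 w2 g2 v2 u3 w3 g3 v3 : F}
    (hg1 : g1 ≠ 0) (hg2 : g2 ≠ 0) (hg3 : g3 ≠ 0) (a0 a1 x1 x3 : F) :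
    ((u1*a0 + w1*a1 + g1*x1 = v1) ∧ (u2*a0 + w2*a1 + g2*x1 = v2) ∧
      (u3*a0 + w3*a1 + g3*x3 = v3))
    ↔ (((g2*u1 - g1*u2)*a0 + (g2*w1 - g1*w2)*a1 = g2*v1 - g1*v2) ∧
       ((x1 = g1⁻¹*(v1 - (u1*a0 + w1*a1))) ∧ (x3 = g3⁻¹*(v3 - (u3*a0 + w3*a1))))) := by
  constructor
  · rintro ⟨e1, e2, e3⟩
    exact ⟨by linear_combination g2*e1 - g1*e2, (addg hg1).mp e1, (addg hg3).mp e3⟩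
  · rintro ⟨hc, h1, h3⟩
    have e1 : u1*a0 + w1*a1 + g1*x1 = v1 := (addg hg1).mpr h1
    have e3 : u3*a0 + w3*a1 + g3*x3 = v3 := (addg hg3).mpr h3
    refine ⟨e1, ?_, e3⟩
    have h : g1 * (u2*a0 + w2*a1 + g2*x1) = g1 * v2 := by linear_combination g2*e1 - hc
    exact mul_left_cancel₀ hg1 h

lemma alg1 {u1 w1 g1 v1 u2 w2 g2 v2 u3 w3 g3 v3 : F}
    (hg1 : g1 ≠ 0) (hg2 : g2 ≠ 0) (hg3 : g3 ≠ 0) (a0 a1 x : F) :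
    ((u1*a0 + w1*a1 + g1*x = v1) ∧ (u2*a0 + w2*a1 + g2*x = v2) ∧
      (u3*a0 + w3*a1 + g3*x = v3))
    ↔ ((((g2*u1 - g1*u2)*a0 + (g2*w1 - g1*w2)*a1 = g2*v1 - g1*v2) ∧
        ((g3*u1 - g1*u3)*a0 + (g3*w1 - g1*w3)*a1 = g3*v1 - g1*v3)) ∧
       (x = g1⁻¹*(v1 - (u1*a0 + w1*a1)))) := by
  constructor
  · rintro ⟨e1, e2, e3⟩
    exact ⟨⟨by linear_combination g2*e1 - g1*e2, by linear_combination g3*e1 - g1*e3⟩,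
      (addg hg1).mp e1⟩
  · rintro ⟨⟨hc2, hc3⟩, h1⟩
    have e1 : u1*a0 + w1*a1 + g1*x = v1 := (addg hg1).mpr h1
    refine ⟨e1, ?_, ?_⟩
    · have h : g1 * (u2*a0 + w2*a1 + g2*x) = g1 * v2 := by linear_combination g2*e1 - hc2
      exact mul_left_cancel₀ hg1 h
    · have h : g1 * (u3*a0 + w3*a1 + g3*x) = g1 * v3 := by linear_combination g3*e1 - hc3
      exact mul_left_cancel₀ hg1 h
end FieldAlg2

section Count
set_option linter.unusedSectionVars false
variable {F : Type} [Field F] [Fintype F] [DecidableEq F] {n2 m2 : ℕ}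
variable (A : Fin (Fintype.card F ^ 2) → Fin 2 → F)
variable (B : Fin (Fintype.card F ^ 2) → Fin n2 → Fin m2 → F)

lemma countA (hB : ∀ i, IsOA (B i) 3)
    {u1 w1 g1 u2 w2 g2 u3 w3 g3 : F} {l1 l2 l3 : Fin m2}
    (hg1 : g1 ≠ 0) (hg2 : g2 ≠ 0) (hg3 : g3 ≠ 0)
    (h12 : l1 ≠ l2) (h13 : l1 ≠ l3) (h23 : l2 ≠ l3) (v1 v2 v3 : F) :
    (univ.filter fun r : Fin (Fintype.card F ^ 2) × Fin n2 =>
      (u1 * A r.1 0 + w1 * A r.1 1 + g1 * B r.1 r.2 l1 = v1) ∧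
      (u2 * A r.1 0 + w2 * A r.1 1 + g2 * B r.1 r.2 l2 = v2) ∧
      (u3 * A r.1 0 + w3 * A r.1 1 + g3 * B r.1 r.2 l3 = v3)).card
      * Fintype.card F ^ 3 = Fintype.card F ^ 2 * n2 := by
  rw [prod_card, Finset.sum_mul]
  have key : ∀ i, (univ.filter fun j =>
      (u1 * A i 0 + w1 * A i 1 + g1 * B i j l1 = v1) ∧
      (u2 * A i 0 + w2 * A i 1 + g2 * B i j l2 = v2) ∧
      (u3 * A i 0 + w3 * A i 1 + g3 * B i j l3 = v3)).card * Fintype.card F ^ 3 = n2 := by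
    intro i
    rw [show (univ.filter fun j =>
        (u1 * A i 0 + w1 * A i 1 + g1 * B i j l1 = v1) ∧
        (u2 * A i 0 + w2 * A i 1 + g2 * B i j l2 = v2) ∧
        (u3 * A i 0 + w3 * A i 1 + g3 * B i j l3 = v3))
        = univ.filter fun j =>
          B i j l1 = g1⁻¹ * (v1 - (u1 * A i 0 + w1 * A i 1)) ∧
          B i j l2 = g2⁻¹ * (v2 - (u2 * A i 0 + w2 * A i 1)) ∧
          B i j l3 = g3⁻¹ * (v3 - (u3 * A i 0 + w3 * A i 1)) from by
      ext j; simp only [mem_filter, mem_univ, true_and]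
      rw [addg hg1, addg hg2, addg hg3]]
    exact hb3 (B i) (hB i) h12 h13 h23 _ _ _
  rw [Finset.sum_congr rfl fun i _ => key i, Finset.sum_const, card_univ, Fintype.card_fin,
    smul_eq_mul]

lemma countB (hA : IsOA A 2) (hB : ∀ i, IsOA (B i) 3) (hm2 : 3 ≤ m2)
    {u1 w1 g1 u2 w2 g2 u3 w3 g3 : F} {l1 l3 : Fin m2}
    (hg1 : g1 ≠ 0) (hg2 : g2 ≠ 0) (hg3 : g3 ≠ 0) (h13 : l1 ≠ l3)
    (hlin : g2*u1 - g1*u2 ≠ 0 ∨ g2*w1 - g1*w2 ≠ 0) (v1 v2 v3 : F) :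
    (univ.filter fun r : Fin (Fintype.card F ^ 2) × Fin n2 =>
      (u1 * A r.1 0 + w1 * A r.1 1 + g1 * B r.1 r.2 l1 = v1) ∧
      (u2 * A r.1 0 + w2 * A r.1 1 + g2 * B r.1 r.2 l1 = v2) ∧
      (u3 * A r.1 0 + w3 * A r.1 1 + g3 * B r.1 r.2 l3 = v3)).card
      * Fintype.card F ^ 3 = Fintype.card F ^ 2 * n2 := by
  rw [prod_card, Finset.sum_mul]
  have key : ∀ i, (univ.filter fun j =>
      (u1 * A i 0 + w1 * A i 1 + g1 * B i j l1 = v1) ∧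
      (u2 * A i 0 + w2 * A i 1 + g2 * B i j l1 = v2) ∧
      (u3 * A i 0 + w3 * A i 1 + g3 * B i j l3 = v3)).card * Fintype.card F ^ 3
      = (if (g2*u1 - g1*u2) * A i 0 + (g2*w1 - g1*w2) * A i 1 = g2*v1 - g1*v2
         then n2 else 0) * Fintype.card F := by
    intro i
    rw [show (univ.filter fun j =>
        (u1 * A i 0 + w1 * A i 1 + g1 * B i j l1 = v1) ∧
        (u2 * A i 0 + w2 * A i 1 + g2 * B i j l1 = v2) ∧
        (u3 * A i 0 + w3 * A i 1 + g3 * B i j l3 = v3))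
        = univ.filter fun j =>
          ((g2*u1 - g1*u2) * A i 0 + (g2*w1 - g1*w2) * A i 1 = g2*v1 - g1*v2) ∧
          (B i j l1 = g1⁻¹ * (v1 - (u1 * A i 0 + w1 * A i 1)) ∧
           B i j l3 = g3⁻¹ * (v3 - (u3 * A i 0 + w3 * A i 1))) from by
      ext j; simp only [mem_filter, mem_univ, true_and]
      exact alg2 hg1 hg2 hg3 _ _ _ _]
    rw [filter_and_const]
    split_ifs with hc
    · rw [pow_succ, ← mul_assoc,
        hb2 (B i) (hB i) hm2 h13 (g1⁻¹ * (v1 - (u1 * A i 0 + w1 * A i 1)))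
          (g3⁻¹ * (v3 - (u3 * A i 0 + w3 * A i 1)))]
    · simp
  rw [Finset.sum_congr rfl fun i _ => key i, ← Finset.sum_mul, sum_ite_card,
    balA A hA _ _ _ hlin]
  ring

lemma countC (hA : IsOA A 2) (hB : ∀ i, IsOA (B i) 3) (hm2 : 3 ≤ m2)
    {u1 w1 g1 u2 w2 g2 u3 w3 g3 : F} {l1 : Fin m2}
    (hg1 : g1 ≠ 0) (hg2 : g2 ≠ 0) (hg3 : g3 ≠ 0)
    (hdet : (g2*u1 - g1*u2) * (g3*w1 - g1*w3) - (g3*u1 - g1*u3) * (g2*w1 - g1*w2) ≠ 0)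
    (v1 v2 v3 : F) :
    (univ.filter fun r : Fin (Fintype.card F ^ 2) × Fin n2 =>
      (u1 * A r.1 0 + w1 * A r.1 1 + g1 * B r.1 r.2 l1 = v1) ∧
      (u2 * A r.1 0 + w2 * A r.1 1 + g2 * B r.1 r.2 l1 = v2) ∧
      (u3 * A r.1 0 + w3 * A r.1 1 + g3 * B r.1 r.2 l1 = v3)).card
      * Fintype.card F ^ 3 = Fintype.card F ^ 2 * n2 := by
  rw [prod_card, Finset.sum_mul]
  have key : ∀ i, (univ.filter fun j =>
      (u1 * A i 0 + w1 * A i 1 + g1 * B i j l1 = v1) ∧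
      (u2 * A i 0 + w2 * A i 1 + g2 * B i j l1 = v2) ∧
      (u3 * A i 0 + w3 * A i 1 + g3 * B i j l1 = v3)).card * Fintype.card F ^ 3
      = (if ((g2*u1 - g1*u2) * A i 0 + (g2*w1 - g1*w2) * A i 1 = g2*v1 - g1*v2) ∧
            ((g3*u1 - g1*u3) * A i 0 + (g3*w1 - g1*w3) * A i 1 = g3*v1 - g1*v3)
         then n2 else 0) * Fintype.card F ^ 2 := by
    intro i
    rw [show (univ.filter fun j =>
        (u1 * A i 0 + w1 * A i 1 + g1 * B i j l1 = v1) ∧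
        (u2 * A i 0 + w2 * A i 1 + g2 * B i j l1 = v2) ∧
        (u3 * A i 0 + w3 * A i 1 + g3 * B i j l1 = v3))
        = univ.filter fun j =>
          (((g2*u1 - g1*u2) * A i 0 + (g2*w1 - g1*w2) * A i 1 = g2*v1 - g1*v2) ∧
           ((g3*u1 - g1*u3) * A i 0 + (g3*w1 - g1*w3) * A i 1 = g3*v1 - g1*v3)) ∧
          (B i j l1 = g1⁻¹ * (v1 - (u1 * A i 0 + w1 * A i 1))) from by
      ext j; simp only [mem_filter, mem_univ, true_and]
      exact alg1 hg1 hg2 hg3 _ _ _]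
    rw [filter_and_const]
    split_ifs with hc
    · rw [show (3 : ℕ) = 1 + 2 from rfl, pow_add, ← mul_assoc, pow_one,
        hb1 (B i) (hB i) hm2 l1 (g1⁻¹ * (v1 - (u1 * A i 0 + w1 * A i 1)))]
    · simp
  rw [Finset.sum_congr rfl fun i _ => key i, ← Finset.sum_mul, sum_ite_card,
    balA2 A hA _ _ _ _ _ _ hdet]
  ring
end Count
section FieldAlg0
variable {F : Type} [Field F]
lemma alg0 {u1 w1 g1 v1 u2 w2 g2 v2 : F} (hg1 : g1 ≠ 0) (hg2 : g2 ≠ 0) (a0 a1 x : F) :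
    ((u1*a0 + w1*a1 + g1*x = v1) ∧ (u2*a0 + w2*a1 + g2*x = v2))
    ↔ (((g2*u1 - g1*u2)*a0 + (g2*w1 - g1*w2)*a1 = g2*v1 - g1*v2) ∧
       (x = g1⁻¹*(v1 - (u1*a0 + w1*a1)))) := by
  constructor
  · rintro ⟨e1, e2⟩
    exact ⟨by linear_combination g2*e1 - g1*e2, (addg hg1).mp e1⟩
  · rintro ⟨hc, h1⟩
    have e1 : u1*a0 + w1*a1 + g1*x = v1 := (addg hg1).mpr h1
    refine ⟨e1, ?_⟩
    have h : g1 * (u2*a0 + w2*a1 + g2*x) = g1 * v2 := by linear_combination g2*e1 - hc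
    exact mul_left_cancel₀ hg1 h
end FieldAlg0

section Count2
set_option linter.unusedSectionVars false
variable {F : Type} [Field F] [Fintype F] [DecidableEq F] {n2 m2 : ℕ}
variable (A : Fin (Fintype.card F ^ 2) → Fin 2 → F)
variable (B : Fin (Fintype.card F ^ 2) → Fin n2 → Fin m2 → F)

lemma count2A (hB : ∀ i, IsOA (B i) 3) (hm2 : 3 ≤ m2)
    {u1 w1 g1 u2 w2 g2 : F} {l1 l2 : Fin m2}
    (hg1 : g1 ≠ 0) (hg2 : g2 ≠ 0) (h12 : l1 ≠ l2) (v1 v2 : F) :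
    (univ.filter fun r : Fin (Fintype.card F ^ 2) × Fin n2 =>
      (u1 * A r.1 0 + w1 * A r.1 1 + g1 * B r.1 r.2 l1 = v1) ∧
      (u2 * A r.1 0 + w2 * A r.1 1 + g2 * B r.1 r.2 l2 = v2)).card
      * Fintype.card F ^ 2 = Fintype.card F ^ 2 * n2 := by
  rw [prod_card, Finset.sum_mul]
  have key : ∀ i, (univ.filter fun j =>
      (u1 * A i 0 + w1 * A i 1 + g1 * B i j l1 = v1) ∧
      (u2 * A i 0 + w2 * A i 1 + g2 * B i j l2 = v2)).card * Fintype.card F ^ 2 = n2 := by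
    intro i
    rw [show (univ.filter fun j =>
        (u1 * A i 0 + w1 * A i 1 + g1 * B i j l1 = v1) ∧
        (u2 * A i 0 + w2 * A i 1 + g2 * B i j l2 = v2))
        = univ.filter fun j =>
          B i j l1 = g1⁻¹ * (v1 - (u1 * A i 0 + w1 * A i 1)) ∧
          B i j l2 = g2⁻¹ * (v2 - (u2 * A i 0 + w2 * A i 1)) from by
      ext j; simp only [mem_filter, mem_univ, true_and]
      rw [addg hg1, addg hg2]]
    exact hb2 (B i) (hB i) hm2 h12 _ _
  rw [Finset.sum_congr rfl fun i _ => key i, Finset.sum_const, card_univ, Fintype.card_fin,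
    smul_eq_mul]

lemma count2B (hA : IsOA A 2) (hB : ∀ i, IsOA (B i) 3) (hm2 : 3 ≤ m2)
    {u1 w1 g1 u2 w2 g2 : F} {l1 : Fin m2}
    (hg1 : g1 ≠ 0) (hg2 : g2 ≠ 0)
    (hlin : g2*u1 - g1*u2 ≠ 0 ∨ g2*w1 - g1*w2 ≠ 0) (v1 v2 : F) :
    (univ.filter fun r : Fin (Fintype.card F ^ 2) × Fin n2 =>
      (u1 * A r.1 0 + w1 * A r.1 1 + g1 * B r.1 r.2 l1 = v1) ∧
      (u2 * A r.1 0 + w2 * A r.1 1 + g2 * B r.1 r.2 l1 = v2)).card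
      * Fintype.card F ^ 2 = Fintype.card F ^ 2 * n2 := by
  rw [prod_card, Finset.sum_mul]
  have key : ∀ i, (univ.filter fun j =>
      (u1 * A i 0 + w1 * A i 1 + g1 * B i j l1 = v1) ∧
      (u2 * A i 0 + w2 * A i 1 + g2 * B i j l1 = v2)).card * Fintype.card F ^ 2
      = (if (g2*u1 - g1*u2) * A i 0 + (g2*w1 - g1*w2) * A i 1 = g2*v1 - g1*v2
         then n2 else 0) * Fintype.card F := by
    intro i
    rw [show (univ.filter fun j =>
        (u1 * A i 0 + w1 * A i 1 + g1 * B i j l1 = v1) ∧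
        (u2 * A i 0 + w2 * A i 1 + g2 * B i j l1 = v2))
        = univ.filter fun j =>
          ((g2*u1 - g1*u2) * A i 0 + (g2*w1 - g1*w2) * A i 1 = g2*v1 - g1*v2) ∧
          (B i j l1 = g1⁻¹ * (v1 - (u1 * A i 0 + w1 * A i 1))) from by
      ext j; simp only [mem_filter, mem_univ, true_and]
      exact alg0 hg1 hg2 _ _ _]
    rw [filter_and_const]
    split_ifs with hc
    · rw [pow_two, ← mul_assoc, hb1 (B i) (hB i) hm2 l1 _]
    · simp
  rw [Finset.sum_congr rfl fun i _ => key i, ← Finset.sum_mul, sum_ite_card,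
    balA A hA _ _ _ hlin]
  ring
end Count2
section ColLevel
variable {F : Type} [Field F] {m2 : ℕ}

def cl : ({g : F // g ≠ 0} × Fin 2 × Fin m2) ⊕ Fin m2 → Fin m2 :=
  Sum.elim (fun x => x.2.2) id
def cg : ({g : F // g ≠ 0} × Fin 2 × Fin m2) ⊕ Fin m2 → F :=
  Sum.elim (fun x => x.1.1) (fun _ => 1)
def cu : ({g : F // g ≠ 0} × Fin 2 × Fin m2) ⊕ Fin m2 → F :=
  Sum.elim (fun x => if x.2.1 = 0 then 1 else 0) (fun _ => 0)
def cw : ({g : F // g ≠ 0} × Fin 2 × Fin m2) ⊕ Fin m2 → F :=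
  Sum.elim (fun x => if x.2.1 = 1 then 1 else 0) (fun _ => 0)

lemma cg_ne (c : ({g : F // g ≠ 0} × Fin 2 × Fin m2) ⊕ Fin m2) : cg c ≠ 0 := by
  rcases c with ⟨g, k, l⟩ | l
  · exact g.2
  · exact one_ne_zero

lemma entry {I : Type} {n2 : ℕ} (A : I → Fin 2 → F) (B : I → Fin n2 → Fin m2 → F)
    (r : I × Fin n2) (c : ({g : F // g ≠ 0} × Fin 2 × Fin m2) ⊕ Fin m2) :
    FmatG A B r c = cu c * A r.1 0 + cw c * A r.1 1 + cg c * B r.1 r.2 (cl c) := by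
  rcases c with ⟨g, k, l⟩ | l
  · obtain rfl | rfl : k = 0 ∨ k = 1 := by omega
    · simp [FmatG, cu, cw, cg, cl]
    · simp [FmatG, cu, cw, cg, cl]
  · simp [FmatG, cu, cw, cg, cl]

lemma pat (c : ({g : F // g ≠ 0} × Fin 2 × Fin m2) ⊕ Fin m2) :
    (cu c = 1 ∧ cw c = 0) ∨ (cu c = 0 ∧ cw c = 1) ∨ (cu c = 0 ∧ cw c = 0 ∧ cg c = 1) := by
  rcases c with ⟨g, k, l⟩ | l
  · obtain rfl | rfl : k = 0 ∨ k = 1 := by omega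
    · exact Or.inl ⟨by simp [cu], by simp [cw]⟩
    · exact Or.inr (Or.inl ⟨by simp [cu], by simp [cw]⟩)
  · exact Or.inr (Or.inr ⟨rfl, rfl, rfl⟩)

lemma col_ext {c c' : ({g : F // g ≠ 0} × Fin 2 × Fin m2) ⊕ Fin m2}
    (hl : cl c = cl c') (hu : cu c = cu c') (hw : cw c = cw c') (hg : cg c = cg c') :
    c = c' := by
  rcases c with ⟨g, k, l⟩ | l <;> rcases c' with ⟨g', k', l'⟩ | l'
  · rcases (show k = 0 ∨ k = 1 by omega) with rfl | rfl <;>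
      rcases (show k' = 0 ∨ k' = 1 by omega) with rfl | rfl <;>
      simp [cu, cw, cg, cl] at hl hu hw hg ⊢ <;>
      first
        | exact ⟨Subtype.ext hg, hl⟩
        | exact absurd hu one_ne_zero
        | exact absurd hu.symm one_ne_zero
        | exact absurd hw one_ne_zero
        | exact absurd hw.symm one_ne_zero
  · obtain rfl | rfl : k = 0 ∨ k = 1 := by omega
    · have h10 : (1 : F) = 0 := by simpa [cu] using hu
      exact absurd h10 one_ne_zero
    · have h10 : (1 : F) = 0 := by simpa [cw] using hw
      exact absurd h10 one_ne_zero
  · obtain rfl | rfl : k' = 0 ∨ k' = 1 := by omega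
    · have h10 : (1 : F) = 0 := by simpa [cu] using hu.symm
      exact absurd h10 one_ne_zero
    · have h10 : (1 : F) = 0 := by simpa [cw] using hw.symm
      exact absurd h10 one_ne_zero
  · simpa [cl] using hl

lemma hlin_col {c c' : ({g : F // g ≠ 0} × Fin 2 × Fin m2) ⊕ Fin m2}
    (hne : c ≠ c') (hl : cl c = cl c') :
    cg c' * cu c - cg c * cu c' ≠ 0 ∨ cg c' * cw c - cg c * cw c' ≠ 0 := by
  have hgc := cg_ne c
  have hgc' := cg_ne c'
  rcases pat c with ⟨hu, hw⟩ | ⟨hu, hw⟩ | ⟨hu, hw, hg1⟩ <;>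
    rcases pat c' with ⟨hu', hw'⟩ | ⟨hu', hw'⟩ | ⟨hu', hw', hg1'⟩
  · left
    rw [hu, hu', mul_one, mul_one]
    intro h
    exact hne (col_ext hl (hu.trans hu'.symm) (hw.trans hw'.symm) (sub_eq_zero.mp h).symm)
  · left; rw [hu, hu', mul_one, mul_zero, sub_zero]; exact hgc'
  · left; rw [hu, hu', mul_one, mul_zero, sub_zero]; exact hgc'
  · right; rw [hw, hw', mul_one, mul_zero, sub_zero]; exact hgc'
  · right
    rw [hw, hw', mul_one, mul_one]
    intro h
    exact hne (col_ext hl (hu.trans hu'.symm) (hw.trans hw'.symm) (sub_eq_zero.mp h).symm)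
  · right; rw [hw, hw', mul_one, mul_zero, sub_zero]; exact hgc'
  · left; rw [hu, hu', mul_zero, mul_one, zero_sub, neg_ne_zero]; exact hgc
  · right; rw [hw, hw', mul_zero, mul_one, zero_sub, neg_ne_zero]; exact hgc
  · exact absurd (col_ext hl (hu.trans hu'.symm) (hw.trans hw'.symm) (hg1.trans hg1'.symm)) hne
end ColLevel
section Main
set_option linter.unusedSectionVars false
variable {F : Type} [Field F] [Fintype F] [DecidableEq F] {n2 m2 : ℕ}
variable (A : Fin (Fintype.card F ^ 2) → Fin 2 → F)
variable (B : Fin (Fintype.card F ^ 2) → Fin n2 → Fin m2 → F)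

def cnt (c1 c2 c3 : ({g : F // g ≠ 0} × Fin 2 × Fin m2) ⊕ Fin m2) (x y z : F) : ℕ :=
  (univ.filter fun r : Fin (Fintype.card F ^ 2) × Fin n2 =>
    FmatG A B r c1 = x ∧ FmatG A B r c2 = y ∧ FmatG A B r c3 = z).card

lemma cnt_swap12 (c1 c2 c3 : ({g : F // g ≠ 0} × Fin 2 × Fin m2) ⊕ Fin m2) (x y z : F) :
    cnt A B c1 c2 c3 x y z = cnt A B c2 c1 c3 y x z := by
  unfold cnt; congr 1; ext r; simp only [mem_filter, mem_univ, true_and]; tauto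

lemma cnt_swap23 (c1 c2 c3 : ({g : F // g ≠ 0} × Fin 2 × Fin m2) ⊕ Fin m2) (x y z : F) :
    cnt A B c1 c2 c3 x y z = cnt A B c1 c3 c2 x z y := by
  unfold cnt; congr 1; ext r; simp only [mem_filter, mem_univ, true_and]; tauto

lemma cnt_swap13 (c1 c2 c3 : ({g : F // g ≠ 0} × Fin 2 × Fin m2) ⊕ Fin m2) (x y z : F) :
    cnt A B c1 c2 c3 x y z = cnt A B c3 c2 c1 z y x := by
  unfold cnt; congr 1; ext r; simp only [mem_filter, mem_univ, true_and]; tauto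

lemma cnt_rot (c1 c2 c3 : ({g : F // g ≠ 0} × Fin 2 × Fin m2) ⊕ Fin m2) (x y z : F) :
    cnt A B c1 c2 c3 x y z = cnt A B c2 c3 c1 y z x := by
  unfold cnt; congr 1; ext r; simp only [mem_filter, mem_univ, true_and]; tauto

lemma cnt_rot2 (c1 c2 c3 : ({g : F // g ≠ 0} × Fin 2 × Fin m2) ⊕ Fin m2) (x y z : F) :
    cnt A B c1 c2 c3 x y z = cnt A B c3 c1 c2 z x y := by
  unfold cnt; congr 1; ext r; simp only [mem_filter, mem_univ, true_and]; tauto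

lemma cnt_eq_filter (c1 c2 c3 : ({g : F // g ≠ 0} × Fin 2 × Fin m2) ⊕ Fin m2) (x y z : F) :
    cnt A B c1 c2 c3 x y z = (univ.filter fun r : Fin (Fintype.card F ^ 2) × Fin n2 =>
      (cu c1 * A r.1 0 + cw c1 * A r.1 1 + cg c1 * B r.1 r.2 (cl c1) = x) ∧
      (cu c2 * A r.1 0 + cw c2 * A r.1 1 + cg c2 * B r.1 r.2 (cl c2) = y) ∧
      (cu c3 * A r.1 0 + cw c3 * A r.1 1 + cg c3 * B r.1 r.2 (cl c3) = z)).card := by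
  unfold cnt; congr 1; ext r; simp only [mem_filter, mem_univ, true_and, entry]

theorem strength2 (hA : IsOA A 2) (hB : ∀ i, IsOA (B i) 3) (hm2 : 3 ≤ m2) :
    IsOA (FmatG A B) 2 := by
  intro cols hinj v
  have h01 : cols 0 ≠ cols 1 := fun h => absurd (hinj h) (by decide)
  rw [show (univ.filter fun r => ∀ j, FmatG A B r (cols j) = v j)
      = univ.filter fun r : Fin (Fintype.card F ^ 2) × Fin n2 =>
        (cu (cols 0) * A r.1 0 + cw (cols 0) * A r.1 1
          + cg (cols 0) * B r.1 r.2 (cl (cols 0)) = v 0) ∧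
        (cu (cols 1) * A r.1 0 + cw (cols 1) * A r.1 1
          + cg (cols 1) * B r.1 r.2 (cl (cols 1)) = v 1) from by
    ext r
    simp only [mem_filter, mem_univ, true_and, ← entry]
    constructor
    · intro h; exact ⟨h 0, h 1⟩
    · rintro ⟨h0, h1⟩ j
      obtain rfl | rfl : j = 0 ∨ j = 1 := by omega
      exacts [h0, h1]]
  rw [show Fintype.card (Fin (Fintype.card F ^ 2) × Fin n2) = Fintype.card F ^ 2 * n2 by simp]
  by_cases hl : cl (cols 0) = cl (cols 1)
  · rw [show cl (cols 0) = cl (cols 1) from hl]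
    exact count2B A B hA hB hm2 (cg_ne _) (cg_ne _) (hlin_col h01 hl) (v 0) (v 1)
  · exact count2A A B hB hm2 (cg_ne _) (cg_ne _) hl (v 0) (v 1)

lemma tripleCount_ne (hA : IsOA A 2) (hB : ∀ i, IsOA (B i) 3) (hm2 : 3 ≤ m2)
    {c1 c2 c3 : ({g : F // g ≠ 0} × Fin 2 × Fin m2) ⊕ Fin m2}
    (h12 : c1 ≠ c2) (h13 : c1 ≠ c3) (h23 : c2 ≠ c3)
    (hne : ¬(cl c1 = cl c2 ∧ cl c1 = cl c3)) (x y z : F) :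
    cnt A B c1 c2 c3 x y z * Fintype.card F ^ 3 = Fintype.card F ^ 2 * n2 := by
  by_cases e12 : cl c1 = cl c2
  · have e13 : cl c1 ≠ cl c3 := fun h => hne ⟨e12, h⟩
    have e23 : cl c2 ≠ cl c3 := fun h => hne ⟨e12, e12.trans h⟩
    rw [cnt_eq_filter, show cl c1 = cl c2 from e12]
    exact countB A B hA hB hm2 (cg_ne _) (cg_ne _) (cg_ne _) e23 (hlin_col h12 e12) x y z
  · by_cases e13 : cl c1 = cl c3
    · have e23 : cl c2 ≠ cl c3 := fun h => e12 (e13.trans h.symm)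
      rw [cnt_swap23, cnt_eq_filter, show cl c1 = cl c3 from e13]
      exact countB A B hA hB hm2 (cg_ne _) (cg_ne _) (cg_ne _)
        (show cl c3 ≠ cl c2 from fun h => e12 (e13.trans h)) (hlin_col h13 e13) x z y
    · by_cases e23 : cl c2 = cl c3
      · rw [cnt_rot, cnt_eq_filter, show cl c2 = cl c3 from e23]
        exact countB A B hA hB hm2 (cg_ne _) (cg_ne _) (cg_ne _)
          (show cl c3 ≠ cl c1 from fun h => e13 h.symm) (hlin_col h23 e23) y z x
      · rw [cnt_eq_filter]
        exact countA A B hB (cg_ne _) (cg_ne _) (cg_ne _) e12 e13 e23 x y z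

lemma tripleCount_eq (hA : IsOA A 2) (hB : ∀ i, IsOA (B i) 3) (hm2 : 3 ≤ m2)
    {c1 c2 c3 : ({g : F // g ≠ 0} × Fin 2 × Fin m2) ⊕ Fin m2}
    (h12 : c1 ≠ c2) (h13 : c1 ≠ c3) (h23 : c2 ≠ c3)
    (e12 : cl c1 = cl c2) (e13 : cl c1 = cl c3)
    (hq0 : cu c1 = 1 ∧ cw c1 = 0) (hq1 : cu c2 = 0 ∧ cw c2 = 1) (x y z : F) :
    cnt A B c1 c2 c3 x y z * Fintype.card F ^ 3 = Fintype.card F ^ 2 * n2 := by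
  rw [cnt_eq_filter, show cl c2 = cl c1 from e12.symm, show cl c3 = cl c1 from e13.symm]
  apply countC A B hA hB hm2 (cg_ne _) (cg_ne _) (cg_ne _)
  rcases pat c3 with ⟨hu3, hw3⟩ | ⟨hu3, hw3⟩ | ⟨hu3, hw3, -⟩
  · have hg13 : cg c1 ≠ cg c3 := fun h =>
      h13 (col_ext e13 (hq0.1.trans hu3.symm) (hq0.2.trans hw3.symm) h)
    rw [hq0.1, hq0.2, hq1.1, hq1.2, hu3, hw3]
    rw [show (cg c2 * 1 - cg c1 * 0) * (cg c3 * 0 - cg c1 * 0)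
        - (cg c3 * 1 - cg c1 * 1) * (cg c2 * 0 - cg c1 * 1)
        = cg c1 * (cg c3 - cg c1) from by ring]
    exact mul_ne_zero (cg_ne c1) (sub_ne_zero.mpr (fun h => hg13 h.symm))
  · have hg23 : cg c2 ≠ cg c3 := fun h =>
      h23 (col_ext (e12.symm.trans e13) (hq1.1.trans hu3.symm) (hq1.2.trans hw3.symm) h)
    rw [hq0.1, hq0.2, hq1.1, hq1.2, hu3, hw3]
    rw [show (cg c2 * 1 - cg c1 * 0) * (cg c3 * 0 - cg c1 * 1)
        - (cg c3 * 1 - cg c1 * 0) * (cg c2 * 0 - cg c1 * 1)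
        = cg c1 * (cg c3 - cg c2) from by ring]
    exact mul_ne_zero (cg_ne c1) (sub_ne_zero.mpr (fun h => hg23 h.symm))
  · rw [hq0.1, hq0.2, hq1.1, hq1.2, hu3, hw3]
    rw [show (cg c2 * 1 - cg c1 * 0) * (cg c3 * 0 - cg c1 * 0)
        - (cg c3 * 1 - cg c1 * 0) * (cg c2 * 0 - cg c1 * 1)
        = cg c1 * cg c3 from by ring]
    exact mul_ne_zero (cg_ne c1) (cg_ne c3)
end Main
section BadGood
set_option linter.unusedSectionVars false
variable {F : Type} [Field F] [Fintype F] [DecidableEq F] {n2 m2 : ℕ}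
variable (A : Fin (Fintype.card F ^ 2) → Fin 2 → F)
variable (B : Fin (Fintype.card F ^ 2) → Fin n2 → Fin m2 → F)

def eMap (k : Fin 2) (l : Fin m2) (g : F) : ({g : F // g ≠ 0} × Fin 2 × Fin m2) ⊕ Fin m2 :=
  if h : g = 0 then Sum.inr l else Sum.inl (⟨g, h⟩, k, l)

lemma eMap_inj (k : Fin 2) (l : Fin m2) : Function.Injective (eMap (F := F) k l) := by
  intro g g' h
  by_cases h1 : g = 0 <;> by_cases h2 : g' = 0
  · exact h1.trans h2.symm
  · rw [eMap, eMap, dif_pos h1, dif_neg h2] at h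
    exact absurd h (by simp)
  · rw [eMap, eMap, dif_neg h1, dif_pos h2] at h
    exact absurd h (by simp)
  · rw [eMap, eMap, dif_neg h1, dif_neg h2] at h
    simpa [cg] using congrArg cg h

lemma cl_eMap (k : Fin 2) (l : Fin m2) (g : F) : cl (eMap k l g) = l := by
  unfold eMap
  split_ifs <;> rfl

lemma repr1 (c : ({g : F // g ≠ 0} × Fin 2 × Fin m2) ⊕ Fin m2)
    (h : ¬(cu c = 1 ∧ cw c = 0)) : c = eMap 1 (cl c) (cw c * cg c) := by
  rcases pat c with hP | ⟨hu, hw⟩ | ⟨hu, hw, hg⟩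
  · exact absurd hP h
  · rw [hw, one_mul]
    rw [show eMap 1 (cl c) (cg c) = Sum.inl (⟨cg c, cg_ne c⟩, 1, cl c) from dif_neg (cg_ne c)]
    exact col_ext (by simp [cl]) (by rw [hu]; simp [cu]) (by rw [hw]; simp [cw]) (by simp [cg])
  · rw [hw, zero_mul]
    rw [show eMap (F := F) 1 (cl c) 0 = Sum.inr (cl c) from dif_pos rfl]
    exact col_ext (by simp [cl]) (by rw [hu]; simp [cu]) (by rw [hw]; simp [cw])
      (by rw [hg]; simp [cg])

lemma repr0 (c : ({g : F // g ≠ 0} × Fin 2 × Fin m2) ⊕ Fin m2)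
    (h : ¬(cu c = 0 ∧ cw c = 1)) : c = eMap 0 (cl c) (cu c * cg c) := by
  rcases pat c with ⟨hu, hw⟩ | hP | ⟨hu, hw, hg⟩
  · rw [hu, one_mul]
    rw [show eMap 0 (cl c) (cg c) = Sum.inl (⟨cg c, cg_ne c⟩, 0, cl c) from dif_neg (cg_ne c)]
    exact col_ext (by simp [cl]) (by rw [hu]; simp [cu]) (by rw [hw]; simp [cw]) (by simp [cg])
  · exact absurd hP h
  · rw [hu, zero_mul]
    rw [show eMap (F := F) 0 (cl c) 0 = Sum.inr (cl c) from dif_pos rfl]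
    exact col_ext (by simp [cl]) (by rw [hu]; simp [cu]) (by rw [hw]; simp [cw])
      (by rw [hg]; simp [cg])

theorem goodCount (hA : IsOA A 2) (hB : ∀ i, IsOA (B i) 3) (hm2 : 3 ≤ m2)
    {c1 c2 c3 : ({g : F // g ≠ 0} × Fin 2 × Fin m2) ⊕ Fin m2}
    (h12 : c1 ≠ c2) (h13 : c1 ≠ c3) (h23 : c2 ≠ c3)
    (hgood : ∀ (k : Fin 2) (l : Fin m2) (S : Finset F), S.card = 3 →
        ({c1, c2, c3} : Finset _) ≠ S.image (eMap k l)) (x y z : F) :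
    cnt A B c1 c2 c3 x y z * Fintype.card F ^ 3 = Fintype.card F ^ 2 * n2 := by
  by_cases hall : cl c1 = cl c2 ∧ cl c1 = cl c3
  case neg => exact tripleCount_ne A B hA hB hm2 h12 h13 h23 hall x y z
  obtain ⟨e12, e13⟩ := hall
  have hq0 : (cu c1 = 1 ∧ cw c1 = 0) ∨ (cu c2 = 1 ∧ cw c2 = 0) ∨ (cu c3 = 1 ∧ cw c3 = 0) := by
    by_contra hcon
    have n1 : ¬(cu c1 = 1 ∧ cw c1 = 0) := fun h => hcon (Or.inl h)
    have n2' : ¬(cu c2 = 1 ∧ cw c2 = 0) := fun h => hcon (Or.inr (Or.inl h))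
    have n3 : ¬(cu c3 = 1 ∧ cw c3 = 0) := fun h => hcon (Or.inr (Or.inr h))
    have r1 := repr1 c1 n1
    have r2 := repr1 c2 n2'
    have r3 := repr1 c3 n3
    rw [← e12] at r2
    rw [← e13] at r3
    have d12 : cw c1 * cg c1 ≠ cw c2 * cg c2 := fun h => h12 (by rw [r1, r2, h])
    have d13 : cw c1 * cg c1 ≠ cw c3 * cg c3 := fun h => h13 (by rw [r1, r3, h])
    have d23 : cw c2 * cg c2 ≠ cw c3 * cg c3 := fun h => h23 (by rw [r2, r3, h])
    refine hgood 1 (cl c1) {cw c1 * cg c1, cw c2 * cg c2, cw c3 * cg c3} ?_ ?_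
    · rw [Finset.card_insert_of_notMem (by simp [d12, d13]),
        Finset.card_insert_of_notMem (by simp [d23]), Finset.card_singleton]
    · rw [Finset.image_insert, Finset.image_insert, Finset.image_singleton, ← r1, ← r2, ← r3]
  have hq1 : (cu c1 = 0 ∧ cw c1 = 1) ∨ (cu c2 = 0 ∧ cw c2 = 1) ∨ (cu c3 = 0 ∧ cw c3 = 1) := by
    by_contra hcon
    have n1 : ¬(cu c1 = 0 ∧ cw c1 = 1) := fun h => hcon (Or.inl h)
    have n2' : ¬(cu c2 = 0 ∧ cw c2 = 1) := fun h => hcon (Or.inr (Or.inl h))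
    have n3 : ¬(cu c3 = 0 ∧ cw c3 = 1) := fun h => hcon (Or.inr (Or.inr h))
    have r1 := repr0 c1 n1
    have r2 := repr0 c2 n2'
    have r3 := repr0 c3 n3
    rw [← e12] at r2
    rw [← e13] at r3
    have d12 : cu c1 * cg c1 ≠ cu c2 * cg c2 := fun h => h12 (by rw [r1, r2, h])
    have d13 : cu c1 * cg c1 ≠ cu c3 * cg c3 := fun h => h13 (by rw [r1, r3, h])
    have d23 : cu c2 * cg c2 ≠ cu c3 * cg c3 := fun h => h23 (by rw [r2, r3, h])
    refine hgood 0 (cl c1) {cu c1 * cg c1, cu c2 * cg c2, cu c3 * cg c3} ?_ ?_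
    · rw [Finset.card_insert_of_notMem (by simp [d12, d13]),
        Finset.card_insert_of_notMem (by simp [d23]), Finset.card_singleton]
    · rw [Finset.image_insert, Finset.image_insert, Finset.image_singleton, ← r1, ← r2, ← r3]
  rcases hq0 with q | q | q <;> rcases hq1 with q' | q' | q'
  · exact absurd (q.1.symm.trans q'.1) one_ne_zero
  · exact tripleCount_eq A B hA hB hm2 h12 h13 h23 e12 e13 q q' x y z
  · rw [cnt_swap23]
    exact tripleCount_eq A B hA hB hm2 h13 h12 (fun h => h23 h.symm) e13 e12 q q' x z y
  · rw [cnt_swap12]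
    exact tripleCount_eq A B hA hB hm2 (fun h => h12 h.symm) h23 h13
      e12.symm (e12.symm.trans e13) q q' y x z
  · exact absurd (q.1.symm.trans q'.1) one_ne_zero
  · rw [cnt_rot]
    exact tripleCount_eq A B hA hB hm2 h23 (fun h => h12 h.symm) (fun h => h13 h.symm)
      (e12.symm.trans e13) e12.symm q q' y z x
  · rw [cnt_rot2]
    exact tripleCount_eq A B hA hB hm2 (fun h => h13 h.symm) (fun h => h23 h.symm) h12
      e13.symm (e13.symm.trans e12) q q' z x y
  · rw [cnt_swap13]
    exact tripleCount_eq A B hA hB hm2 (fun h => h23 h.symm) (fun h => h13 h.symm)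
      (fun h => h12 h.symm) (e13.symm.trans e12) e13.symm q q' z y x
  · exact absurd (q.1.symm.trans q'.1) one_ne_zero
end BadGood
section Bad
set_option linter.unusedSectionVars false
variable {F : Type} [Field F] [Fintype F] [DecidableEq F] {n2 m2 : ℕ}
variable (A : Fin (Fintype.card F ^ 2) → Fin 2 → F)
variable (B : Fin (Fintype.card F ^ 2) → Fin n2 → Fin m2 → F)

lemma badTriple (hn2 : 0 < n2) {k : Fin 2} {l : Fin m2} {S : Finset F} (hS : S.card = 3) :
    ¬ TripleOrth (FmatG A B) (S.image (eMap k l)) := by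
  obtain ⟨a, b, c, hab, hac, hbc, rfl⟩ := Finset.card_eq_three.mp hS
  obtain ⟨g1, g2, g3, hg1, hg2, h12, h13, h23, hm1, hm2', hm3⟩ :
      ∃ g1 g2 g3 : F, g1 ≠ 0 ∧ g2 ≠ 0 ∧ g1 ≠ g2 ∧ g1 ≠ g3 ∧ g2 ≠ g3 ∧
        g1 ∈ ({a, b, c} : Finset F) ∧ g2 ∈ ({a, b, c} : Finset F) ∧
        g3 ∈ ({a, b, c} : Finset F) := by
    by_cases ha : a = 0
    · exact ⟨b, c, a, fun h => hab (ha.trans h.symm), fun h => hac (ha.trans h.symm), hbc,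
        Ne.symm hab, Ne.symm hac, by simp, by simp, by simp⟩
    · by_cases hb : b = 0
      · exact ⟨a, c, b, ha, fun h => hbc (hb.trans h.symm), hac, hab, Ne.symm hbc,
          by simp, by simp, by simp⟩
      · exact ⟨a, b, c, ha, hb, hab, hac, hbc, by simp, by simp, by simp⟩
  intro hTO
  have hne12 : eMap k l g1 ≠ eMap k l g2 := fun h => h12 (eMap_inj k l h)
  have hne13 : eMap k l g1 ≠ eMap k l g3 := fun h => h13 (eMap_inj k l h)
  have hne23 : eMap k l g2 ≠ eMap k l g3 := fun h => h23 (eMap_inj k l h)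
  have h := hTO (eMap k l g1) (eMap k l g2) (eMap k l g3)
    ⟨Finset.mem_image_of_mem _ hm1, Finset.mem_image_of_mem _ hm2',
     Finset.mem_image_of_mem _ hm3, hne12, hne13, hne23⟩ ![0, 0, 1]
  have hzero : (univ.filter fun r : Fin (Fintype.card F ^ 2) × Fin n2 =>
      FmatG A B r (eMap k l g1) = ![(0:F), 0, 1] 0 ∧
      FmatG A B r (eMap k l g2) = ![(0:F), 0, 1] 1 ∧
      FmatG A B r (eMap k l g3) = ![(0:F), 0, 1] 2) = ∅ := by
    rw [Finset.filter_eq_empty_iff]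
    intro r _
    rintro ⟨ha1, ha2, ha3⟩
    rw [show eMap k l g1 = Sum.inl (⟨g1, hg1⟩, k, l) from dif_neg hg1] at ha1
    rw [show eMap k l g2 = Sum.inl (⟨g2, hg2⟩, k, l) from dif_neg hg2] at ha2
    simp only [FmatG, Matrix.cons_val_zero, Matrix.cons_val_one, Matrix.head_cons] at ha1 ha2
    have hBz : B r.1 r.2 l = 0 := by
      have hd : (g1 - g2) * B r.1 r.2 l = 0 := by linear_combination ha1 - ha2
      exact (mul_eq_zero.mp hd).resolve_left (sub_ne_zero.mpr h12)
    have hAz : A r.1 k = 0 := by linear_combination ha1 - g1 * hBz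
    by_cases hg3 : g3 = 0
    · rw [show eMap k l g3 = Sum.inr l from by rw [hg3]; exact dif_pos rfl] at ha3
      simp only [FmatG] at ha3
      rw [hBz] at ha3
      have h01 : (0 : F) = 1 := by simpa using ha3
      exact zero_ne_one h01
    · rw [show eMap k l g3 = Sum.inl (⟨g3, hg3⟩, k, l) from dif_neg hg3] at ha3
      simp only [FmatG] at ha3
      rw [hAz, hBz, mul_zero, add_zero] at ha3
      have h01 : (0 : F) = 1 := by simpa using ha3
      exact zero_ne_one h01
  rw [hzero] at h
  simp only [Finset.card_empty, zero_mul, Fintype.card_prod, Fintype.card_fin] at h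
  have hs : 0 < Fintype.card F := Fintype.card_pos
  have : 0 < Fintype.card F ^ 2 * n2 := Nat.mul_pos (pow_pos hs 2) hn2
  omega
end Bad
section Assemble
set_option linter.unusedSectionVars false
variable {F : Type} [Field F] [Fintype F] [DecidableEq F] {n2 m2 : ℕ}
variable (A : Fin (Fintype.card F ^ 2) → Fin 2 → F)
variable (B : Fin (Fintype.card F ^ 2) → Fin n2 → Fin m2 → F)

lemma nonzero_mem (S : Finset F) (hS : S.card = 3) : ∃ g ∈ S, g ≠ 0 := by
  by_contra hc
  push_neg at hc
  have hsub : S ⊆ {0} := fun g hg => by simp [hc g hg]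
  have := Finset.card_le_card hsub
  simp only [Finset.card_singleton] at this
  omega

theorem badCard (hn2 : 0 < n2) (hA : IsOA A 2) (hB : ∀ i, IsOA (B i) 3) (hm2 : 3 ≤ m2) :
    ((powersetCard 3 (univ : Finset (({g : F // g ≠ 0} × Fin 2 × Fin m2) ⊕ Fin m2))).filter
      fun T => ¬ TripleOrth (FmatG A B) T).card = 2 * m2 * (Fintype.card F).choose 3 := by
  rw [show 2 * m2 * (Fintype.card F).choose 3
      = ((univ : Finset (Fin 2 × Fin m2)) ×ˢ powersetCard 3 (univ : Finset F)).card from by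
    rw [Finset.card_product, Finset.card_powersetCard, Finset.card_univ, Finset.card_univ,
      Fintype.card_prod, Fintype.card_fin, Fintype.card_fin]]
  refine (Finset.card_bij
    (fun (p : (Fin 2 × Fin m2) × Finset F) _ => p.2.image (eMap p.1.1 p.1.2)) ?_ ?_ ?_).symm
  · rintro ⟨⟨k, l⟩, S⟩ hp
    simp only [Finset.mem_product, Finset.mem_powersetCard] at hp
    obtain ⟨-, -, hc⟩ := hp
    refine Finset.mem_filter.mpr ⟨Finset.mem_powersetCard.mpr ⟨Finset.subset_univ _, ?_⟩, ?_⟩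
    · rw [Finset.card_image_of_injective _ (eMap_inj k l), hc]
    · exact badTriple A B hn2 hc
  · rintro ⟨⟨k, l⟩, S⟩ hp ⟨⟨k', l'⟩, S'⟩ hp' h
    simp only [Finset.mem_product, Finset.mem_powersetCard] at hp hp'
    obtain ⟨-, -, hc⟩ := hp
    obtain ⟨-, -, hc'⟩ := hp'
    replace h : S.image (eMap k l) = S'.image (eMap k' l') := h
    obtain ⟨g0, hg0, hg0ne⟩ := nonzero_mem S hc
    have hmem : eMap k l g0 ∈ S'.image (eMap k' l') := by
      rw [← h]; exact mem_image_of_mem _ hg0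
    obtain ⟨g0', hg0', heq⟩ := Finset.mem_image.mp hmem
    rw [show eMap k l g0 = Sum.inl (⟨g0, hg0ne⟩, k, l) from dif_neg hg0ne] at heq
    by_cases hz : g0' = 0
    · rw [show eMap k' l' g0' = Sum.inr l' from by rw [hz]; exact dif_pos rfl] at heq
      exact absurd heq (by simp)
    · rw [show eMap k' l' g0' = Sum.inl (⟨g0', hz⟩, k', l') from dif_neg hz] at heq
      injection heq with h3
      have hk : k = k' := (congrArg (fun p => p.2.1) h3).symm
      have hl : l = l' := (congrArg (fun p => p.2.2) h3).symm
      subst hk; subst hl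
      have hSS : S = S' := by
        ext g
        constructor
        · intro hg
          have hh : eMap k l g ∈ S'.image (eMap k l) := by
            rw [← h]; exact mem_image_of_mem _ hg
          obtain ⟨g', hg', he⟩ := Finset.mem_image.mp hh
          rwa [← eMap_inj k l he]
        · intro hg
          have hh : eMap k l g ∈ S.image (eMap k l) := by
            rw [h]; exact mem_image_of_mem _ hg
          obtain ⟨g', hg', he⟩ := Finset.mem_image.mp hh
          rwa [← eMap_inj k l he]
      rw [hSS]
  · intro T hT
    obtain ⟨hpc, hnTO⟩ := Finset.mem_filter.mp hT
    obtain ⟨-, hcard⟩ := Finset.mem_powersetCard.mp hpc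
    by_contra hno
    push_neg at hno
    apply hnTO
    intro c1 c2 c3 hcond v
    obtain ⟨hm1, hm2', hm3, ne12, ne13, ne23⟩ := hcond
    have hsub : ({c1, c2, c3} : Finset _) ⊆ T := by
      intro x hx
      simp only [mem_insert, mem_singleton] at hx
      rcases hx with rfl | rfl | rfl <;> assumption
    have hc3 : ({c1, c2, c3} : Finset _).card = 3 := by
      rw [card_insert_of_notMem (by simp [ne12, ne13]),
        card_insert_of_notMem (by simp [ne23]), card_singleton]
    have hT3 : ({c1, c2, c3} : Finset _) = T :=
      Finset.eq_of_subset_of_card_le hsub (by omega)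
    have hgood : ∀ (k : Fin 2) (l : Fin m2) (S : Finset F), S.card = 3 →
        ({c1, c2, c3} : Finset _) ≠ S.image (eMap k l) := by
      intro k l S hSc heq
      exact hno ((k, l), S)
        (Finset.mem_product.mpr ⟨mem_univ _, Finset.mem_powersetCard.mpr
          ⟨subset_univ _, hSc⟩⟩) (by rw [← heq, hT3])
    rw [show Fintype.card (Fin (Fintype.card F ^ 2) × Fin n2) = Fintype.card F ^ 2 * n2 by simp]
    exact goodCount A B hA hB hm2 ne12 ne13 ne23 hgood (v 0) (v 1) (v 2)

lemma choose3_cast {n : ℕ} (h : 2 ≤ n) :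
    (n.choose 3 : ℚ) = n * ((n : ℚ) - 1) * ((n : ℚ) - 2) / 6 := by
  have hd : n.descFactorial 3 = 6 * n.choose 3 := by
    have := Nat.descFactorial_eq_factorial_mul_choose n 3
    simpa [Nat.factorial] using this
  have hd2 : n.descFactorial 3 = (n - 2) * ((n - 1) * (n * 1)) := by
    simp [Nat.descFactorial]
  have key : ((n.descFactorial 3 : ℕ) : ℚ) = ((n : ℚ) - 2) * (((n : ℚ) - 1) * (n : ℚ)) := by
    rw [hd2]
    push_cast [Nat.cast_sub (show 1 ≤ n by omega), Nat.cast_sub (show 2 ≤ n by omega)]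
    ring
  have key2 : (6 : ℚ) * n.choose 3 = ((n : ℚ) - 2) * (((n : ℚ) - 1) * (n : ℚ)) := by
    rw [← key, hd]
    push_cast
    ring
  field_simp
  linarith
end Assemble

/-- Proposition 4: with `A` an `OA(s², 2, s, 2)` and each `Bᵢ` an
`OA(n₂, m₂, s, 3)`, the array `𝐅` (i.e. `E` with the two columns of `D_{s+1}` removed) is an
`OA(n₂s², (2s−1)m₂, s, 2)`; exactly `2m₂·C(s,3)` of the 3-element sets of columns of `𝐅` fail
to be 3-orthogonal; and consequently
`p(𝐅) = 1 − 2m₂·C(s,3)/C((2s−1)m₂,3) = 1 − 2s(s−1)(s−2)/((2s−1)(γ−1)(γ−2))`, `γ = (2s−1)m₂`. -/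
theorem statement15 {F : Type} [Field F] [Fintype F] [DecidableEq F]
    {n2 m2 : ℕ} (hn2 : 0 < n2) (hm2 : 3 ≤ m2)
    (A : Fin (Fintype.card F ^ 2) → Fin 2 → F) (hA : IsOA A 2)
    (B : Fin (Fintype.card F ^ 2) → Fin n2 → Fin m2 → F) (hB : ∀ i, IsOA (B i) 3) :
    IsOA (FmatG A B) 2 ∧
    Fintype.card (({g : F // g ≠ 0} × Fin 2 × Fin m2) ⊕ Fin m2)
      = (2 * Fintype.card F - 1) * m2 ∧
    ((Finset.powersetCard 3
        (Finset.univ : Finset (({g : F // g ≠ 0} × Fin 2 × Fin m2) ⊕ Fin m2))).filter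
          fun T => ¬ TripleOrth (FmatG A B) T).card
      = 2 * m2 * (Fintype.card F).choose 3 ∧
    (((Finset.powersetCard 3
        (Finset.univ : Finset (({g : F // g ≠ 0} × Fin 2 × Fin m2) ⊕ Fin m2))).filter
          fun T => TripleOrth (FmatG A B) T).card : ℚ)
        / (((2 * Fintype.card F - 1) * m2).choose 3 : ℚ)
      = 1 - (2 * m2 * (Fintype.card F).choose 3 : ℚ)
          / (((2 * Fintype.card F - 1) * m2).choose 3 : ℚ) ∧
    (((Finset.powersetCard 3
        (Finset.univ : Finset (({g : F // g ≠ 0} × Fin 2 × Fin m2) ⊕ Fin m2))).filter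
          fun T => TripleOrth (FmatG A B) T).card : ℚ)
        / (((2 * Fintype.card F - 1) * m2).choose 3 : ℚ)
      = 1 - 2 * (Fintype.card F : ℚ) * ((Fintype.card F : ℚ) - 1) * ((Fintype.card F : ℚ) - 2)
          / ((2 * (Fintype.card F : ℚ) - 1)
              * (((2 * Fintype.card F - 1) * m2 : ℚ) - 1)
              * (((2 * Fintype.card F - 1) * m2 : ℚ) - 2)) := by
  have hs2 : 2 ≤ Fintype.card F := Fintype.one_lt_card
  have hcardCol : Fintype.card (({g : F // g ≠ 0} × Fin 2 × Fin m2) ⊕ Fin m2)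
      = (2 * Fintype.card F - 1) * m2 := by
    have hu : Fintype.card {g : F // g ≠ 0} = Fintype.card F - 1 := by
      rw [Fintype.card_subtype]
      rw [show (univ.filter fun g : F => g ≠ 0) = univ.erase 0 from by
        ext g; simp [Finset.mem_erase, and_comm]]
      rw [Finset.card_erase_of_mem (mem_univ _), card_univ]
    rw [Fintype.card_sum, Fintype.card_prod, Fintype.card_prod, Fintype.card_fin,
      Fintype.card_fin, hu, show 2 * Fintype.card F - 1 = 2 * (Fintype.card F - 1) + 1 from by
        omega]
    ring
  have hbad := badCard A B hn2 hA hB hm2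
  have hγ9 : 9 ≤ (2 * Fintype.card F - 1) * m2 := by
    have h1 : 3 ≤ 2 * Fintype.card F - 1 := by omega
    calc 9 = 3 * 3 := by norm_num
    _ ≤ (2 * Fintype.card F - 1) * m2 := Nat.mul_le_mul h1 hm2
  have hsplit := Finset.card_filter_add_card_filter_not
    (s := Finset.powersetCard 3
      (Finset.univ : Finset (({g : F // g ≠ 0} × Fin 2 × Fin m2) ⊕ Fin m2)))
    (p := fun T => TripleOrth (FmatG A B) T)
  rw [Finset.card_powersetCard, Finset.card_univ, hcardCol] at hsplit
  have hNpos : 0 < ((2 * Fintype.card F - 1) * m2).choose 3 := Nat.choose_pos (by omega)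
  have hNq : ((((2 * Fintype.card F - 1) * m2).choose 3 : ℕ) : ℚ) ≠ 0 :=
    Nat.cast_ne_zero.mpr hNpos.ne'
  have hgoodQ : ((((Finset.powersetCard 3
        (Finset.univ : Finset (({g : F // g ≠ 0} × Fin 2 × Fin m2) ⊕ Fin m2))).filter
          fun T => TripleOrth (FmatG A B) T).card : ℕ) : ℚ)
      = ((((2 * Fintype.card F - 1) * m2).choose 3 : ℕ) : ℚ)
        - ((2 * m2 * (Fintype.card F).choose 3 : ℕ) : ℚ) := by
    rw [hbad] at hsplit
    have := congrArg (fun n : ℕ => (n : ℚ)) hsplit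
    push_cast at this ⊢
    linarith
  have h4 : ((((Finset.powersetCard 3
        (Finset.univ : Finset (({g : F // g ≠ 0} × Fin 2 × Fin m2) ⊕ Fin m2))).filter
          fun T => TripleOrth (FmatG A B) T).card : ℚ)
        / (((2 * Fintype.card F - 1) * m2).choose 3 : ℚ)
      = 1 - (2 * m2 * (Fintype.card F).choose 3 : ℚ)
          / (((2 * Fintype.card F - 1) * m2).choose 3 : ℚ)) := by
    rw [hgoodQ]
    push_cast
    field_simp
  refine ⟨strength2 A B hA hB hm2, hcardCol, hbad, h4, ?_⟩
  rw [h4]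
  congr 1
  have hγ2 : 2 ≤ (2 * Fintype.card F - 1) * m2 := by omega
  have hcast : (((2 * Fintype.card F - 1) * m2 : ℕ) : ℚ)
      = (2 * (Fintype.card F : ℚ) - 1) * (m2 : ℚ) := by
    push_cast [Nat.cast_sub (show 1 ≤ 2 * Fintype.card F by omega)]
    ring
  rw [choose3_cast hs2, choose3_cast hγ2, hcast]
  have hm2q : (m2 : ℚ) ≠ 0 := Nat.cast_ne_zero.mpr (by omega)
  have hsq : (2 * (Fintype.card F : ℚ) - 1) ≠ 0 := by
    have : (2 : ℚ) ≤ (Fintype.card F : ℚ) := by exact_mod_cast hs2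
    nlinarith
  have hG1 : (2 * (Fintype.card F : ℚ) - 1) * (m2 : ℚ) - 1 ≠ 0 := by
    have h9 : (9 : ℚ) ≤ (2 * (Fintype.card F : ℚ) - 1) * (m2 : ℚ) := by
      rw [← hcast]; exact_mod_cast hγ9
    nlinarith
  have hG2 : (2 * (Fintype.card F : ℚ) - 1) * (m2 : ℚ) - 2 ≠ 0 := by
    have h9 : (9 : ℚ) ≤ (2 * (Fintype.card F : ℚ) - 1) * (m2 : ℚ) := by
      rw [← hcast]; exact_mod_cast hγ9
    nlinarith
  rw [show (((2 * Fintype.card F - 1) * m2 : ℚ)) = (2 * (Fintype.card F : ℚ) - 1) * (m2 : ℚ)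
    from by push_cast; ring]
  field_simp
end
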